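/- arXiv:2008.10564 — 3 statements merged into one kernel-verified Lean document; each statement's English description precedes it below -/
import Mathlib

section
/- Let d ≥ 2 be an integer and let (a_n)_{n∈ℕ} be a strictly decreasing sequence of positive reals converging to 0. Then for every θ ∈ (0,1], updim_θ(C^d({a_n})) ≤ d - 1 + updim_θ({a_n : n ∈ ℕ}) and lodim_θ(C^d({a_n})) ≤ d - 1 + lodim_θ({a_n : n ∈ ℕ}). -/
open Set Metric Filter

/-- The upper θ-intermediate dimension of a set `E` in a metric space:
the infimum of all `s ≥ 0` such that for every `ε > 0` there is `δ₀ > 0` such that for all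
`0 < δ < δ₀` there is a countable cover `𝒰` of `E` with `δ ≤ diam U ≤ δ ^ θ` for all `U ∈ 𝒰`
and `∑_{U ∈ 𝒰} (diam U) ^ s ≤ ε`. -/
noncomputable def updim {X : Type*} [PseudoMetricSpace X] (θ : ℝ) (E : Set X) : ℝ :=
  sInf {s : ℝ | 0 ≤ s ∧ ∀ ε : ℝ, 0 < ε → ∃ δ₀ : ℝ, 0 < δ₀ ∧ ∀ δ : ℝ, 0 < δ → δ < δ₀ →
    ∃ 𝒰 : Set (Set X), 𝒰.Countable ∧ E ⊆ ⋃₀ 𝒰 ∧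
      (∀ U ∈ 𝒰, δ ≤ diam U ∧ diam U ≤ δ ^ θ) ∧
      ∑' U : 𝒰, ENNReal.ofReal (diam (U : Set X) ^ s) ≤ ENNReal.ofReal ε}

/-- The lower θ-intermediate dimension of a set `E` in a metric space. -/
noncomputable def lodim {X : Type*} [PseudoMetricSpace X] (θ : ℝ) (E : Set X) : ℝ :=
  sInf {s : ℝ | 0 ≤ s ∧ ∀ ε : ℝ, 0 < ε → ∀ δ₀ : ℝ, 0 < δ₀ → ∃ δ : ℝ, 0 < δ ∧ δ < δ₀ ∧
    ∃ 𝒰 : Set (Set X), 𝒰.Countable ∧ E ⊆ ⋃₀ 𝒰 ∧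
      (∀ U ∈ 𝒰, δ ≤ diam U ∧ diam U ≤ δ ^ θ) ∧
      ∑' U : 𝒰, ENNReal.ofReal (diam (U : Set X) ^ s) ≤ ENNReal.ofReal ε}

/-- `C^d({a_n})`: the union over `n` of the spheres in `ℝ^d` of radius `a n` centred at
the origin. -/
noncomputable def concentricSeq (d : ℕ) (a : ℕ → ℝ) : Set (EuclideanSpace ℝ (Fin d)) :=
  {x | ∃ n : ℕ, ‖x‖ = a n}



open MeasureTheory

noncomputable section
variable {d : ℕ}

variable {d : ℕ}

/-- Closed axis-parallel cube with corner `k • ℓ` and side `ℓ`. -/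
def cube (d : ℕ) (ℓ : ℝ) (k : Fin d → ℤ) : Set (EuclideanSpace ℝ (Fin d)) :=
  {x | ∀ i, (k i : ℝ) * ℓ ≤ x i ∧ x i ≤ (k i : ℝ) * ℓ + ℓ}

/-- Half-open version of `cube`. -/
def cubeo (d : ℕ) (ℓ : ℝ) (k : Fin d → ℤ) : Set (EuclideanSpace ℝ (Fin d)) :=
  {x | ∀ i, (k i : ℝ) * ℓ ≤ x i ∧ x i < (k i : ℝ) * ℓ + ℓ}

lemma cubeo_subset_cube (ℓ : ℝ) (k : Fin d → ℤ) : cubeo d ℓ k ⊆ cube d ℓ k :=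
  fun x hx i => ⟨(hx i).1, (hx i).2.le⟩

lemma mem_cube_floor {ℓ : ℝ} (hℓ : 0 < ℓ) (x : EuclideanSpace ℝ (Fin d)) :
    x ∈ cube d ℓ (fun i => ⌊x i / ℓ⌋) := by
  intro i
  constructor
  · calc ((⌊x i / ℓ⌋ : ℝ)) * ℓ ≤ (x i / ℓ) * ℓ := by
          exact mul_le_mul_of_nonneg_right (Int.floor_le _) hℓ.le
      _ = x i := div_mul_cancel₀ _ hℓ.ne'
  · have h1 : x i / ℓ < ⌊x i / ℓ⌋ + 1 := Int.lt_floor_add_one _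
    have := mul_lt_mul_of_pos_right h1 hℓ
    rw [div_mul_cancel₀ _ hℓ.ne'] at this
    nlinarith
lemma cube_dist_le {ℓ : ℝ} (hℓ : 0 ≤ ℓ) {k : Fin d → ℤ} {x y : EuclideanSpace ℝ (Fin d)}
    (hx : x ∈ cube d ℓ k) (hy : y ∈ cube d ℓ k) : dist x y ≤ ℓ * Real.sqrt d := by
  rw [EuclideanSpace.dist_eq]
  have h1 : ∑ i, dist (x i) (y i) ^ 2 ≤ ∑ _i : Fin d, ℓ ^ 2 := by
    apply Finset.sum_le_sum
    intro i _
    have h2 : |x i - y i| ≤ ℓ := by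
      rw [abs_le]; constructor <;> [nlinarith [(hx i).1, (hx i).2, (hy i).1, (hy i).2];
        nlinarith [(hx i).1, (hx i).2, (hy i).1, (hy i).2]]
    rw [Real.dist_eq]
    nlinarith [abs_nonneg (x i - y i)]
  calc Real.sqrt (∑ i, dist (x i) (y i) ^ 2) ≤ Real.sqrt (∑ _i : Fin d, ℓ ^ 2) :=
        Real.sqrt_le_sqrt h1
    _ = ℓ * Real.sqrt d := by
        rw [Finset.sum_const, Finset.card_univ, Fintype.card_fin, nsmul_eq_mul]
        rw [Real.sqrt_mul (by positivity), Real.sqrt_sq hℓ, mul_comm]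

lemma cube_diam {ℓ : ℝ} (hℓ : 0 ≤ ℓ) (k : Fin d → ℤ) :
    diam (cube d ℓ k) = ℓ * Real.sqrt d := by
  apply le_antisymm
  · exact diam_le_of_forall_dist_le (by positivity) fun x hx y hy => cube_dist_le hℓ hx hy
  · set p : EuclideanSpace ℝ (Fin d) := WithLp.toLp 2 (fun i => (k i : ℝ) * ℓ) with hp
    set q : EuclideanSpace ℝ (Fin d) := WithLp.toLp 2 (fun i => (k i : ℝ) * ℓ + ℓ) with hq
    have hpmem : p ∈ cube d ℓ k := fun i => ⟨le_refl _, by dsimp [p]; linarith⟩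
    have hqmem : q ∈ cube d ℓ k := fun i => ⟨by dsimp [q]; linarith, le_refl _⟩
    have hbd : Bornology.IsBounded (cube d ℓ k) :=
      (isBounded_closedBall (x := p) (r := ℓ * Real.sqrt d)).subset
        (fun x hx => mem_closedBall.2 (cube_dist_le hℓ hx hpmem))
    have hdist : dist p q = ℓ * Real.sqrt d := by
      rw [EuclideanSpace.dist_eq]
      have : ∀ i : Fin d, dist (p i) (q i) ^ 2 = ℓ ^ 2 := by
        intro i
        rw [Real.dist_eq]
        have : |p i - q i| = ℓ := by dsimp [p, q]; rw [abs_of_nonpos (by linarith)]; ring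
        rw [this]
      rw [Finset.sum_congr rfl fun i _ => this i, Finset.sum_const, Finset.card_univ,
        Fintype.card_fin, nsmul_eq_mul, Real.sqrt_mul (by positivity), Real.sqrt_sq hℓ, mul_comm]
    calc ℓ * Real.sqrt d = dist p q := hdist.symm
      _ ≤ diam (cube d ℓ k) := dist_le_diam_of_mem hbd hpmem hqmem






lemma cubeo_disjoint {ℓ : ℝ} (hℓ : 0 < ℓ) :
    Pairwise (Function.onFun Disjoint fun k : Fin d → ℤ => cubeo d ℓ k) := by
  intro k k' hkk'
  rw [Function.onFun, Set.disjoint_left]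
  intro x hx hx'
  apply hkk'
  funext i
  obtain ⟨a1, a2⟩ := hx i; obtain ⟨b1, b2⟩ := hx' i
  have e1 : (k i : ℝ) < (k' i : ℝ) + 1 := by
    have : (k i : ℝ) * ℓ < ((k' i : ℝ) + 1) * ℓ := by nlinarith
    exact lt_of_mul_lt_mul_right this hℓ.le
  have e2 : (k' i : ℝ) < (k i : ℝ) + 1 := by
    have : (k' i : ℝ) * ℓ < ((k i : ℝ) + 1) * ℓ := by nlinarith
    exact lt_of_mul_lt_mul_right this hℓ.le
  have f1 : k i < k' i + 1 := by exact_mod_cast e1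
  have f2 : k' i < k i + 1 := by exact_mod_cast e2
  omega

lemma cubeo_eq_preimage (ℓ : ℝ) (k : Fin d → ℤ) :
    cubeo d ℓ k = ((MeasurableEquiv.toLp 2 (Fin d → ℝ)).symm) ⁻¹'
      (Set.univ.pi fun i => Ico ((k i : ℝ) * ℓ) ((k i : ℝ) * ℓ + ℓ)) := by
  ext x
  simp only [cubeo, mem_setOf_eq, mem_preimage, Set.mem_pi, mem_univ, forall_true_left, mem_Ico]
  rfl

lemma cubeo_measurableSet (ℓ : ℝ) (k : Fin d → ℤ) : MeasurableSet (cubeo d ℓ k) := by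
  rw [cubeo_eq_preimage]
  exact ((MeasurableEquiv.toLp 2 (Fin d → ℝ)).symm).measurable
    (MeasurableSet.univ_pi fun i => measurableSet_Ico)

lemma cubeo_volume {ℓ : ℝ} (hℓ : 0 ≤ ℓ) (k : Fin d → ℤ) :
    volume (cubeo d ℓ k) = ENNReal.ofReal ℓ ^ d := by
  rw [cubeo_eq_preimage,
    (EuclideanSpace.volume_preserving_symm_measurableEquiv_toLp (Fin d)).measure_preimage
      ((MeasurableSet.univ_pi fun i => measurableSet_Ico).nullMeasurableSet),
    volume_pi_pi]
  simp [Real.volume_Ico]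

lemma pow_sub_pow_le_my {b c : ℝ} (hc : 0 ≤ c) (hcb : c ≤ b) (n : ℕ) :
    b ^ n - c ^ n ≤ n * b ^ (n - 1) * (b - c) := by
  have hb : 0 ≤ b := hc.trans hcb
  rw [← geom_sum₂_mul b c n]
  have hsum : (∑ i ∈ Finset.range n, b ^ i * c ^ (n - 1 - i)) ≤ n * b ^ (n - 1) := by
    calc (∑ i ∈ Finset.range n, b ^ i * c ^ (n - 1 - i))
        ≤ ∑ _i ∈ Finset.range n, b ^ (n - 1) := by
          apply Finset.sum_le_sum
          intro i hi
          rw [Finset.mem_range] at hi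
          calc b ^ i * c ^ (n - 1 - i) ≤ b ^ i * b ^ (n - 1 - i) := by
                apply mul_le_mul_of_nonneg_left (pow_le_pow_left₀ hc hcb _) (by positivity)
            _ = b ^ (n - 1) := by rw [← pow_add]; congr 1; omega
      _ = n * b ^ (n - 1) := by rw [Finset.sum_const, Finset.card_range, nsmul_eq_mul]
  exact mul_le_mul_of_nonneg_right hsum (by linarith)

lemma annulus_volume_le (d : ℕ) (hd : 1 ≤ d) {r t R : ℝ} (hr : 0 ≤ r) (hrR : r ≤ R)
    (ht : 0 ≤ t) (ht1 : t ≤ 1) :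
    volume {x : EuclideanSpace ℝ (Fin d) | r - 2*t ≤ ‖x‖ ∧ ‖x‖ ≤ r + 2*t} ≤
      ENNReal.ofReal (Real.sqrt Real.pi ^ d / Real.Gamma (d/2+1) * (4 * d * (R+2)^(d-1) * t)) := by
  have : Nonempty (Fin d) := ⟨⟨0, by omega⟩⟩
  set c := max (r - 2*t) 0 with hc
  have hc0 : 0 ≤ c := le_max_right _ _
  have hcb : c ≤ r + 2*t := max_le (by linarith) (by linarith)
  have hsub : {x : EuclideanSpace ℝ (Fin d) | r - 2*t ≤ ‖x‖ ∧ ‖x‖ ≤ r + 2*t} ⊆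
      closedBall 0 (r + 2*t) \ ball 0 c := by
    intro x hx
    obtain ⟨h1, h2⟩ := hx
    refine ⟨mem_closedBall_zero_iff.2 h2, fun hx' => ?_⟩
    rw [mem_ball_zero_iff] at hx'
    have h3 : c ≤ ‖x‖ := max_le h1 (norm_nonneg x)
    linarith
  have hdiff : volume (closedBall (0 : EuclideanSpace ℝ (Fin d)) (r + 2*t) \ ball 0 c) =
      volume (closedBall (0 : EuclideanSpace ℝ (Fin d)) (r + 2*t)) - volume (ball (0 : EuclideanSpace ℝ (Fin d)) c) := by
    apply measure_diff
    · exact (ball_subset_ball hcb).trans ball_subset_closedBall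
    · exact measurableSet_ball.nullMeasurableSet
    · exact (measure_ball_lt_top).ne
  have hGpos : 0 < Real.Gamma ((d:ℝ)/2+1) := Real.Gamma_pos_of_pos (by positivity)
  set ω : ℝ := Real.sqrt Real.pi ^ d / Real.Gamma ((d:ℝ)/2+1) with hω
  have hωpos : 0 ≤ ω := by positivity
  calc volume {x : EuclideanSpace ℝ (Fin d) | r - 2*t ≤ ‖x‖ ∧ ‖x‖ ≤ r + 2*t}
      ≤ volume (closedBall (0 : EuclideanSpace ℝ (Fin d)) (r + 2*t) \ ball 0 c) :=
        measure_mono hsub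
    _ = ENNReal.ofReal ((r+2*t)^d) * ENNReal.ofReal ω - ENNReal.ofReal (c^d) * ENNReal.ofReal ω := by
        rw [hdiff, EuclideanSpace.volume_closedBall, EuclideanSpace.volume_ball]
        rw [← ENNReal.ofReal_pow (by linarith), ← ENNReal.ofReal_pow hc0]
        simp [Fintype.card_fin]
        rfl
    _ = ENNReal.ofReal (((r+2*t)^d - c^d) * ω) := by
        rw [← ENNReal.sub_mul (fun _ _ => ENNReal.ofReal_ne_top), ← ENNReal.ofReal_sub _ (by positivity),
          ← ENNReal.ofReal_mul (by nlinarith [pow_le_pow_left₀ hc0 hcb d])]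
    _ ≤ ENNReal.ofReal (ω * (4 * d * (R+2)^(d-1) * t)) := by
        apply ENNReal.ofReal_le_ofReal
        rw [mul_comm]
        apply mul_le_mul_of_nonneg_left _ hωpos
        calc (r+2*t)^d - c^d ≤ d * (r+2*t)^(d-1) * ((r+2*t) - c) :=
              pow_sub_pow_le_my hc0 hcb d
          _ ≤ 4 * d * (R+2)^(d-1) * t := by
              have h4 : (r+2*t) - c ≤ 4*t := by
                have h := le_max_left (r - 2*t) 0
                rw [hc]; linarith
              have h5 : (r+2*t)^(d-1) ≤ (R+2)^(d-1) :=
                pow_le_pow_left₀ (by linarith) (by linarith) _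
              have h6 : 0 ≤ (r+2*t) - c := by linarith
              have hd0 : (0:ℝ) ≤ d := by positivity
              have hB : (0:ℝ) ≤ (R+2)^(d-1) := pow_nonneg (by linarith) _
              calc (d:ℝ) * (r+2*t)^(d-1) * ((r+2*t) - c)
                  ≤ (d:ℝ) * (R+2)^(d-1) * (4*t) :=
                    mul_le_mul (mul_le_mul_of_nonneg_left h5 hd0) h4 h6
                      (mul_nonneg hd0 hB)
                _ = 4 * d * (R+2)^(d-1) * t := by ring
    _ = ENNReal.ofReal (Real.sqrt Real.pi ^ d / Real.Gamma (d/2+1) * (4 * d * (R+2)^(d-1) * t)) := rfl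



lemma core_transfer (d : ℕ) (hd : 2 ≤ d) (a : ℕ → ℝ) (hapos : ∀ n, 0 < a n)
    (hmono : ∀ n, a n ≤ a 0) (s θ : ℝ) (hθ : 0 < θ) :
    ∃ K : ℝ, 0 < K ∧ ∀ δ ε : ℝ, 0 < δ → δ < 1 → 0 < ε →
      ∀ 𝒰 : Set (Set ℝ), 𝒰.Countable → Set.range a ⊆ ⋃₀ 𝒰 →
        (∀ U ∈ 𝒰, δ ≤ diam U ∧ diam U ≤ δ ^ θ) →
        (∑' U : 𝒰, ENNReal.ofReal (diam (U : Set ℝ) ^ s) ≤ ENNReal.ofReal ε) →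
        ∃ 𝒱 : Set (Set (EuclideanSpace ℝ (Fin d))), 𝒱.Countable ∧
          concentricSeq d a ⊆ ⋃₀ 𝒱 ∧ (∀ V ∈ 𝒱, δ ≤ diam V ∧ diam V ≤ δ ^ θ) ∧
          ∑' V : 𝒱, ENNReal.ofReal (diam (V : Set (EuclideanSpace ℝ (Fin d))) ^ ((d:ℝ) - 1 + s))
            ≤ ENNReal.ofReal (K * ε) := by
  have hd0 : (0:ℝ) < d := by positivity
  set sd : ℝ := Real.sqrt d with hsd_def
  have hsd : 0 < sd := Real.sqrt_pos.2 hd0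
  have hGpos : 0 < Real.Gamma ((d:ℝ)/2+1) := Real.Gamma_pos_of_pos (by positivity)
  set ω : ℝ := Real.sqrt Real.pi ^ d / Real.Gamma ((d:ℝ)/2+1) with hω_def
  have hωpos : 0 < ω := by
    apply div_pos _ hGpos
    exact pow_pos (Real.sqrt_pos.2 Real.pi_pos) d
  have ha0 : 0 < a 0 := hapos 0
  set C₁ : ℝ := ω * (4 * d * (a 0 + 2)^(d-1)) with hC₁_def
  have hC₁ : 0 < C₁ := by
    apply mul_pos hωpos
    apply mul_pos (by positivity) (pow_pos (by linarith) _)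
  refine ⟨C₁ * sd ^ d, by positivity, ?_⟩
  intro δ ε hδ hδ1 hε 𝒰 h𝒰c h𝒰cov h𝒰diam h𝒰sum
  set p : ℝ := (d:ℝ) - 1 + s with hp_def
  set ℓ : Set ℝ → ℝ := fun U => diam U / sd with hℓ_def
  set SU : Set ℝ → Set (EuclideanSpace ℝ (Fin d)) :=
    fun U => {x | ‖x‖ ∈ U ∩ Icc 0 (a 0)} with hSU_def
  set KK : Set ℝ → Set (Fin d → ℤ) :=
    fun U => {k | (cube d (ℓ U) k ∩ SU U).Nonempty} with hKK_def
  set tt : Set ℝ → Set (Set (EuclideanSpace ℝ (Fin d))) :=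
    fun U => (fun k => cube d (ℓ U) k) '' KK U with htt_def
  set 𝒰' : Set (Set ℝ) := {U ∈ 𝒰 | (U ∩ Icc 0 (a 0)).Nonempty} with h𝒰'_def
  -- facts about U ∈ 𝒰
  have hdiam_pos : ∀ U ∈ 𝒰, 0 < diam U := fun U hU => hδ.trans_le (h𝒰diam U hU).1
  have hℓpos : ∀ U ∈ 𝒰, 0 < ℓ U := fun U hU => div_pos (hdiam_pos U hU) hsd
  have hbdd : ∀ U ∈ 𝒰, Bornology.IsBounded U := by
    intro U hU
    by_contra hb
    have := diam_eq_zero_of_unbounded hb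
    linarith [hdiam_pos U hU]
  have hcube_diam : ∀ U ∈ 𝒰, ∀ k, diam (cube d (ℓ U) k) = diam U := by
    intro U hU k
    rw [cube_diam (hℓpos U hU).le]
    exact div_mul_cancel₀ _ hsd.ne'
  have ht1 : ∀ U ∈ 𝒰, diam U ≤ 1 := by
    intro U hU
    exact (h𝒰diam U hU).2.trans (Real.rpow_le_one hδ.le hδ1.le hθ.le)
  refine ⟨⋃ U ∈ 𝒰', tt U, ?_, ?_, ?_, ?_⟩
  · refine Set.Countable.biUnion (h𝒰c.mono (sep_subset _ _)) ?_
    intro U _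
    exact Set.Countable.image (Set.to_countable _) _
  · -- cover
    rintro x ⟨n, hn⟩
    obtain ⟨U, hU𝒰, haU⟩ := h𝒰cov ⟨n, rfl⟩
    have hU' : U ∈ 𝒰' := ⟨hU𝒰, ⟨a n, haU, ⟨(hapos n).le, hmono n⟩⟩⟩
    have hxS : x ∈ SU U := by
      simp only [hSU_def, mem_setOf_eq, hn]
      exact ⟨haU, ⟨(hapos n).le, hmono n⟩⟩
    have hxc := mem_cube_floor (hℓpos U hU𝒰) x
    refine ⟨cube d (ℓ U) (fun i => ⌊x i / ℓ U⌋), ?_, hxc⟩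
    exact mem_biUnion hU' (mem_image_of_mem _ ⟨x, hxc, hxS⟩)
  · -- diameters
    intro V hV
    simp only [mem_iUnion] at hV
    obtain ⟨U, hU', hV⟩ := hV
    obtain ⟨k, _, rfl⟩ := hV
    rw [hcube_diam U hU'.1 k]
    exact h𝒰diam U hU'.1
  · -- the sum
    have inner_le : ∀ U : 𝒰', ∑' V : tt (U : Set ℝ),
        ENNReal.ofReal (diam (V : Set (EuclideanSpace ℝ (Fin d))) ^ p)
        ≤ ENNReal.ofReal (C₁ * sd ^ d) * ENNReal.ofReal (diam (U : Set ℝ) ^ s) := by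
      rintro ⟨U, hU𝒰, hUne⟩
      simp only
      have hℓU : 0 < ℓ U := hℓpos U hU𝒰
      have htpos : 0 < diam U := hdiam_pos U hU𝒰
      have hbddA : BddAbove (U ∩ Icc 0 (a 0)) := BddAbove.mono inter_subset_right bddAbove_Icc
      set r : ℝ := sSup (U ∩ Icc 0 (a 0)) with hr_def
      have hr0 : 0 ≤ r := by
        obtain ⟨u, hu⟩ := hUne
        exact le_trans hu.2.1 (le_csSup hbddA hu)
      have hrA : r ≤ a 0 := csSup_le hUne (fun v hv => hv.2.2)
      have hclose : ∀ u ∈ U ∩ Icc 0 (a 0), r - diam U ≤ u ∧ u ≤ r := by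
        intro u hu
        refine ⟨?_, le_csSup hbddA hu⟩
        have : r ≤ u + diam U := by
          apply csSup_le hUne
          intro v hv
          have h := Metric.dist_le_diam_of_mem (hbdd U hU𝒰) hv.1 hu.1
          rw [Real.dist_eq] at h
          have := abs_le.1 h
          linarith [this.1, this.2]
        linarith
      have hannulus : ∀ k ∈ KK U, cube d (ℓ U) k ⊆
          {x : EuclideanSpace ℝ (Fin d) | r - 2*diam U ≤ ‖x‖ ∧ ‖x‖ ≤ r + 2*diam U} := by
        intro k hk x hx
        obtain ⟨y, hyc, hyS⟩ := hk
        have h1 : dist x y ≤ diam U := by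
          have h := cube_dist_le hℓU.le hx hyc
          rwa [div_mul_cancel₀ _ hsd.ne'] at h
        have h2 := abs_le.1 ((abs_norm_sub_norm_le x y).trans h1)
        have h3 := hclose ‖y‖ hyS
        exact ⟨by linarith [h2.1, h3.1], by linarith [h2.2, h3.2]⟩
      set L : ENNReal := ENNReal.ofReal ((ℓ U)^d) with hL_def
      have hL0 : L ≠ 0 := (ENNReal.ofReal_pos.2 (by positivity)).ne'
      have hLt : L ≠ ⊤ := ENNReal.ofReal_ne_top
      set cst : ENNReal := ENNReal.ofReal (diam U ^ p) * L⁻¹ with hcst_def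
      have hsurj : Function.Surjective (fun k : KK U =>
          (⟨cube d (ℓ U) k, mem_image_of_mem _ k.2⟩ : tt U)) := by
        rintro ⟨V, k, hk, rfl⟩
        exact ⟨⟨k, hk⟩, rfl⟩
      have key : diam U ^ p * (C₁ * diam U) = (C₁ * sd^d * diam U ^ s) * (ℓ U)^d := by
        have h1 : (ℓ U)^d = diam U ^ d / sd^d := div_pow _ _ _
        have h2 : diam U ^ p * diam U = diam U ^ s * diam U ^ d := by
          rw [← Real.rpow_natCast (diam U) d, ← Real.rpow_add htpos, ← Real.rpow_add_one htpos.ne']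
          congr 1
          rw [hp_def]
          push_cast
          ring
        calc diam U ^ p * (C₁ * diam U) = C₁ * (diam U ^ p * diam U) := by ring
          _ = C₁ * (diam U ^ s * diam U ^ d) := by rw [h2]
          _ = (C₁ * sd^d * diam U ^ s) * (diam U ^ d / sd^d) := by
              field_simp
          _ = (C₁ * sd^d * diam U ^ s) * (ℓ U)^d := by rw [← h1]
      calc ∑' V : tt U, ENNReal.ofReal (diam (V : Set (EuclideanSpace ℝ (Fin d))) ^ p)
          ≤ ∑' k : KK U, ENNReal.ofReal (diam (cube d (ℓ U) (k : Fin d → ℤ)) ^ p) :=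
            ENNReal.tsum_le_tsum_comp_of_surjective hsurj _
        _ = ∑' k : KK U, cst * volume (cubeo d (ℓ U) (k : Fin d → ℤ)) := by
            apply tsum_congr
            intro k
            rw [cubeo_volume hℓU.le, ← ENNReal.ofReal_pow hℓU.le, ← hL_def, hcst_def,
              mul_assoc, ENNReal.inv_mul_cancel hL0 hLt, mul_one, hcube_diam U hU𝒰]
        _ = cst * ∑' k : KK U, volume (cubeo d (ℓ U) (k : Fin d → ℤ)) := ENNReal.tsum_mul_left
        _ = cst * volume (⋃ k : KK U, cubeo d (ℓ U) (k : Fin d → ℤ)) := by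
            congr 1
            exact (measure_iUnion (f := fun k : KK U => cubeo d (ℓ U) (k : Fin d → ℤ))
              (fun k k' hne => cubeo_disjoint hℓU (Subtype.val_injective.ne hne))
              (fun k => cubeo_measurableSet _ _)).symm
        _ ≤ cst * ENNReal.ofReal (ω * (4 * d * (a 0 + 2)^(d-1) * diam U)) := by
            apply mul_le_mul_right
            calc volume (⋃ k : KK U, cubeo d (ℓ U) (k : Fin d → ℤ))
                ≤ volume {x : EuclideanSpace ℝ (Fin d) |
                    r - 2*diam U ≤ ‖x‖ ∧ ‖x‖ ≤ r + 2*diam U} := by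
                  apply measure_mono
                  exact iUnion_subset fun k =>
                    (cubeo_subset_cube _ _).trans (hannulus k k.2)
              _ ≤ ENNReal.ofReal (ω * (4 * d * (a 0 + 2)^(d-1) * diam U)) :=
                  annulus_volume_le d (by omega) hr0 hrA htpos.le (ht1 U hU𝒰)
        _ = ENNReal.ofReal (C₁ * sd ^ d) * ENNReal.ofReal (diam U ^ s) := by
            have hrw : ω * (4 * d * (a 0 + 2)^(d-1) * diam U) = C₁ * diam U := by
              rw [hC₁_def]; ring
            rw [hrw, hcst_def, mul_right_comm,
              ← ENNReal.ofReal_mul (Real.rpow_nonneg htpos.le p), key,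
              ENNReal.ofReal_mul (by positivity), mul_assoc, ← hL_def,
              ENNReal.mul_inv_cancel hL0 hLt, mul_one,
              ENNReal.ofReal_mul (by positivity)]
    calc ∑' V : ↥(⋃ U ∈ 𝒰', tt U),
          ENNReal.ofReal (diam (V : Set (EuclideanSpace ℝ (Fin d))) ^ p)
        ≤ ∑' U : 𝒰', ∑' V : tt (U : Set ℝ),
            ENNReal.ofReal (diam (V : Set (EuclideanSpace ℝ (Fin d))) ^ p) :=
          ENNReal.tsum_biUnion_le_tsum
            (fun W => ENNReal.ofReal (diam W ^ p)) 𝒰' tt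
      _ ≤ ∑' U : 𝒰', ENNReal.ofReal (C₁ * sd ^ d) *
            ENNReal.ofReal (diam (U : Set ℝ) ^ s) := ENNReal.tsum_le_tsum inner_le
      _ = ENNReal.ofReal (C₁ * sd ^ d) *
            ∑' U : 𝒰', ENNReal.ofReal (diam (U : Set ℝ) ^ s) := ENNReal.tsum_mul_left
      _ ≤ ENNReal.ofReal (C₁ * sd ^ d) *
            ∑' U : 𝒰, ENNReal.ofReal (diam (U : Set ℝ) ^ s) :=
          mul_le_mul_right (ENNReal.tsum_mono_subtype
            (fun W => ENNReal.ofReal (diam W ^ s)) (fun W hW => hW.1)) _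
      _ ≤ ENNReal.ofReal (C₁ * sd ^ d) * ENNReal.ofReal ε := mul_le_mul_right h𝒰sum _
      _ = ENNReal.ofReal ((C₁ * sd ^ d) * ε) := (ENNReal.ofReal_mul (by positivity)).symm

end


lemma two_mem_aux (a : ℕ → ℝ) (hapos : ∀ n, 0 < a n) (hmono : ∀ n, a n ≤ a 0)
    (θ : ℝ) (hθ : 0 < θ) (hθ' : θ ≤ 1) :
    ∀ ε : ℝ, 0 < ε → ∃ δ₀ : ℝ, 0 < δ₀ ∧ ∀ δ : ℝ, 0 < δ → δ < δ₀ →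
    ∃ 𝒰 : Set (Set ℝ), 𝒰.Countable ∧ Set.range a ⊆ ⋃₀ 𝒰 ∧
      (∀ U ∈ 𝒰, δ ≤ diam U ∧ diam U ≤ δ ^ θ) ∧
      ∑' U : 𝒰, ENNReal.ofReal (diam (U : Set ℝ) ^ (2:ℝ)) ≤ ENNReal.ofReal ε := by
  intro ε hε
  have ha0 : 0 < a 0 := hapos 0
  refine ⟨min 1 (ε / (a 0 + 1)), lt_min one_pos (div_pos hε (by linarith)), ?_⟩
  intro δ hδ hδ0
  have hδ1 : δ < 1 := hδ0.trans_le (min_le_left _ _)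
  have hδε : δ ≤ ε / (a 0 + 1) := le_of_lt (hδ0.trans_le (min_le_right _ _))
  set N : ℕ := ⌊a 0 / δ⌋₊ + 1 with hN_def
  refine ⟨(fun j : ℕ => Icc (j*δ) (j*δ+δ)) '' (↑(Finset.range N) : Set ℕ),
    (Set.to_countable _).image _, ?_, ?_, ?_⟩
  · rintro x ⟨n, rfl⟩
    set j : ℕ := ⌊a n / δ⌋₊ with hj_def
    have hjN : j < N := by
      have h1 : a n / δ ≤ a 0 / δ := by gcongr; exact hmono n
      have := Nat.floor_le_floor h1
      omega
    have h2 : (j : ℝ) ≤ a n / δ := Nat.floor_le (div_nonneg (hapos n).le hδ.le)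
    have h3 : a n / δ < j + 1 := Nat.lt_floor_add_one _
    refine ⟨Icc (j*δ) (j*δ+δ), ⟨j, Finset.mem_coe.2 (Finset.mem_range.2 hjN), rfl⟩, ?_, ?_⟩
    · calc (j : ℝ) * δ ≤ (a n / δ) * δ := by gcongr
        _ = a n := div_mul_cancel₀ _ hδ.ne'
    · have := mul_lt_mul_of_pos_right h3 hδ
      rw [div_mul_cancel₀ _ hδ.ne'] at this
      nlinarith
  · rintro U ⟨j, _, rfl⟩
    rw [Real.diam_Icc (by linarith), add_sub_cancel_left]
    refine ⟨le_refl _, ?_⟩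
    calc δ = δ ^ (1:ℝ) := (Real.rpow_one δ).symm
      _ ≤ δ ^ θ := Real.rpow_le_rpow_of_exponent_ge hδ hδ1.le hθ'
  · have hsurj : Function.Surjective (fun j : (↑(Finset.range N) : Set ℕ) =>
        (⟨Icc ((j:ℕ)*δ) ((j:ℕ)*δ+δ), mem_image_of_mem _ j.2⟩ :
          ((fun j : ℕ => Icc (j*δ) (j*δ+δ)) '' (↑(Finset.range N) : Set ℕ)))) := by
      rintro ⟨V, j, hj, rfl⟩
      exact ⟨⟨j, hj⟩, rfl⟩
    calc ∑' U : ((fun j : ℕ => Icc (j*δ) (j*δ+δ)) '' (↑(Finset.range N) : Set ℕ)),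
          ENNReal.ofReal (diam (U : Set ℝ) ^ (2:ℝ))
        ≤ ∑' j : (↑(Finset.range N) : Set ℕ),
            ENNReal.ofReal (diam (Icc ((j:ℕ)*δ) ((j:ℕ)*δ+δ)) ^ (2:ℝ)) :=
          ENNReal.tsum_le_tsum_comp_of_surjective hsurj _
      _ = ∑' _j : (↑(Finset.range N) : Set ℕ), ENNReal.ofReal (δ ^ (2:ℝ)) := by
          apply tsum_congr
          intro j
          rw [Real.diam_Icc (le_add_of_nonneg_right hδ.le), add_sub_cancel_left]
      _ = ∑ _j ∈ Finset.range N, ENNReal.ofReal (δ ^ (2:ℝ)) := by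
          exact Finset.tsum_subtype (Finset.range N) (fun _ => ENNReal.ofReal (δ ^ (2:ℝ)))
      _ = (N : ENNReal) * ENNReal.ofReal (δ ^ (2:ℝ)) := by
          rw [Finset.sum_const, Finset.card_range, nsmul_eq_mul]
      _ ≤ ENNReal.ofReal ε := by
          rw [← ENNReal.ofReal_natCast N, ← ENNReal.ofReal_mul (by positivity)]
          apply ENNReal.ofReal_le_ofReal
          have hNle : (N : ℝ) ≤ a 0 / δ + 1 := by
            rw [hN_def]
            push_cast
            have := Nat.floor_le (show 0 ≤ a 0 / δ by positivity)
            linarith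
          have hδ2 : δ ^ (2:ℝ) = δ * δ := by
            rw [show (2:ℝ) = ((2:ℕ):ℝ) by norm_num, Real.rpow_natCast]
            ring
          rw [hδ2]
          have h1 : (N : ℝ) * (δ * δ) ≤ (a 0 / δ + 1) * (δ * δ) := by
            apply mul_le_mul_of_nonneg_right hNle (by positivity)
          have h2 : (a 0 / δ + 1) * (δ * δ) = a 0 * δ + δ * δ := by
            field_simp
          have h3 : a 0 * δ + δ * δ ≤ (a 0 + 1) * δ := by nlinarith
          have h4 : δ * (a 0 + 1) ≤ ε := (le_div_iff₀ (by linarith)).1 hδε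
          nlinarith

theorem stmt7 (d : ℕ) (hd : 2 ≤ d) (a : ℕ → ℝ)
    (ha : StrictAnti a) (hapos : ∀ n, 0 < a n) (halim : Tendsto a atTop (nhds 0))
    (θ : ℝ) (hθ : 0 < θ) (hθ' : θ ≤ 1) :
    updim θ (concentricSeq d a) ≤ (d : ℝ) - 1 + updim θ (Set.range a) ∧
      lodim θ (concentricSeq d a) ≤ (d : ℝ) - 1 + lodim θ (Set.range a) := by
  have hmono : ∀ n, a n ≤ a 0 := fun n => ha.antitone (Nat.zero_le n)
  have hd2 : (2:ℝ) ≤ (d:ℝ) := by exact_mod_cast hd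
  constructor
  · -- updim
    set A : Set ℝ := {s : ℝ | 0 ≤ s ∧ ∀ ε : ℝ, 0 < ε → ∃ δ₀ : ℝ, 0 < δ₀ ∧
        ∀ δ : ℝ, 0 < δ → δ < δ₀ →
        ∃ 𝒰 : Set (Set (EuclideanSpace ℝ (Fin d))), 𝒰.Countable ∧
          concentricSeq d a ⊆ ⋃₀ 𝒰 ∧ (∀ U ∈ 𝒰, δ ≤ diam U ∧ diam U ≤ δ ^ θ) ∧
          ∑' U : 𝒰, ENNReal.ofReal (diam (U : Set (EuclideanSpace ℝ (Fin d))) ^ s)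
            ≤ ENNReal.ofReal ε} with hA_def
    set B : Set ℝ := {s : ℝ | 0 ≤ s ∧ ∀ ε : ℝ, 0 < ε → ∃ δ₀ : ℝ, 0 < δ₀ ∧
        ∀ δ : ℝ, 0 < δ → δ < δ₀ →
        ∃ 𝒰 : Set (Set ℝ), 𝒰.Countable ∧
          Set.range a ⊆ ⋃₀ 𝒰 ∧ (∀ U ∈ 𝒰, δ ≤ diam U ∧ diam U ≤ δ ^ θ) ∧
          ∑' U : 𝒰, ENNReal.ofReal (diam (U : Set ℝ) ^ s) ≤ ENNReal.ofReal ε} with hB_def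
    have hBne : (2:ℝ) ∈ B := ⟨by norm_num, two_mem_aux a hapos hmono θ hθ hθ'⟩
    have hAbdd : BddBelow A := ⟨0, fun x hx => hx.1⟩
    have transfer : ∀ s ∈ B, ((d:ℝ) - 1 + s) ∈ A := by
      rintro s ⟨hs0, hP⟩
      obtain ⟨K, hK, hcore⟩ := core_transfer d hd a hapos hmono s θ hθ
      refine ⟨by linarith, ?_⟩
      intro ε hε
      obtain ⟨δ₀, hδ₀, hP'⟩ := hP (ε/K) (by positivity)
      refine ⟨min δ₀ 1, lt_min hδ₀ one_pos, ?_⟩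
      intro δ hδ hδlt
      obtain ⟨𝒰, hc, hcov, hdiam, hsum⟩ := hP' δ hδ (hδlt.trans_le (min_le_left _ _))
      obtain ⟨𝒱, h1, h2, h3, h4⟩ := hcore δ (ε/K) hδ (hδlt.trans_le (min_le_right _ _))
        (by positivity) 𝒰 hc hcov hdiam hsum
      refine ⟨𝒱, h1, h2, h3, ?_⟩
      rwa [mul_div_cancel₀ _ hK.ne'] at h4
    show sInf A ≤ (d:ℝ) - 1 + sInf B
    have h1 : sInf A - ((d:ℝ) - 1) ≤ sInf B := by
      apply le_csInf ⟨2, hBne⟩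
      intro b hb
      have := csInf_le hAbdd (transfer b hb)
      linarith
    linarith
  · -- lodim
    set A : Set ℝ := {s : ℝ | 0 ≤ s ∧ ∀ ε : ℝ, 0 < ε → ∀ δ₀ : ℝ, 0 < δ₀ →
        ∃ δ : ℝ, 0 < δ ∧ δ < δ₀ ∧
        ∃ 𝒰 : Set (Set (EuclideanSpace ℝ (Fin d))), 𝒰.Countable ∧
          concentricSeq d a ⊆ ⋃₀ 𝒰 ∧ (∀ U ∈ 𝒰, δ ≤ diam U ∧ diam U ≤ δ ^ θ) ∧
          ∑' U : 𝒰, ENNReal.ofReal (diam (U : Set (EuclideanSpace ℝ (Fin d))) ^ s)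
            ≤ ENNReal.ofReal ε} with hA_def
    set B : Set ℝ := {s : ℝ | 0 ≤ s ∧ ∀ ε : ℝ, 0 < ε → ∀ δ₀ : ℝ, 0 < δ₀ →
        ∃ δ : ℝ, 0 < δ ∧ δ < δ₀ ∧
        ∃ 𝒰 : Set (Set ℝ), 𝒰.Countable ∧
          Set.range a ⊆ ⋃₀ 𝒰 ∧ (∀ U ∈ 𝒰, δ ≤ diam U ∧ diam U ≤ δ ^ θ) ∧
          ∑' U : 𝒰, ENNReal.ofReal (diam (U : Set ℝ) ^ s) ≤ ENNReal.ofReal ε} with hB_def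
    have hBne : (2:ℝ) ∈ B := by
      refine ⟨by norm_num, ?_⟩
      intro ε hε δ₀' hδ₀'
      obtain ⟨δ₀, hδ₀, hP⟩ := two_mem_aux a hapos hmono θ hθ hθ' ε hε
      refine ⟨min δ₀ δ₀' / 2, by positivity, ?_, ?_⟩
      · calc min δ₀ δ₀' / 2 < min δ₀ δ₀' := by
              have := lt_min hδ₀ hδ₀'
              linarith [lt_min hδ₀ hδ₀']
          _ ≤ δ₀' := min_le_right _ _
      · apply hP _ (by positivity)
        calc min δ₀ δ₀' / 2 < min δ₀ δ₀' := by linarith [lt_min hδ₀ hδ₀']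
          _ ≤ δ₀ := min_le_left _ _
    have hAbdd : BddBelow A := ⟨0, fun x hx => hx.1⟩
    have transfer : ∀ s ∈ B, ((d:ℝ) - 1 + s) ∈ A := by
      rintro s ⟨hs0, hP⟩
      obtain ⟨K, hK, hcore⟩ := core_transfer d hd a hapos hmono s θ hθ
      refine ⟨by linarith, ?_⟩
      intro ε hε δ₀ hδ₀
      obtain ⟨δ, hδpos, hδlt, 𝒰, hc, hcov, hdiam, hsum⟩ :=
        hP (ε/K) (by positivity) (min δ₀ 1) (lt_min hδ₀ one_pos)
      obtain ⟨𝒱, h1, h2, h3, h4⟩ := hcore δ (ε/K) hδpos (hδlt.trans_le (min_le_right _ _))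
        (by positivity) 𝒰 hc hcov hdiam hsum
      refine ⟨δ, hδpos, hδlt.trans_le (min_le_left _ _), 𝒱, h1, h2, h3, ?_⟩
      rwa [mul_div_cancel₀ _ hK.ne'] at h4
    show sInf A ≤ (d:ℝ) - 1 + sInf B
    have h1 : sInf A - ((d:ℝ) - 1) ≤ sInf B := by
      apply le_csInf ⟨2, hBne⟩
      intro b hb
      have := csInf_le hAbdd (transfer b hb)
      linarith
    linarith
end

section
/- Let d ≥ 2 be an integer and let (a_n)_{n∈ℕ} be a strictly decreasing sequence of positive reals converging to 0. If updim_θ({a_n : n ∈ ℕ}) → 0 as θ → 0⁺, then updim_θ(C^d({a_n})) → d - 1 as θ → 0⁺; likewise, if lodim_θ({a_n : n ∈ ℕ}) → 0 as θ → 0⁺, then lodim_θ(C^d({a_n})) → d - 1 as θ → 0⁺. (That is, if the intermediate dimensions of {a_n} are continuous at zero, then so are those of C^d({a_n}), whose Hausdorff dimension is d - 1.) -/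
open Set Metric Filter

open MeasureTheory Bornology ENNReal


section helpers
variable {X : Type*} [PseudoMetricSpace X]

lemma bounded_of_diam_pos {s : Set X} (h : 0 < diam s) : IsBounded s := by
  by_contra hb; rw [diam_eq_zero_of_unbounded hb] at h; exact lt_irrefl _ h

lemma tsum_range_le {ι : Type*} (g : ι → Set X) (f : Set X → ℝ≥0∞) :
    ∑' U : (range g), f U ≤ ∑' i, f (g i) := by
  have hch : ∀ U : range g, ∃ i, g i = (U : Set X) := fun U => U.2
  choose e he using hch
  have hinj : Function.Injective e := by
    intro U V h
    apply Subtype.ext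
    rw [← he U, ← he V, h]
  calc ∑' U : range g, f U = ∑' U : range g, (f ∘ g) (e U) := by
        apply tsum_congr; intro U; simp [Function.comp, he U]
    _ ≤ ∑' i, (f ∘ g) i := ENNReal.tsum_comp_le_tsum_of_injective hinj _
    _ = ∑' i, f (g i) := rfl

lemma sInf_le_mem {U : Set ℝ} (hb : IsBounded U) {x : ℝ} (hx : x ∈ U) :
    sInf U ≤ x ∧ x ≤ sInf U + diam U := by
  constructor
  · exact csInf_le hb.bddBelow hx
  · have h1 : x - diam U ≤ sInf U := by
      apply le_csInf ⟨x, hx⟩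
      intro y hy
      have := dist_le_diam_of_mem hb hx hy
      rw [Real.dist_eq] at this
      have := abs_le.mp this
      linarith [this.1]
    linarith

lemma diam_closedBall_eq {n : ℕ} (hn : 1 ≤ n) (x : EuclideanSpace ℝ (Fin n)) {r : ℝ}
    (hr : 0 ≤ r) : diam (closedBall x r) = 2 * r := by
  refine le_antisymm (diam_closedBall hr) ?_
  set v : EuclideanSpace ℝ (Fin n) := EuclideanSpace.single ⟨0, hn⟩ r with hv
  have hnv : ‖v‖ = r := by rw [hv, EuclideanSpace.norm_single, Real.norm_eq_abs, abs_of_nonneg hr]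
  have h1 : x + v ∈ closedBall x r := by
    rw [mem_closedBall, dist_eq_norm]; simp [hnv]
  have h2 : x - v ∈ closedBall x r := by
    rw [mem_closedBall, dist_eq_norm]; simp [hnv]
  have h3 : dist (x + v) (x - v) = 2 * r := by
    rw [dist_eq_norm]
    have : x + v - (x - v) = (2 : ℝ) • v := by module
    rw [this, norm_smul, hnv]; simp
  rw [← h3]
  exact dist_le_diam_of_mem isBounded_closedBall h1 h2

lemma sqrt_sub_abs_le {A A' c : ℝ} (hc : 0 < c) (hA : c ≤ A) (hA' : c ≤ A') :
    |Real.sqrt A - Real.sqrt A'| ≤ |A - A'| / (2 * Real.sqrt c) := by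
  have hA0 : 0 ≤ A := le_trans hc.le hA
  have hA'0 : 0 ≤ A' := le_trans hc.le hA'
  have hs : 0 < Real.sqrt A + Real.sqrt A' :=
    add_pos_of_pos_of_nonneg (Real.sqrt_pos.mpr (lt_of_lt_of_le hc hA)) (Real.sqrt_nonneg _)
  have key : (Real.sqrt A - Real.sqrt A') * (Real.sqrt A + Real.sqrt A') = A - A' := by
    have hx : ∀ x y : ℝ, (x - y) * (x + y) = x ^ 2 - y ^ 2 := by intros; ring
    rw [hx, Real.sq_sqrt hA0, Real.sq_sqrt hA'0]
  have habs : |Real.sqrt A - Real.sqrt A'| * (Real.sqrt A + Real.sqrt A') = |A - A'| := by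
    rw [← abs_of_pos hs, ← abs_mul, key]
  have hc2 : 0 < 2 * Real.sqrt c := by positivity
  have hcs : 2 * Real.sqrt c ≤ Real.sqrt A + Real.sqrt A' := by
    have := Real.sqrt_le_sqrt hA
    have := Real.sqrt_le_sqrt hA'
    linarith
  rw [le_div_iff₀ hc2]
  calc |Real.sqrt A - Real.sqrt A'| * (2 * Real.sqrt c)
      ≤ |Real.sqrt A - Real.sqrt A'| * (Real.sqrt A + Real.sqrt A') :=
        mul_le_mul_of_nonneg_left hcs (abs_nonneg _)
    _ = |A - A'| := habs

end helpers

section parts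
open scoped ENNReal

/-- cover predicate matching the inner part of updim/lodim -/
def covOK {X : Type*} [PseudoMetricSpace X] (θ s δ ε : ℝ) (E : Set X) : Prop :=
  ∃ 𝒰 : Set (Set X), 𝒰.Countable ∧ E ⊆ ⋃₀ 𝒰 ∧
    (∀ U ∈ 𝒰, δ ≤ diam U ∧ diam U ≤ δ ^ θ) ∧
    ∑' U : 𝒰, ENNReal.ofReal (diam (U : Set X) ^ s) ≤ ENNReal.ofReal ε

lemma basecover {R θ δ ε : ℝ} (hR : 0 < R) (hθ1 : θ ≤ 1) (hδ : 0 < δ) (hδ1 : δ < 1)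
    (hδε : (R + 2) * δ ≤ ε) : covOK θ 2 δ ε (Ioc 0 R) := by
  have hδθ : δ ≤ δ ^ θ := by
    nth_rewrite 1 [← Real.rpow_one δ]
    exact Real.rpow_le_rpow_of_exponent_ge hδ hδ1.le hθ1
  set K := ⌈R / δ⌉₊ with hK
  set g : Fin (K + 1) → Set ℝ := fun k => Icc (k * δ) (k * δ + δ) with hg
  have hdiam : ∀ k : Fin (K + 1), diam (g k) = δ := by
    intro k; rw [hg]; simp only; rw [Real.diam_Icc (by linarith)]; ring
  refine ⟨range g, countable_range g, ?_, ?_, ?_⟩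
  · rintro x ⟨hx0, hxR⟩
    have hxd : 0 ≤ x / δ := by positivity
    set k := ⌊x / δ⌋₊ with hk
    have hkK : k < K + 1 := by
      have h1 : x / δ ≤ R / δ := by gcongr
      exact Nat.lt_succ_of_le (le_trans (Nat.floor_le_floor h1) (Nat.floor_le_ceil _))
    refine ⟨g ⟨k, hkK⟩, mem_range_self _, ?_⟩
    have h2 : (k : ℝ) ≤ x / δ := Nat.floor_le hxd
    have h3 : x / δ < k + 1 := Nat.lt_floor_add_one _
    rw [hg]
    simp only [Fin.val_mk]
    have h4 : (k : ℝ) * δ ≤ x := by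
      have := (le_div_iff₀ hδ).mp h2; linarith
    have h5 : x < ((k : ℝ) + 1) * δ := (div_lt_iff₀ hδ).mp h3
    exact ⟨h4, by linarith⟩
  · rintro U ⟨k, rfl⟩
    rw [hdiam k]
    exact ⟨le_refl _, hδθ⟩
  · calc ∑' U : range g, ENNReal.ofReal (diam (U : Set ℝ) ^ (2:ℝ))
        ≤ ∑' k, ENNReal.ofReal (diam (g k) ^ (2:ℝ)) := tsum_range_le g (fun U => ENNReal.ofReal (diam U ^ (2:ℝ)))
      _ = ∑' _ : Fin (K+1), ENNReal.ofReal (δ ^ (2:ℝ)) := by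
          apply tsum_congr; intro k; rw [hdiam k]
      _ = (K + 1 : ℕ) * ENNReal.ofReal (δ ^ (2:ℝ)) := by
          rw [tsum_fintype]; simp [Finset.sum_const, nsmul_eq_mul]
      _ = ENNReal.ofReal ((K + 1 : ℕ) * δ ^ (2:ℝ)) := by
          rw [ENNReal.ofReal_mul (by positivity), ENNReal.ofReal_natCast]
      _ ≤ ENNReal.ofReal ε := by
          apply ENNReal.ofReal_le_ofReal
          have h4 : (K : ℝ) ≤ R / δ + 1 := (Nat.ceil_lt_add_one (by positivity : (0:ℝ) ≤ R / δ)).le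
          have h5 : δ ^ (2:ℝ) = δ * δ := by
            rw [show (2:ℝ) = ((2:ℕ):ℝ) by norm_num, Real.rpow_natCast]; ring
          rw [h5]
          push_cast
          have h6 : (K : ℝ) * δ ≤ R + δ := by
            have h7 := mul_le_mul_of_nonneg_right h4 hδ.le
            have he : (R / δ + 1) * δ = R + δ := by field_simp
            rw [he] at h7; exact h7
          nlinarith

lemma lowerB (m : ℕ) {θ s δ : ℝ} (r : ℝ) (hr : 0 < r) (hδ : 0 < δ) (hη : δ ^ θ ≤ 1)
    (hs : s ≤ (m + 1 : ℝ))
    (𝒰 : Set (Set (EuclideanSpace ℝ (Fin (m+2))))) (hc : 𝒰.Countable)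
    (hcov : sphere (0 : EuclideanSpace ℝ (Fin (m+2))) r ⊆ ⋃₀ 𝒰)
    (hdm : ∀ U ∈ 𝒰, δ ≤ diam U ∧ diam U ≤ δ ^ θ) :
    ENNReal.ofReal (r ^ (m+1)) ≤ ∑' U : 𝒰, ENNReal.ofReal (diam U.1 ^ s) := by
  classical
  set π : EuclideanSpace ℝ (Fin (m+2)) → EuclideanSpace ℝ (Fin (m+1)) :=
    fun x => (WithLp.toLp 2 (fun i => x (Fin.castSucc i)) : EuclideanSpace ℝ (Fin (m+1))) with hπdef
  have hπ : ∀ x y, dist (π x) (π y) ≤ dist x y := by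
    intro x y
    rw [EuclideanSpace.dist_eq, EuclideanSpace.dist_eq]
    apply Real.sqrt_le_sqrt
    calc ∑ i : Fin (m+1), dist (π x i) (π y i) ^ 2
        = ∑ k ∈ Finset.univ.image Fin.castSucc, dist (x k) (y k) ^ 2 := by
          rw [Finset.sum_image (fun a _ b _ h => Fin.castSucc_injective _ h)]
      _ ≤ ∑ k : Fin (m+2), dist (x k) (y k) ^ 2 :=
          Finset.sum_le_sum_of_subset_of_nonneg (Finset.subset_univ _)
            (fun _ _ _ => sq_nonneg _)
  set V := volume (closedBall (0 : EuclideanSpace ℝ (Fin (m+1))) 1) with hV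
  have hV0 : V ≠ 0 := (measure_closedBall_pos volume _ one_pos).ne'
  have hVtop : V ≠ ⊤ := measure_closedBall_lt_top.ne
  -- each projected piece has small volume
  have key : ∀ U ∈ 𝒰, volume (π '' U) ≤ ENNReal.ofReal (diam U ^ (m+1)) * V := by
    intro U hU
    rcases U.eq_empty_or_nonempty with rfl | ⟨x₀, hx₀⟩
    · simp
    have hbd : IsBounded U := bounded_of_diam_pos (lt_of_lt_of_le hδ (hdm U hU).1)
    have hsub : π '' U ⊆ closedBall (π x₀) (diam U) := by
      rintro y ⟨x, hx, rfl⟩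
      rw [mem_closedBall]
      exact le_trans (hπ x x₀) (dist_le_diam_of_mem hbd hx hx₀)
    calc volume (π '' U) ≤ volume (closedBall (π x₀) (diam U)) := measure_mono hsub
      _ = ENNReal.ofReal (diam U ^ (m+1)) * V := by
          rw [Measure.addHaar_closedBall' volume _ diam_nonneg, finrank_euclideanSpace_fin]
  -- the closed ball is covered by projected pieces
  have hcov2 : closedBall (0 : EuclideanSpace ℝ (Fin (m+1))) r ⊆ ⋃ U : 𝒰, π '' U.1 := by
    intro y hy
    have hyr : ‖y‖ ≤ r := by rwa [mem_closedBall_zero_iff] at hy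
    set ψ : EuclideanSpace ℝ (Fin (m+2)) :=
      WithLp.toLp 2 (fun k : Fin (m+2) => if hk : (k : ℕ) < m + 1 then y ⟨k, hk⟩ else Real.sqrt (r^2 - ‖y‖^2)) with hψ
    have hy2 : ‖y‖^2 ≤ r^2 := by nlinarith [norm_nonneg y]
    have hsum : ∑ i : Fin (m+1), y i ^ 2 = ‖y‖^2 := by
      have h1 : ‖y‖ = Real.sqrt (∑ i, y i ^ 2) := by
        rw [EuclideanSpace.norm_eq]; simp [Real.norm_eq_abs, sq_abs]
      rw [h1, Real.sq_sqrt (Finset.sum_nonneg fun _ _ => sq_nonneg _)]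
    have hψnorm : ‖ψ‖ = r := by
      have h1 : ‖ψ‖ = Real.sqrt (∑ k, ψ k ^ 2) := by
        rw [EuclideanSpace.norm_eq]; simp [Real.norm_eq_abs, sq_abs]
      have h2 : ∑ k, ψ k ^ 2 = r ^ 2 := by
        rw [Fin.sum_univ_castSucc]
        have h3 : ∀ i : Fin (m+1), ψ (Fin.castSucc i) = y i := by
          intro i
          rw [hψ]
          simp only [Fin.coe_castSucc, PiLp.toLp_apply]
          rw [dif_pos i.isLt]
        have h4 : ψ (Fin.last (m+1)) = Real.sqrt (r^2 - ‖y‖^2) := by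
          rw [hψ]; simp
        simp_rw [h3, h4]
        rw [Real.sq_sqrt (by linarith), hsum]
        ring
      rw [h1, h2, Real.sqrt_sq hr.le]
    have hπψ : π ψ = y := by
      ext i
      rw [hπdef]
      simp only [PiLp.toLp_apply]
      rw [hψ]
      simp only [Fin.coe_castSucc, PiLp.toLp_apply]
      rw [dif_pos i.isLt]
    have hmem : ψ ∈ ⋃₀ 𝒰 := hcov (by rwa [mem_sphere_zero_iff_norm])
    obtain ⟨U, hU, hψU⟩ := hmem
    exact mem_iUnion.mpr ⟨⟨U, hU⟩, ⟨ψ, hψU, hπψ⟩⟩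
  haveI := hc.to_subtype
  have main : ENNReal.ofReal (r ^ (m+1)) * V ≤
      (∑' U : 𝒰, ENNReal.ofReal (diam U.1 ^ s)) * V := by
    calc ENNReal.ofReal (r ^ (m+1)) * V
        = volume (closedBall (0 : EuclideanSpace ℝ (Fin (m+1))) r) := by
          rw [Measure.addHaar_closedBall' volume _ hr.le, finrank_euclideanSpace_fin]
      _ ≤ volume (⋃ U : 𝒰, π '' U.1) := measure_mono hcov2
      _ ≤ ∑' U : 𝒰, volume (π '' U.1) := measure_iUnion_le _
      _ ≤ ∑' U : 𝒰, ENNReal.ofReal (diam U.1 ^ (m+1)) * V :=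
          ENNReal.tsum_le_tsum (fun U => key U U.2)
      _ = (∑' U : 𝒰, ENNReal.ofReal (diam U.1 ^ (m+1))) * V := ENNReal.tsum_mul_right
      _ ≤ (∑' U : 𝒰, ENNReal.ofReal (diam U.1 ^ s)) * V := by
          apply mul_le_mul_left
          apply ENNReal.tsum_le_tsum
          intro U
          apply ENNReal.ofReal_le_ofReal
          have h1 : 0 < diam U.1 := lt_of_lt_of_le hδ (hdm U U.2).1
          have h2 : diam U.1 ≤ 1 := le_trans (hdm U U.2).2 hη
          calc diam U.1 ^ (m+1) = diam U.1 ^ ((m+1 : ℕ) : ℝ) :=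
                (Real.rpow_natCast _ _).symm
            _ ≤ diam U.1 ^ s := by
                apply Real.rpow_le_rpow_of_exponent_ge h1 h2
                push_cast; exact hs
  exact (ENNReal.mul_le_mul_iff_left hV0 hVtop).mp main

/-- chart map parametrizing part of the unit sphere over the hyperplane `z j = 0`. -/
noncomputable def wmap (d : ℕ) (j : Fin d) (σ : Bool) (z : EuclideanSpace ℝ (Fin d)) :
    EuclideanSpace ℝ (Fin d) :=
  WithLp.toLp 2 fun k => if k = j then (if σ then (1:ℝ) else -1) *
    Real.sqrt (max (1 - ∑ k' ∈ Finset.univ.erase j, z k' ^ 2) (1/(d:ℝ))) else z k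

lemma wmap_norm {d : ℕ} (hd : 1 ≤ d) (j : Fin d) (σ : Bool) (z : EuclideanSpace ℝ (Fin d))
    (hS : ∑ k' ∈ Finset.univ.erase j, z k' ^ 2 ≤ 1 - 1/(d:ℝ)) : ‖wmap d j σ z‖ = 1 := by
  have hd0 : (0:ℝ) < 1/(d:ℝ) := by
    have : (0:ℝ) < d := by exact_mod_cast hd
    positivity
  set S := ∑ k' ∈ Finset.univ.erase j, z k' ^ 2 with hSdef
  have hmax : max (1 - S) (1/(d:ℝ)) = 1 - S := max_eq_left (by linarith)
  have hnn : (0:ℝ) ≤ 1 - S := by linarith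
  have h1 : ‖wmap d j σ z‖ = Real.sqrt (∑ k, wmap d j σ z k ^ 2) := by
    rw [EuclideanSpace.norm_eq]; simp [Real.norm_eq_abs, sq_abs]
  have h2 : ∑ k, wmap d j σ z k ^ 2 = 1 := by
    rw [← Finset.add_sum_erase _ _ (Finset.mem_univ j)]
    have hj : wmap d j σ z j ^ 2 = 1 - S := by
      rw [wmap, PiLp.toLp_apply, if_pos rfl, hmax, mul_pow, Real.sq_sqrt hnn]
      cases σ <;> norm_num
    have ho : ∀ k ∈ Finset.univ.erase j, wmap d j σ z k ^ 2 = z k ^ 2 := by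
      intro k hk
      rw [wmap, PiLp.toLp_apply, if_neg (Finset.mem_erase.mp hk).1]
    rw [hj, Finset.sum_congr rfl ho, ← hSdef]
    ring
  rw [h1, h2, Real.sqrt_one]

lemma wmap_lip {d : ℕ} (hd : 1 ≤ d) (j : Fin d) (σ : Bool) (z z' : EuclideanSpace ℝ (Fin d))
    (hzj : z j = 0) (hz'j : z' j = 0) (hz : ∀ k, |z k| ≤ 2) (hz' : ∀ k, |z' k| ≤ 2) :
    dist (wmap d j σ z) (wmap d j σ z') ≤ 3 * d * dist z z' := by
  have hdR : (1:ℝ) ≤ d := by exact_mod_cast hd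
  have hd0 : (0:ℝ) < 1/(d:ℝ) := by positivity
  set S := ∑ k' ∈ Finset.univ.erase j, z k' ^ 2 with hSdef
  set S' := ∑ k' ∈ Finset.univ.erase j, z' k' ^ 2 with hS'def
  set A := max (1 - S) (1/(d:ℝ)) with hAdef
  set A' := max (1 - S') (1/(d:ℝ)) with hA'def
  have hA : 1/(d:ℝ) ≤ A := le_max_right _ _
  have hA' : 1/(d:ℝ) ≤ A' := le_max_right _ _
  -- distance squared formulas
  have hdist2 : dist z z' ^ 2 = ∑ k, (z k - z' k) ^ 2 := by
    rw [EuclideanSpace.dist_eq, Real.sq_sqrt (Finset.sum_nonneg fun _ _ => sq_nonneg _)]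
    congr 1; funext k; rw [Real.dist_eq, sq_abs]
  have herase : ∑ k ∈ Finset.univ.erase j, (z k - z' k) ^ 2 = dist z z' ^ 2 := by
    rw [hdist2, ← Finset.add_sum_erase _ _ (Finset.mem_univ j), hzj, hz'j]
    norm_num
  -- Cauchy-Schwarz bound on |S - S'|
  have hdist0 : (0:ℝ) ≤ dist z z' := dist_nonneg
  have hSS' : |S - S'| ≤ 4 * Real.sqrt d * dist z z' := by
    have h1 : S - S' = ∑ k ∈ Finset.univ.erase j, (z k - z' k) * (z k + z' k) := by
      rw [hSdef, hS'def, ← Finset.sum_sub_distrib]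
      apply Finset.sum_congr rfl
      intro k _; ring
    have h2 := Finset.sum_mul_sq_le_sq_mul_sq (Finset.univ.erase j)
      (fun k => z k - z' k) (fun k => z k + z' k)
    have h3 : ∑ k ∈ Finset.univ.erase j, (z k + z' k) ^ 2 ≤ 16 * d := by
      calc ∑ k ∈ Finset.univ.erase j, (z k + z' k) ^ 2
          ≤ ∑ _k ∈ Finset.univ.erase j, (16:ℝ) := by
            apply Finset.sum_le_sum
            intro k _
            have h4 : |z k + z' k| ≤ 4 := by
              calc |z k + z' k| ≤ |z k| + |z' k| := abs_add_le _ _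
                _ ≤ 4 := by linarith [hz k, hz' k]
            calc (z k + z' k) ^ 2 = |z k + z' k| ^ 2 := (sq_abs _).symm
              _ ≤ 4 ^ 2 := by gcongr <;> norm_num
              _ = 16 := by norm_num
        _ = 16 * (Finset.univ.erase j).card := by rw [Finset.sum_const, nsmul_eq_mul]; ring
        _ ≤ 16 * d := by
            have := Finset.card_erase_le (s := (Finset.univ : Finset (Fin d))) (a := j)
            have h5 : ((Finset.univ.erase j).card : ℝ) ≤ d := by
              exact_mod_cast le_trans this (by simp)
            linarith
    have h6 : (S - S') ^ 2 ≤ dist z z' ^ 2 * (16 * d) := by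
      rw [h1]
      refine le_trans h2 ?_
      rw [herase]
      exact mul_le_mul_of_nonneg_left h3 (sq_nonneg _)
    calc |S - S'| = Real.sqrt ((S - S') ^ 2) := (Real.sqrt_sq_eq_abs _).symm
      _ ≤ Real.sqrt (dist z z' ^ 2 * (16 * d)) := Real.sqrt_le_sqrt h6
      _ = dist z z' * (4 * Real.sqrt d) := by
          rw [Real.sqrt_mul (sq_nonneg _), Real.sqrt_sq hdist0]
          congr 1
          rw [show (16:ℝ) * d = 4^2 * d by norm_num, Real.sqrt_mul (by norm_num),
            Real.sqrt_sq (by norm_num : (0:ℝ) ≤ 4)]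
      _ = 4 * Real.sqrt d * dist z z' := by ring
  have hsq : |Real.sqrt A - Real.sqrt A'| ≤ 2 * d * dist z z' := by
    have h1 : |A - A'| ≤ |S - S'| := by
      rw [hAdef, hA'def]
      calc |max (1 - S) (1/(d:ℝ)) - max (1 - S') (1/(d:ℝ))| ≤ |(1 - S) - (1 - S')| :=
            abs_max_sub_max_le_abs _ _ _
        _ = |S - S'| := by rw [show (1 - S) - (1 - S') = -(S - S') by ring, abs_neg]
    have h2 := sqrt_sub_abs_le hd0 hA hA'
    have hsd : Real.sqrt (1/(d:ℝ)) = 1 / Real.sqrt d := by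
      rw [one_div, Real.sqrt_inv, one_div]
    have hsd0 : 0 < Real.sqrt d := Real.sqrt_pos.mpr (by linarith)
    calc |Real.sqrt A - Real.sqrt A'| ≤ |A - A'| / (2 * Real.sqrt (1/(d:ℝ))) := h2
      _ ≤ |S - S'| / (2 * Real.sqrt (1/(d:ℝ))) := by
          have hp : 0 < 2 * Real.sqrt (1/(d:ℝ)) := by positivity
          exact (div_le_div_iff_of_pos_right hp).mpr h1
      _ = |S - S'| * Real.sqrt d / 2 := by
          rw [hsd]; field_simp
      _ ≤ (4 * Real.sqrt d * dist z z') * Real.sqrt d / 2 := by gcongr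
      _ = 2 * (Real.sqrt d * Real.sqrt d) * dist z z' := by ring
      _ = 2 * d * dist z z' := by rw [Real.mul_self_sqrt (by linarith)]
  -- assemble
  have hwdist2 : dist (wmap d j σ z) (wmap d j σ z') ^ 2 =
      (Real.sqrt A - Real.sqrt A') ^ 2 + dist z z' ^ 2 := by
    have h0 : dist (wmap d j σ z) (wmap d j σ z') ^ 2 =
        ∑ k, (wmap d j σ z k - wmap d j σ z' k) ^ 2 := by
      rw [EuclideanSpace.dist_eq, Real.sq_sqrt (Finset.sum_nonneg fun _ _ => sq_nonneg _)]
      congr 1; funext k; rw [Real.dist_eq, sq_abs]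
    rw [h0, ← Finset.add_sum_erase _ _ (Finset.mem_univ j)]
    have hj : (wmap d j σ z j - wmap d j σ z' j) ^ 2 = (Real.sqrt A - Real.sqrt A') ^ 2 := by
      rw [wmap, wmap]
      simp only [PiLp.toLp_apply, if_pos rfl]
      rw [← hSdef, ← hS'def, ← hAdef, ← hA'def]
      cases σ <;> simp <;> ring
    have ho : ∀ k ∈ Finset.univ.erase j, (wmap d j σ z k - wmap d j σ z' k) ^ 2
        = (z k - z' k) ^ 2 := by
      intro k hk
      rw [wmap, wmap]
      simp only [PiLp.toLp_apply, if_neg (Finset.mem_erase.mp hk).1]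
    rw [hj, Finset.sum_congr rfl ho, herase]
  have hfinal : dist (wmap d j σ z) (wmap d j σ z') ^ 2 ≤ (3 * d * dist z z') ^ 2 := by
    rw [hwdist2]
    have h1 : (Real.sqrt A - Real.sqrt A') ^ 2 ≤ (2 * d * dist z z') ^ 2 := by
      rw [← sq_abs (Real.sqrt A - Real.sqrt A')]
      apply pow_le_pow_left₀ (abs_nonneg _) hsq
    have h2 := mul_nonneg (mul_nonneg (sub_nonneg.mpr hdR)
      (show (0:ℝ) ≤ (d:ℝ) + 1 by linarith)) (sq_nonneg (dist z z'))
    nlinarith [h1, h2, sq_nonneg ((d:ℝ) * dist z z')]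
  calc dist (wmap d j σ z) (wmap d j σ z')
      = Real.sqrt (dist (wmap d j σ z) (wmap d j σ z') ^ 2) := (Real.sqrt_sq dist_nonneg).symm
    _ ≤ Real.sqrt ((3 * d * dist z z') ^ 2) := Real.sqrt_le_sqrt hfinal
    _ = 3 * d * dist z z' := Real.sqrt_sq (by positivity)

lemma wmap_rep {d : ℕ} (hd : 1 ≤ d) (ω : EuclideanSpace ℝ (Fin d))
    (hω : ∑ k, ω k ^ 2 = 1) :
    ∃ (j : Fin d) (σ : Bool) (z : EuclideanSpace ℝ (Fin d)), z j = 0 ∧ (∀ k, |z k| ≤ 1) ∧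
      (∑ k' ∈ Finset.univ.erase j, z k' ^ 2 ≤ 1 - 1/(d:ℝ)) ∧ wmap d j σ z = ω := by
  classical
  have hdR : (1:ℝ) ≤ d := by exact_mod_cast hd
  have hne : (Finset.univ : Finset (Fin d)).Nonempty := ⟨⟨0, hd⟩, Finset.mem_univ _⟩
  obtain ⟨j, -, hj⟩ := Finset.exists_max_image Finset.univ (fun k => ω k ^ 2) hne
  have hj2 : 1/(d:ℝ) ≤ ω j ^ 2 := by
    have h1 : (1:ℝ) ≤ d * ω j ^ 2 := by
      calc (1:ℝ) = ∑ k, ω k ^ 2 := hω.symm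
        _ ≤ ∑ _k : Fin d, ω j ^ 2 := Finset.sum_le_sum (fun k _ => hj k (Finset.mem_univ k))
        _ = d * ω j ^ 2 := by rw [Finset.sum_const]; simp [nsmul_eq_mul]
    rw [div_le_iff₀ (by linarith : (0:ℝ) < (d:ℝ))]
    linarith
  set z : EuclideanSpace ℝ (Fin d) := WithLp.toLp 2 (Function.update ω j 0) with hz
  have hzj : z j = 0 := by have := Function.update_self j (0:ℝ) ω.ofLp; exact this
  have hzk : ∀ k, k ≠ j → z k = ω k := fun k hk => by have := Function.update_of_ne hk (0:ℝ) ω.ofLp; exact this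
  have hsq1 : ∀ k, ω k ^ 2 ≤ 1 := by
    intro k
    calc ω k ^ 2 ≤ ∑ k', ω k' ^ 2 :=
          Finset.single_le_sum (fun k' _ => sq_nonneg (ω k')) (Finset.mem_univ k)
      _ = 1 := hω
  have habs : ∀ k, |z k| ≤ 1 := by
    intro k
    by_cases hk : k = j
    · rw [hk, hzj]; norm_num
    · rw [hzk k hk]
      nlinarith [hsq1 k, abs_nonneg (ω k), sq_abs (ω k)]
  have hS : ∑ k' ∈ Finset.univ.erase j, z k' ^ 2 = 1 - ω j ^ 2 := by
    have h1 : ∑ k' ∈ Finset.univ.erase j, z k' ^ 2 = ∑ k' ∈ Finset.univ.erase j, ω k' ^ 2 :=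
      Finset.sum_congr rfl (fun k hk => by rw [hzk k (Finset.mem_erase.mp hk).1])
    have h2 := Finset.add_sum_erase Finset.univ (fun k => ω k ^ 2) (Finset.mem_univ j)
    simp only at h2
    rw [h1]
    rw [hω] at h2
    linarith
  refine ⟨j, decide (0 ≤ ω j), z, hzj, habs, by rw [hS]; linarith, ?_⟩
  ext k
  by_cases hk : k = j
  · subst hk
    rw [wmap, PiLp.toLp_apply, if_pos rfl, hS]
    have h3 : max (1 - (1 - ω k ^ 2)) (1/(d:ℝ)) = ω k ^ 2 := by
      rw [show 1 - (1 - ω k ^ 2) = ω k ^ 2 by ring]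
      exact max_eq_left hj2
    rw [h3, Real.sqrt_sq_eq_abs]
    by_cases hsign : 0 ≤ ω k
    · simp [hsign, abs_of_nonneg hsign]
    · push_neg at hsign
      simp [not_le.mpr hsign, abs_of_neg hsign]
  · rw [wmap, PiLp.toLp_apply, if_neg hk, hzk k hk]

lemma grid_pick {v h : ℝ} (hh : 0 < h) (hlo : -1 ≤ v) (hhi : v ≤ 1) :
    ∃ g : ℕ, (g : ℝ) ≤ 2 / h ∧ |v - (-1 + ((g : ℝ) + 1/2) * h)| ≤ h / 2 := by
  have hq0 : 0 ≤ (v + 1) / h := div_nonneg (by linarith) hh.le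
  refine ⟨⌊(v + 1) / h⌋₊, ?_, ?_⟩
  · calc (⌊(v + 1) / h⌋₊ : ℝ) ≤ (v + 1) / h := Nat.floor_le hq0
      _ ≤ 2 / h := by gcongr; linarith
  · have h1 : (⌊(v + 1) / h⌋₊ : ℝ) ≤ (v + 1) / h := Nat.floor_le hq0
    have h2 : (v + 1) / h < ⌊(v + 1) / h⌋₊ + 1 := Nat.lt_floor_add_one _
    rw [abs_le]
    have ha := (le_div_iff₀ hh).mp h1
    have hb := (div_lt_iff₀ hh).mp h2
    constructor <;> nlinarith

lemma quarter_pick {b u ρ : ℝ} (hu : 0 < u) (h1 : b ≤ ρ) (h2 : ρ ≤ b + u) :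
    ∃ t : Fin 4, |ρ - (b + ((t : ℝ) + 1/2) * (u/4))| ≤ u / 8 := by
  set q := (ρ - b) * 4 / u with hq
  have hq0 : 0 ≤ q := by
    rw [hq]; apply div_nonneg _ hu.le; nlinarith
  have hq4 : q ≤ 4 := by
    rw [hq, div_le_iff₀ hu]; nlinarith
  have hqu : q * (u/4) = ρ - b := by rw [hq]; field_simp
  by_cases hc : ⌊q⌋₊ ≤ 3
  · refine ⟨⟨⌊q⌋₊, by omega⟩, ?_⟩
    have ha := Nat.floor_le hq0
    have hb := Nat.lt_floor_add_one q
    have hA : (⌊q⌋₊ : ℝ) * (u/4) ≤ q * (u/4) := by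
      apply mul_le_mul_of_nonneg_right ha (by positivity)
    have hB : q * (u/4) ≤ ((⌊q⌋₊ : ℝ) + 1) * (u/4) := by
      apply mul_le_mul_of_nonneg_right hb.le (by positivity)
    have hco : ((⟨⌊q⌋₊, by omega⟩ : Fin 4) : ℝ) = (⌊q⌋₊ : ℝ) := by norm_num
    rw [abs_le, hco]
    constructor <;> nlinarith
  · push_neg at hc
    have h4q : (4:ℝ) ≤ q := by
      calc (4:ℝ) ≤ (⌊q⌋₊ : ℝ) := by exact_mod_cast hc
        _ ≤ q := Nat.floor_le hq0
    have hq4' : q = 4 := le_antisymm hq4 h4q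
    have hρ : ρ - b = u := by
      have := hqu; rw [hq4'] at this; linarith
    refine ⟨⟨3, by omega⟩, ?_⟩
    have hco : ((⟨3, by omega⟩ : Fin 4) : ℝ) = 3 := by norm_num
    rw [abs_le, hco]
    constructor <;> nlinarith

noncomputable def KK (d : ℕ) (R : ℝ) : ℝ := 12 * d * Real.sqrt d * (R + 1) + 1
noncomputable def CC (d : ℕ) (R : ℝ) : ℝ := 8 * d * (4 * KK d R) ^ (d - 1)

lemma KK_ge_one (d : ℕ) {R : ℝ} (hR : 0 ≤ R) : 1 ≤ KK d R := by
  rw [KK]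
  have h1 : 0 ≤ 12 * (d:ℝ) * Real.sqrt d * (R + 1) := by positivity
  linarith

lemma CC_pos {d : ℕ} (hd : 1 ≤ d) {R : ℝ} (hR : 0 ≤ R) : 0 < CC d R := by
  rw [CC]
  have h1 := KK_ge_one d hR
  have h2 : (0:ℝ) < d := by exact_mod_cast hd
  positivity

set_option maxHeartbeats 2000000 in
lemma transfer {d : ℕ} (hd : 2 ≤ d) {θ s' δ ε' R : ℝ} (hR : 0 < R) (hθ : 0 < θ)
    (hδ : 0 < δ) (hδ1 : δ < 1) (hs' : 0 ≤ s') {A : Set ℝ} (hA : A ⊆ Ioc 0 R)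
    (h : covOK θ s' δ ε' A) :
    covOK θ ((d:ℝ) - 1 + s') δ (CC d R * ε') {x : EuclideanSpace ℝ (Fin d) | ‖x‖ ∈ A} := by
  classical
  have hd1 : 1 ≤ d := by omega
  have hdR : (1:ℝ) ≤ d := by exact_mod_cast hd1
  have hKK : 1 ≤ KK d R := KK_ge_one d hR.le
  have hKK0 : 0 < KK d R := by linarith
  obtain ⟨𝒰', hcnt, hcov, hdm, hsum⟩ := h
  haveI := hcnt.to_subtype
  set u : ↥𝒰' → ℝ := fun U => diam (U : Set ℝ) with hu_def
  have hul : ∀ U : ↥𝒰', δ ≤ u U := fun U => (hdm U.1 U.2).1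
  have huh : ∀ U : ↥𝒰', u U ≤ δ ^ θ := fun U => (hdm U.1 U.2).2
  have hδθ1 : δ ^ θ ≤ 1 := Real.rpow_le_one hδ.le hδ1.le hθ.le
  have hup : ∀ U : ↥𝒰', 0 < u U := fun U => lt_of_lt_of_le hδ (hul U)
  have hu1 : ∀ U : ↥𝒰', u U ≤ 1 := fun U => le_trans (huh U) hδθ1
  set b : ↥𝒰' → ℝ := fun U => max (sInf (U : Set ℝ)) 0 with hb_def
  set hh : ↥𝒰' → ℝ := fun U => u U / KK d R with hh_def
  have hhp : ∀ U, 0 < hh U := fun U => div_pos (hup U) hKK0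
  have hh1 : ∀ U, hh U ≤ 1 := fun U => by
    rw [hh_def]; simp only
    rw [div_le_one hKK0]; exact le_trans (hu1 U) hKK
  set mm : ↥𝒰' → ℕ := fun U => ⌊2 / hh U⌋₊ + 1 with hmm_def
  have hmb : ∀ U, (mm U : ℝ) ≤ 3 * KK d R / u U := by
    intro U
    have hup' := hup U
    have h1 : (⌊2 / hh U⌋₊ : ℝ) ≤ 2 / hh U := Nat.floor_le (by positivity)
    have h2 : 2 / hh U = 2 * (KK d R / u U) := by
      rw [hh_def]; simp only; rw [div_div_eq_mul_div, mul_div_assoc]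
    have h3 : 1 ≤ KK d R / u U := (one_le_div (hup U)).mpr (le_trans (hu1 U) hKK)
    have h4 : (mm U : ℝ) = (⌊2 / hh U⌋₊ : ℝ) + 1 := by rw [hmm_def]; push_cast; ring
    have h5 : 3 * KK d R / u U = 3 * (KK d R / u U) := by ring
    have h6 : (⌊2 / hh U⌋₊ : ℝ) ≤ 2 * (KK d R / u U) := le_trans h1 (le_of_eq h2)
    rw [h4, h5]
    linarith
  let P : ↥𝒰' → Type := fun U =>
    Σ j : Fin d, Bool × Fin 4 × ({k : Fin d // k ≠ j} → Fin (mm U))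
  let zfun : (U : ↥𝒰') → (j : Fin d) → ({k : Fin d // k ≠ j} → Fin (mm U)) →
      EuclideanSpace ℝ (Fin d) := fun U j g =>
    WithLp.toLp 2 (fun k => if hk : k = j then 0 else -1 + (((g ⟨k, hk⟩ : ℕ) : ℝ) + 1/2) * hh U)
  let cen : (U : ↥𝒰') → P U → EuclideanSpace ℝ (Fin d) := fun U p =>
    (b U + (((p.2.2.1 : ℕ) : ℝ) + 1/2) * (u U / 4)) • wmap d p.1 p.2.1 (zfun U p.1 p.2.2.2)
  let G : (Σ U : ↥𝒰', P U) → Set (EuclideanSpace ℝ (Fin d)) := fun q =>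
    closedBall (cen q.1 q.2) (u q.1 / 2)
  have hGdiam : ∀ q, diam (G q) = u q.1 := by
    intro q
    rw [diam_closedBall_eq hd1 _ (le_of_lt (half_pos (hup q.1)))]
    ring
  -- bound on grid coordinates
  have hzfb : ∀ (U : ↥𝒰') (j : Fin d) (g : {k : Fin d // k ≠ j} → Fin (mm U)) (k : Fin d),
      |zfun U j g k| ≤ 2 := by
    intro U j g k
    by_cases hk : k = j
    · simp only [zfun, PiLp.toLp_apply, dif_pos hk]; norm_num
    · simp only [zfun, PiLp.toLp_apply, dif_neg hk]
      have h1 : ((g ⟨k, hk⟩ : ℕ) : ℝ) ≤ 2 / hh U := by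
        have h2 : (g ⟨k, hk⟩ : ℕ) < mm U := (g ⟨k, hk⟩).isLt
        have h3 : (g ⟨k, hk⟩ : ℕ) ≤ ⌊2 / hh U⌋₊ := by
          have h2' : (g ⟨k, hk⟩ : ℕ) < ⌊2 / hh U⌋₊ + 1 := h2
          omega
        calc ((g ⟨k, hk⟩ : ℕ) : ℝ) ≤ (⌊2 / hh U⌋₊ : ℝ) := by exact_mod_cast h3
          _ ≤ 2 / hh U := Nat.floor_le (by positivity)
      have h4 := (hhp U)
      have h5 := hh1 U
      have h6 : ((g ⟨k, hk⟩ : ℕ) : ℝ) * hh U ≤ 2 := by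
        have := mul_le_mul_of_nonneg_right h1 h4.le
        rwa [div_mul_cancel₀ _ h4.ne'] at this
      have h7 : 0 ≤ ((g ⟨k, hk⟩ : ℕ) : ℝ) * hh U := by positivity
      rw [abs_le]
      constructor <;> nlinarith
  refine ⟨range G, countable_range G, ?_, ?_, ?_⟩
  · -- covering
    intro x hx
    simp only [mem_setOf_eq] at hx
    have hρmem := hA hx
    obtain ⟨hρ0, hρR⟩ := hρmem
    obtain ⟨U', hU'mem, hρU⟩ := hcov hx
    set U : ↥𝒰' := ⟨U', hU'mem⟩ with hUdef
    have hbd : IsBounded U' := bounded_of_diam_pos (lt_of_lt_of_le hδ (hul U))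
    obtain ⟨hinf_le, hle_inf⟩ := sInf_le_mem hbd hρU
    have hbρ : b U ≤ ‖x‖ := max_le hinf_le hρ0.le
    have hρb : ‖x‖ ≤ b U + u U := by
      have h1 : sInf U' ≤ b U := le_max_left _ _
      have h2 : u U = diam U' := rfl
      rw [h2]; linarith
    set ω : EuclideanSpace ℝ (Fin d) := ‖x‖⁻¹ • x with hωdef
    have hωnorm : ‖ω‖ = 1 := by
      rw [hωdef, norm_smul, norm_inv, norm_norm, inv_mul_cancel₀ hρ0.ne']
    have hωsum : ∑ k, ω k ^ 2 = 1 := by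
      have h1 : ‖ω‖ = Real.sqrt (∑ k, ω k ^ 2) := by
        rw [EuclideanSpace.norm_eq]; simp [Real.norm_eq_abs, sq_abs]
      have h3 : 0 ≤ ∑ k, ω k ^ 2 := Finset.sum_nonneg fun _ _ => sq_nonneg _
      have h2 : Real.sqrt (∑ k, ω k ^ 2) = 1 := by rw [← h1, hωnorm]
      nlinarith [Real.sq_sqrt h3]
    obtain ⟨j, σ, z, hzj, hz1, hzS, hwz⟩ := wmap_rep hd1 ω hωsum
    obtain ⟨t, ht⟩ := quarter_pick (hup U) hbρ hρb
    have hpick : ∀ k : {k : Fin d // k ≠ j}, ∃ g : ℕ, (g:ℝ) ≤ 2 / hh U ∧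
        |z k.1 - (-1 + ((g:ℝ) + 1/2) * hh U)| ≤ hh U / 2 := fun k =>
      grid_pick (hhp U) (abs_le.mp (hz1 k.1)).1 (abs_le.mp (hz1 k.1)).2
    choose gg hgg1 hgg2 using hpick
    have hgglt : ∀ k, gg k < mm U := by
      intro k
      have h1 : gg k ≤ ⌊2 / hh U⌋₊ := Nat.le_floor (hgg1 k)
      show gg k < ⌊2 / hh U⌋₊ + 1
      omega
    set g : {k : Fin d // k ≠ j} → Fin (mm U) := fun k => ⟨gg k, hgglt k⟩ with hgdef
    set p : P U := ⟨j, σ, t, g⟩ with hpdef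
    refine ⟨G ⟨U, p⟩, mem_range_self _, ?_⟩
    set z' := zfun U j g with hz'def
    have hz'j : z' j = 0 := by rw [hz'def]; simp [zfun]
    have hzz' : dist z z' ≤ Real.sqrt d * (hh U / 2) := by
      have hdist2 : dist z z' ^ 2 = ∑ k, (z k - z' k) ^ 2 := by
        rw [EuclideanSpace.dist_eq, Real.sq_sqrt (Finset.sum_nonneg fun _ _ => sq_nonneg _)]
        congr 1; funext k; rw [Real.dist_eq, sq_abs]
      have hsum2 : ∑ k, (z k - z' k) ^ 2 ≤ d * (hh U / 2) ^ 2 := by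
        calc ∑ k, (z k - z' k) ^ 2 ≤ ∑ _k : Fin d, (hh U / 2) ^ 2 := by
              apply Finset.sum_le_sum
              intro k _
              by_cases hk : k = j
              · subst hk; rw [hzj, hz'j]; simp; positivity
              · have h1 : z' k = -1 + ((gg ⟨k, hk⟩ : ℝ) + 1/2) * hh U := by
                  rw [hz'def]; simp only [zfun, PiLp.toLp_apply, dif_neg hk, hgdef]
                have h2 := hgg2 ⟨k, hk⟩
                rw [← h1] at h2
                calc (z k - z' k) ^ 2 = |z k - z' k| ^ 2 := (sq_abs _).symm
                  _ ≤ (hh U / 2) ^ 2 := by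
                      apply pow_le_pow_left₀ (abs_nonneg _) h2
            _ = d * (hh U / 2) ^ 2 := by rw [Finset.sum_const]; simp [nsmul_eq_mul]
      calc dist z z' = Real.sqrt (dist z z' ^ 2) := (Real.sqrt_sq dist_nonneg).symm
        _ ≤ Real.sqrt ((d:ℝ) * (hh U / 2) ^ 2) := Real.sqrt_le_sqrt (by rw [hdist2]; exact hsum2)
        _ = Real.sqrt d * (hh U / 2) := by
            rw [Real.sqrt_mul (by positivity), Real.sqrt_sq (by positivity)]
    have hwzz' : dist ω (wmap d j σ z') ≤ 3 * d * dist z z' := by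
      rw [← hwz]
      exact wmap_lip hd1 j σ z z' hzj hz'j (fun k => le_trans (hz1 k) one_le_two)
        (fun k => hzfb U j g k)
    set ρc := b U + (((t : ℕ) : ℝ) + 1/2) * (u U / 4) with hρcdef
    have hb0 : 0 ≤ b U := le_max_right _ _
    have ht4 : ((t : ℕ) : ℝ) ≤ 3 := by
      have := t.isLt; exact_mod_cast Nat.lt_succ_iff.mp this
    have ht0 : (0:ℝ) ≤ ((t : ℕ) : ℝ) := Nat.cast_nonneg _
    have hρc0 : 0 ≤ ρc := by
      rw [hρcdef]
      have := hup U
      nlinarith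
    have hρcR : ρc ≤ R + 1 := by
      have h1 : b U ≤ R := max_le (le_trans hinf_le hρR) hR.le
      have h2 := hup U
      have h3 := hu1 U
      rw [hρcdef]
      nlinarith
    have hcen_eq : cen U p = ρc • wmap d j σ z' := rfl
    have hx_eq : x = ‖x‖ • ω := by rw [hωdef, smul_inv_smul₀ hρ0.ne']
    have hd2 : dist x (ρc • ω) ≤ u U / 8 := by
      nth_rewrite 1 [hx_eq]
      rw [dist_eq_norm, ← sub_smul, norm_smul, hωnorm, mul_one, Real.norm_eq_abs]
      exact ht
    have hd3 : dist (ρc • ω) (cen U p) ≤ u U / 4 := by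
      rw [hcen_eq, dist_smul₀, Real.norm_eq_abs, abs_of_nonneg hρc0]
      have h1 : dist ω (wmap d j σ z') ≤ 3 * d * (Real.sqrt d * (hh U / 2)) :=
        le_trans hwzz' (by
          apply mul_le_mul_of_nonneg_left hzz' (by positivity))
      have h2 : ρc * dist ω (wmap d j σ z') ≤ (R+1) * (3 * d * (Real.sqrt d * (hh U / 2))) := by
        apply mul_le_mul hρcR h1 dist_nonneg (by linarith)
      have h3 : (R+1) * (3 * d * (Real.sqrt d * (hh U / 2))) ≤ u U / 4 := by
        have hsq : (0:ℝ) < Real.sqrt d := Real.sqrt_pos.mpr (by linarith)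
        have h6 : 12 * (d:ℝ) * Real.sqrt d * (R+1) ≤ KK d R := by
          rw [KK]; linarith
        have h7 := hup U
        have h4 : hh U = u U / KK d R := rfl
        have hEq : (R+1) * (3 * (d:ℝ) * (Real.sqrt d * (u U / KK d R / 2)))
            = (12 * (d:ℝ) * Real.sqrt d * (R+1)) * u U / (8 * KK d R) := by
          field_simp
          ring
        rw [h4, hEq]
        have h9 : (12 * (d:ℝ) * Real.sqrt d * (R+1)) * u U ≤ KK d R * u U :=
          mul_le_mul_of_nonneg_right h6 h7.le
        calc (12 * (d:ℝ) * Real.sqrt d * (R+1)) * u U / (8 * KK d R)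
            ≤ KK d R * u U / (8 * KK d R) := by
              exact (div_le_div_iff_of_pos_right (by positivity : (0:ℝ) < 8 * KK d R)).mpr h9
          _ = u U / 8 := by
              field_simp
          _ ≤ u U / 4 := by linarith
      linarith
    have hfin : dist x (cen U p) ≤ u U / 2 := by
      calc dist x (cen U p) ≤ dist x (ρc • ω) + dist (ρc • ω) (cen U p) := dist_triangle _ _ _
        _ ≤ u U / 8 + u U / 4 := add_le_add hd2 hd3
        _ ≤ u U / 2 := by linarith [hup U]
    exact mem_closedBall.mpr hfin
  · -- diameters
    rintro V ⟨q, rfl⟩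
    rw [hGdiam q]
    exact ⟨hul q.1, huh q.1⟩
  · -- sum
    have hcard : ∀ U : ↥𝒰', (Fintype.card (P U) : ℝ) = 8 * d * ((mm U : ℝ)) ^ (d - 1) := by
      intro U
      have h1 : Fintype.card (P U) = d * (2 * (4 * mm U ^ (d-1))) := by
        simp [P, Fintype.card_sigma, Fintype.card_fun, Fintype.card_subtype_compl,
          Finset.sum_const]
      rw [h1]; push_cast; ring
    have hkey : ∀ U : ↥𝒰', (Fintype.card (P U) : ℝ) * u U ^ ((d:ℝ) - 1 + s')
        ≤ CC d R * u U ^ s' := by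
      intro U
      have hsplit : u U ^ ((d:ℝ) - 1 + s') = u U ^ (d - 1 : ℕ) * u U ^ s' := by
        rw [Real.rpow_add (hup U), ← Real.rpow_natCast (u U) (d-1)]
        congr 2
        push_cast [Nat.cast_sub hd1]
        ring
      rw [hsplit, ← mul_assoc]
      apply mul_le_mul_of_nonneg_right _ (Real.rpow_nonneg (hup U).le s')
      calc (Fintype.card (P U) : ℝ) * u U ^ (d-1:ℕ)
          = (8 * d * (mm U:ℝ)^(d-1)) * u U ^ (d-1:ℕ) := by rw [hcard U]
        _ ≤ 8 * d * ((3 * KK d R / u U) ^ (d-1) * u U ^ (d-1:ℕ)) := by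
            rw [mul_assoc]
            apply mul_le_mul_of_nonneg_left _ (by positivity)
            apply mul_le_mul_of_nonneg_right _ (pow_nonneg (hup U).le _)
            exact pow_le_pow_left₀ (by positivity) (hmb U) _
        _ = 8 * d * (3 * KK d R) ^ (d-1) := by
            rw [← mul_pow, div_mul_cancel₀ _ (hup U).ne']
        _ ≤ CC d R := by
            rw [CC]
            apply mul_le_mul_of_nonneg_left _ (by positivity)
            apply pow_le_pow_left₀ (by positivity)
            linarith
    calc ∑' V : ↥(range G), ENNReal.ofReal (diam (V : Set (EuclideanSpace ℝ (Fin d))) ^ ((d:ℝ)-1+s'))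
        ≤ ∑' q : (Σ U : ↥𝒰', P U), ENNReal.ofReal (diam (G q) ^ ((d:ℝ)-1+s')) :=
          tsum_range_le G (fun V => ENNReal.ofReal (diam V ^ ((d:ℝ)-1+s')))
      _ = ∑' U : ↥𝒰', ∑' pp : P U, ENNReal.ofReal (u U ^ ((d:ℝ)-1+s')) := by
          rw [ENNReal.tsum_sigma']
          apply tsum_congr; intro U
          apply tsum_congr; intro pp
          rw [hGdiam ⟨U, pp⟩]
      _ = ∑' U : ↥𝒰', (Fintype.card (P U)) * ENNReal.ofReal (u U ^ ((d:ℝ)-1+s')) := by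
          apply tsum_congr; intro U
          rw [tsum_fintype]
          simp [Finset.sum_const, nsmul_eq_mul]
      _ ≤ ∑' U : ↥𝒰', ENNReal.ofReal (CC d R) * ENNReal.ofReal (u U ^ s') := by
          apply ENNReal.tsum_le_tsum
          intro U
          rw [← ENNReal.ofReal_natCast (Fintype.card (P U)),
            ← ENNReal.ofReal_mul (by positivity), ← ENNReal.ofReal_mul (CC_pos hd1 hR.le).le]
          exact ENNReal.ofReal_le_ofReal (hkey U)
      _ = ENNReal.ofReal (CC d R) * ∑' U : ↥𝒰', ENNReal.ofReal (u U ^ s') :=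
          ENNReal.tsum_mul_left
      _ ≤ ENNReal.ofReal (CC d R) * ENNReal.ofReal ε' := mul_le_mul_right hsum _
      _ = ENNReal.ofReal (CC d R * ε') := (ENNReal.ofReal_mul (CC_pos hd1 hR.le).le).symm


lemma covOK_mono {X : Type*} [PseudoMetricSpace X] {θ s δ ε : ℝ} {E E' : Set X}
    (hEE : E ⊆ E') (h : covOK θ s δ ε E') : covOK θ s δ ε E := by
  obtain ⟨𝒰, h1, h2, h3, h4⟩ := h
  exact ⟨𝒰, h1, subset_trans hEE h2, h3, h4⟩

end parts

theorem stmt10 (d : ℕ) (hd : 2 ≤ d) (a : ℕ → ℝ)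
    (ha : StrictAnti a) (hapos : ∀ n, 0 < a n) (halim : Tendsto a atTop (nhds 0)) :
    (Tendsto (fun θ : ℝ => updim θ (Set.range a)) (nhdsWithin 0 (Set.Ioi 0)) (nhds 0) →
      Tendsto (fun θ : ℝ => updim θ (concentricSeq d a)) (nhdsWithin 0 (Set.Ioi 0))
        (nhds ((d : ℝ) - 1))) ∧
    (Tendsto (fun θ : ℝ => lodim θ (Set.range a)) (nhdsWithin 0 (Set.Ioi 0)) (nhds 0) →
      Tendsto (fun θ : ℝ => lodim θ (concentricSeq d a)) (nhdsWithin 0 (Set.Ioi 0))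
        (nhds ((d : ℝ) - 1))) := by
  obtain ⟨m, rfl⟩ : ∃ m, d = m + 2 := ⟨d - 2, by omega⟩
  have hd1 : 1 ≤ m + 2 := by omega
  set R := a 0 with hRdef
  have hR : 0 < R := hapos 0
  have hsub : Set.range a ⊆ Ioc 0 R := by
    rintro _ ⟨n, rfl⟩
    exact ⟨hapos n, ha.antitone (Nat.zero_le n)⟩
  have hCset : {x : EuclideanSpace ℝ (Fin (m+2)) | ‖x‖ ∈ Set.range a} = concentricSeq (m+2) a := by
    ext x
    simp only [concentricSeq, mem_setOf_eq, Set.mem_range]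
    exact ⟨fun ⟨n, hn⟩ => ⟨n, hn.symm⟩, fun ⟨n, hn⟩ => ⟨n, hn.symm⟩⟩
  have hCC := CC_pos hd1 hR.le
  have hsphere : sphere (0 : EuclideanSpace ℝ (Fin (m+2))) R ⊆ concentricSeq (m+2) a := by
    intro x hx
    exact ⟨0, by rwa [mem_sphere_zero_iff_norm] at hx⟩
  have hRm : (0:ℝ) < R ^ (m+1) := pow_pos hR _
  have hdcast : ((m + 2 : ℕ) : ℝ) - 1 = (m : ℝ) + 1 := by push_cast; ring
  have hIoo : ∀ᶠ θ in nhdsWithin (0:ℝ) (Set.Ioi 0), θ ∈ Ioo (0:ℝ) 1 :=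
    Ioo_mem_nhdsGT_of_mem ⟨le_refl 0, zero_lt_one⟩
  -- lower-bound argument, shared by both parts
  have lowkey : ∀ θ ∈ Ioo (0:ℝ) 1, ∀ s δ : ℝ, 0 < δ → δ < 1 →
      covOK θ s δ (R^(m+1)/2) (concentricSeq (m+2) a) → ((m:ℝ) + 1) ≤ s := by
    intro θ hθ s δ hδ hδ1 hcc
    by_contra hcon
    push_neg at hcon
    obtain ⟨𝒰, hcnt, hcov, hdm, hsum⟩ := hcc
    have hb := lowerB m R hR hδ (Real.rpow_le_one hδ.le hδ1.le hθ.1.le) hcon.le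
      𝒰 hcnt (subset_trans hsphere hcov) hdm
    have := le_trans hb hsum
    rw [ENNReal.ofReal_le_ofReal_iff (by linarith)] at this
    linarith
  constructor
  · -- updim part
    intro hup
    have key : ∀ θ ∈ Ioo (0:ℝ) 1,
        (m:ℝ) + 1 ≤ updim θ (concentricSeq (m+2) a) ∧
        updim θ (concentricSeq (m+2) a) ≤ ((m:ℝ) + 1) + updim θ (Set.range a) := by
      intro θ hθ
      obtain ⟨hθ0, hθ1⟩ := hθ
      set SA := {s : ℝ | 0 ≤ s ∧ ∀ ε : ℝ, 0 < ε → ∃ δ₀ : ℝ, 0 < δ₀ ∧ ∀ δ : ℝ, 0 < δ → δ < δ₀ →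
        covOK θ s δ ε (Set.range a)} with hSA
      set SC := {s : ℝ | 0 ≤ s ∧ ∀ ε : ℝ, 0 < ε → ∃ δ₀ : ℝ, 0 < δ₀ ∧ ∀ δ : ℝ, 0 < δ → δ < δ₀ →
        covOK θ s δ ε (concentricSeq (m+2) a)} with hSC
      have hA_eq : updim θ (Set.range a) = sInf SA := rfl
      have hC_eq : updim θ (concentricSeq (m+2) a) = sInf SC := rfl
      have hbddA : BddBelow SA := ⟨0, fun s hs => hs.1⟩
      have hbddC : BddBelow SC := ⟨0, fun s hs => hs.1⟩
      have mem2 : (2:ℝ) ∈ SA := by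
        refine ⟨by norm_num, fun ε hε => ⟨min 1 (ε/(R+2)), by positivity, fun δ hδ hδ' => ?_⟩⟩
        have h1 : δ < 1 := lt_of_lt_of_le hδ' (min_le_left _ _)
        have h2 : δ < ε/(R+2) := lt_of_lt_of_le hδ' (min_le_right _ _)
        have h3 : (R + 2) * δ ≤ ε := by
          rw [lt_div_iff₀ (by linarith)] at h2; linarith
        exact covOK_mono hsub (basecover hR hθ1.le hδ h1 h3)
      have htrans : ∀ s' ∈ SA, ((m:ℝ) + 1) + s' ∈ SC := by
        intro s' hs'
        obtain ⟨hs'0, hs'p⟩ := hs'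
        constructor
        · linarith [Nat.cast_nonneg (α := ℝ) m]
        · intro ε hε
          obtain ⟨δ₀, hδ₀, hcc⟩ := hs'p (ε / CC (m+2) R) (by positivity)
          refine ⟨min δ₀ 1, by positivity, fun δ hδ hδ' => ?_⟩
          have h1 : δ < δ₀ := lt_of_lt_of_le hδ' (min_le_left _ _)
          have h2 : δ < 1 := lt_of_lt_of_le hδ' (min_le_right _ _)
          have h3 := transfer (by omega : 2 ≤ m + 2) hR hθ0 hδ h2 hs'0 hsub (hcc δ hδ h1)
          rw [hCset] at h3
          have h4 : CC (m+2) R * (ε / CC (m+2) R) = ε := by field_simp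
          rw [h4] at h3
          have h5 : ((m+2:ℕ):ℝ) - 1 + s' = ((m:ℝ) + 1) + s' := by push_cast; ring
          rwa [h5] at h3
      have hlow : ∀ s ∈ SC, (m:ℝ) + 1 ≤ s := by
        intro s hs
        obtain ⟨δ₀, hδ₀, hcc⟩ := hs.2 (R^(m+1)/2) (by positivity)
        set δ := min δ₀ 1 / 2 with hδdef
        have hδp : 0 < δ := by positivity
        have hδ1 : δ < 1 := by
          have := min_le_right δ₀ (1:ℝ); rw [hδdef]; linarith
        have hδδ₀ : δ < δ₀ := by
          have := min_le_left δ₀ (1:ℝ); rw [hδdef]; linarith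
        exact lowkey θ ⟨hθ0, hθ1⟩ s δ hδp hδ1 (hcc δ hδp hδδ₀)
      have hneC : SC.Nonempty := ⟨((m:ℝ)+1)+2, htrans 2 mem2⟩
      have hneA : SA.Nonempty := ⟨2, mem2⟩
      constructor
      · rw [hC_eq]
        exact le_csInf hneC hlow
      · rw [hC_eq, hA_eq]
        have h1 : sInf SC - ((m:ℝ)+1) ≤ sInf SA := by
          apply le_csInf hneA
          intro s' hs'
          have h2 := csInf_le hbddC (htrans s' hs')
          linarith
        linarith
    rw [show ((m + 2 : ℕ) : ℝ) - 1 = (m:ℝ) + 1 from hdcast]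
    apply tendsto_of_tendsto_of_tendsto_of_le_of_le'
      (tendsto_const_nhds : Tendsto (fun _ : ℝ => (m:ℝ) + 1) _ _)
      (by simpa using (hup.const_add ((m:ℝ)+1)))
    · filter_upwards [hIoo] with θ hθ
      exact (key θ hθ).1
    · filter_upwards [hIoo] with θ hθ
      exact (key θ hθ).2
  · -- lodim part
    intro hup
    have key : ∀ θ ∈ Ioo (0:ℝ) 1,
        (m:ℝ) + 1 ≤ lodim θ (concentricSeq (m+2) a) ∧
        lodim θ (concentricSeq (m+2) a) ≤ ((m:ℝ) + 1) + lodim θ (Set.range a) := by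
      intro θ hθ
      obtain ⟨hθ0, hθ1⟩ := hθ
      set SA := {s : ℝ | 0 ≤ s ∧ ∀ ε : ℝ, 0 < ε → ∀ δ₀ : ℝ, 0 < δ₀ → ∃ δ : ℝ, 0 < δ ∧ δ < δ₀ ∧
        covOK θ s δ ε (Set.range a)} with hSA
      set SC := {s : ℝ | 0 ≤ s ∧ ∀ ε : ℝ, 0 < ε → ∀ δ₀ : ℝ, 0 < δ₀ → ∃ δ : ℝ, 0 < δ ∧ δ < δ₀ ∧
        covOK θ s δ ε (concentricSeq (m+2) a)} with hSC
      have hA_eq : lodim θ (Set.range a) = sInf SA := rfl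
      have hC_eq : lodim θ (concentricSeq (m+2) a) = sInf SC := rfl
      have hbddA : BddBelow SA := ⟨0, fun s hs => hs.1⟩
      have hbddC : BddBelow SC := ⟨0, fun s hs => hs.1⟩
      have mem2 : (2:ℝ) ∈ SA := by
        refine ⟨by norm_num, fun ε hε δ₀ hδ₀ => ?_⟩
        set δ := min (min δ₀ 1 / 2) (ε / (R+3)) with hδdef
        have hδp : 0 < δ := by positivity
        have hδ1 : δ < 1 := by
          have h1 := min_le_left (min δ₀ 1 / 2) (ε / (R+3))
          have h2 := min_le_right δ₀ (1:ℝ)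
          rw [hδdef]; linarith
        have hδδ₀ : δ < δ₀ := by
          have h1 := min_le_left (min δ₀ 1 / 2) (ε / (R+3))
          have h2 := min_le_left δ₀ (1:ℝ)
          rw [hδdef]; linarith
        have h3 : (R + 2) * δ ≤ ε := by
          have h4 : δ ≤ ε / (R+3) := min_le_right _ _
          have h5 : (R + 3) * δ ≤ ε := by
            rw [le_div_iff₀ (by linarith)] at h4; linarith
          nlinarith
        exact ⟨δ, hδp, hδδ₀, covOK_mono hsub (basecover hR hθ1.le hδp hδ1 h3)⟩
      have htrans : ∀ s' ∈ SA, ((m:ℝ) + 1) + s' ∈ SC := by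
        intro s' hs'
        obtain ⟨hs'0, hs'p⟩ := hs'
        constructor
        · linarith [Nat.cast_nonneg (α := ℝ) m]
        · intro ε hε δ₀ hδ₀
          obtain ⟨δ, hδ, hδ', hcc⟩ := hs'p (ε / CC (m+2) R) (by positivity) (min δ₀ 1)
            (by positivity)
          have h1 : δ < δ₀ := lt_of_lt_of_le hδ' (min_le_left _ _)
          have h2 : δ < 1 := lt_of_lt_of_le hδ' (min_le_right _ _)
          have h3 := transfer (by omega : 2 ≤ m + 2) hR hθ0 hδ h2 hs'0 hsub hcc
          rw [hCset] at h3
          have h4 : CC (m+2) R * (ε / CC (m+2) R) = ε := by field_simp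
          rw [h4] at h3
          have h5 : ((m+2:ℕ):ℝ) - 1 + s' = ((m:ℝ) + 1) + s' := by push_cast; ring
          rw [h5] at h3
          exact ⟨δ, hδ, h1, h3⟩
      have hlow : ∀ s ∈ SC, (m:ℝ) + 1 ≤ s := by
        intro s hs
        obtain ⟨δ, hδp, hδ1, hcc⟩ := hs.2 (R^(m+1)/2) (by positivity) 1 one_pos
        exact lowkey θ ⟨hθ0, hθ1⟩ s δ hδp hδ1 hcc
      have hneC : SC.Nonempty := ⟨((m:ℝ)+1)+2, htrans 2 mem2⟩
      have hneA : SA.Nonempty := ⟨2, mem2⟩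
      constructor
      · rw [hC_eq]
        exact le_csInf hneC hlow
      · rw [hC_eq, hA_eq]
        have h1 : sInf SC - ((m:ℝ)+1) ≤ sInf SA := by
          apply le_csInf hneA
          intro s' hs'
          have h2 := csInf_le hbddC (htrans s' hs')
          linarith
        linarith
    rw [show ((m + 2 : ℕ) : ℝ) - 1 = (m:ℝ) + 1 from hdcast]
    apply tendsto_of_tendsto_of_tendsto_of_le_of_le'
      (tendsto_const_nhds : Tendsto (fun _ : ℝ => (m:ℝ) + 1) _ _)
      (by simpa using (hup.const_add ((m:ℝ)+1)))
    · filter_upwards [hIoo] with θ hθ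
      exact (key θ hθ).1
    · filter_upwards [hIoo] with θ hθ
      exact (key θ hθ).2
end

section
/- Let d ≥ 2 be an integer, θ ∈ (0,1], and let (a_n)_{n∈ℕ} be a strictly decreasing sequence of positive reals converging to 0. If updim_θ({a_n : n ∈ ℕ}) = 1, then updim_θ(C^d({a_n})) = d; likewise, if lodim_θ({a_n : n ∈ ℕ}) = 1, then lodim_θ(C^d({a_n})) = d. -/
open Set Metric Filter

open MeasureTheory

lemma myTsum_image_le {ι β : Type*} (V : ι → β) (s : Set ι) (g : β → ENNReal) :
    ∑' W : ↑(V '' s), g W ≤ ∑' i : ↑s, g (V (i : ι)) := by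
  have hsec : ∀ W : ↑(V '' s), ∃ i : ↑s, V i = (W : β) := by
    rintro ⟨W, i, hi, rfl⟩; exact ⟨⟨i, hi⟩, rfl⟩
  choose j hj using hsec
  have hinj : Function.Injective j := by
    intro W₁ W₂ h
    apply Subtype.ext
    rw [← hj W₁, ← hj W₂, h]
  calc ∑' W : ↑(V '' s), g W = ∑' W : ↑(V '' s), (fun i : ↑s => g (V i)) (j W) := by
        refine tsum_congr fun W => ?_
        simp only []
        rw [hj W]
    _ ≤ _ := ENNReal.tsum_comp_le_tsum_of_injective hinj _

lemma myTsum_union_le {β : Type*} (A B : Set β) (g : β → ENNReal) :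
    ∑' W : ↑(A ∪ B), g W ≤ ∑' W : ↑A, g W + ∑' W : ↑B, g W := by
  rw [tsum_subtype, tsum_subtype, tsum_subtype, ← ENNReal.tsum_add]
  refine Summable.tsum_le_tsum (fun x => ?_) ENNReal.summable ENNReal.summable
  by_cases hA : x ∈ A
  · have : x ∈ A ∪ B := Or.inl hA
    simp only [Set.indicator_of_mem this, Set.indicator_of_mem hA]
    exact le_self_add
  · by_cases hB : x ∈ B
    · have : x ∈ A ∪ B := Or.inr hB
      simp only [Set.indicator_of_mem this, Set.indicator_of_mem hB,
        Set.indicator_of_notMem hA]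
      exact le_add_self
    · have : x ∉ A ∪ B := fun h => h.elim hA hB
      simp [Set.indicator_of_notMem this]

lemma mySphere (m : ℕ) (a : ℝ) (ha : 0 < a)
    (𝒰 : Set (Set (EuclideanSpace ℝ (Fin (m+1))))) (hc : 𝒰.Countable)
    (hcov : sphere (0 : EuclideanSpace ℝ (Fin (m+1))) a ⊆ ⋃₀ 𝒰)
    (hbd : ∀ U ∈ 𝒰, Bornology.IsBounded U) :
    ENNReal.ofReal (a ^ m) ≤ ∑' U : 𝒰, ENNReal.ofReal (diam (U : Set (EuclideanSpace ℝ (Fin (m+1)))) ^ m) := by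
  haveI := hc.to_subtype
  set p : EuclideanSpace ℝ (Fin (m+1)) → EuclideanSpace ℝ (Fin m) :=
    fun x => WithLp.toLp 2 (fun i => x (Fin.castSucc i)) with hp
  have hlip : ∀ x y, dist (p x) (p y) ≤ dist x y := by
    intro x y
    rw [EuclideanSpace.dist_eq, EuclideanSpace.dist_eq]
    apply Real.sqrt_le_sqrt
    rw [Fin.sum_univ_castSucc (f := fun j => dist (x j) (y j) ^ 2)]
    exact le_add_of_nonneg_right (sq_nonneg _)
  have hsurj : ∀ y : EuclideanSpace ℝ (Fin m), ‖y‖ ≤ a → ∃ x, ‖x‖ = a ∧ p x = y := by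
    intro y hy
    set c := Real.sqrt (a^2 - ‖y‖^2) with hcdef
    have hc2 : c^2 = a^2 - ‖y‖^2 :=
      Real.sq_sqrt (by nlinarith [norm_nonneg y])
    have hSy : ∑ i, ‖y i‖^2 = ‖y‖^2 := by
      rw [EuclideanSpace.norm_eq, Real.sq_sqrt (Finset.sum_nonneg fun i _ => sq_nonneg _)]
    refine ⟨WithLp.toLp 2 (Fin.snoc (α := fun _ => ℝ) y.ofLp c), ?_, ?_⟩
    · have hx : ∑ j, ‖(WithLp.toLp 2 (Fin.snoc (α := fun _ => ℝ) y.ofLp c) : EuclideanSpace ℝ (Fin (m+1))) j‖^2 = a^2 := by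
        rw [Fin.sum_univ_castSucc (f := fun j => ‖(WithLp.toLp 2 (Fin.snoc (α := fun _ => ℝ) y.ofLp c) : EuclideanSpace ℝ (Fin (m+1))) j‖^2)]
        have h1 : ∀ i : Fin m, (WithLp.toLp 2 (Fin.snoc (α := fun _ => ℝ) y.ofLp c) : EuclideanSpace ℝ (Fin (m+1))) i.castSucc = y i :=
          fun i => Fin.snoc_castSucc (α := fun _ => ℝ) c y.ofLp i
        have h2 : (WithLp.toLp 2 (Fin.snoc (α := fun _ => ℝ) y.ofLp c) : EuclideanSpace ℝ (Fin (m+1))) (Fin.last m) = c :=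
          Fin.snoc_last (α := fun _ => ℝ) c y.ofLp
        rw [h2]
        have : ∑ i : Fin m, ‖(WithLp.toLp 2 (Fin.snoc (α := fun _ => ℝ) y.ofLp c) : EuclideanSpace ℝ (Fin (m+1))) i.castSucc‖^2
            = ∑ i : Fin m, ‖y i‖^2 := Finset.sum_congr rfl fun i _ => by rw [h1]
        rw [this, hSy]
        have : ‖c‖^2 = c^2 := by rw [Real.norm_eq_abs, sq_abs]
        rw [this, hc2]; ring
      rw [EuclideanSpace.norm_eq, hx, Real.sqrt_sq ha.le]
    · ext i
      exact Fin.snoc_castSucc (α := fun _ => ℝ) c y.ofLp i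
  have hz : ∀ U : 𝒰, ∃ zc : EuclideanSpace ℝ (Fin m),
      ∀ x ∈ (U : Set (EuclideanSpace ℝ (Fin (m+1)))), p x ∈ closedBall zc (diam (U : Set (EuclideanSpace ℝ (Fin (m+1))))) := by
    intro U
    by_cases h : (U : Set (EuclideanSpace ℝ (Fin (m+1)))).Nonempty
    · obtain ⟨u, hu⟩ := h
      refine ⟨p u, fun x hx => ?_⟩
      rw [mem_closedBall]
      exact (hlip x u).trans (dist_le_diam_of_mem (hbd _ U.2) hx hu)
    · exact ⟨0, fun x hx => absurd ⟨x, hx⟩ h⟩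
  choose z hzz using hz
  have hcov2 : closedBall (0 : EuclideanSpace ℝ (Fin m)) a ⊆
      ⋃ U : 𝒰, closedBall (z U) (diam (U : Set (EuclideanSpace ℝ (Fin (m+1))))) := by
    intro y hy
    have hy' : ‖y‖ ≤ a := by simpa using mem_closedBall_zero_iff.mp hy
    obtain ⟨x, hxa, hpx⟩ := hsurj y hy'
    obtain ⟨U, hU, hxU⟩ := hcov (by simpa [mem_sphere_zero_iff_norm] using hxa)
    exact mem_iUnion.mpr ⟨⟨U, hU⟩, hpx ▸ hzz ⟨U, hU⟩ x hxU⟩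
  have hμ : volume (closedBall (0 : EuclideanSpace ℝ (Fin m)) a) ≤
      ∑' U : 𝒰, volume (closedBall (z U) (diam (U : Set (EuclideanSpace ℝ (Fin (m+1)))))) :=
    (measure_mono hcov2).trans (measure_iUnion_le _)
  rw [Measure.addHaar_closedBall _ _ ha.le] at hμ
  have hterm : ∀ U : 𝒰, volume (closedBall (z U) (diam (U : Set (EuclideanSpace ℝ (Fin (m+1))))))
      = ENNReal.ofReal (diam (U : Set (EuclideanSpace ℝ (Fin (m+1)))) ^ m) * volume (ball (0 : EuclideanSpace ℝ (Fin m)) 1) := by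
    intro U
    rw [Measure.addHaar_closedBall _ _ diam_nonneg, finrank_euclideanSpace_fin]
  rw [tsum_congr hterm, ENNReal.tsum_mul_right, finrank_euclideanSpace_fin] at hμ
  exact (ENNReal.mul_le_mul_iff_left (measure_ball_pos volume 0 one_pos).ne' measure_ball_lt_top.ne).mp hμ



lemma myTendsto1 (p : ℝ) (hp : 0 < p) :
    Tendsto (fun δ : ℝ => δ ^ p) (nhdsWithin 0 (Ioi 0)) (nhds 0) := by
  have h := (Real.continuousAt_rpow_const 0 p (Or.inr hp.le)).tendsto
  rw [Real.zero_rpow hp.ne'] at h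
  exact h.mono_left nhdsWithin_le_nhds

lemma myTendstoLog (p : ℝ) (hp : 0 < p) :
    Tendsto (fun δ : ℝ => (Real.logb 2 (1/δ) + 1) * δ ^ p) (nhdsWithin 0 (Ioi 0)) (nhds 0) := by
  have h1 := tendsto_log_mul_rpow_nhdsGT_zero hp
  have h2 := myTendsto1 p hp
  have h3 := (h1.const_mul (-(Real.log 2)⁻¹)).add h2
  rw [mul_zero, zero_add] at h3
  refine h3.congr fun δ => ?_
  simp only [Real.logb, one_div, Real.log_inv]
  have hl2 : Real.log 2 ≠ 0 := by
    have := Real.log_pos (by norm_num : (1:ℝ) < 2)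
    exact this.ne'
  field_simp

lemma myEventually (g : ℝ → ℝ) (hg : Tendsto g (nhdsWithin 0 (Ioi 0)) (nhds 0))
    (ε : ℝ) (hε : 0 < ε) :
    ∃ δ₀ : ℝ, 0 < δ₀ ∧ δ₀ ≤ 1 ∧ ∀ δ, 0 < δ → δ < δ₀ → g δ ≤ ε := by
  have h1 : {x : ℝ | g x ≤ ε} ∈ nhdsWithin 0 (Ioi 0) := hg (Iic_mem_nhds hε)
  rw [mem_nhdsGT_iff_exists_Ioo_subset] at h1
  obtain ⟨u, hu, hsub⟩ := h1
  exact ⟨min u 1, lt_min hu one_pos, min_le_right _ _,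
    fun δ h1' h2' => hsub ⟨h1', h2'.trans_le (min_le_left _ _)⟩⟩


lemma myUpperCover (m : ℕ) (θ : ℝ) (hθ : 0 < θ) (hθ' : θ ≤ 1) (a : ℕ → ℝ)
    (ha : StrictAnti a) (u : ℝ) (hu : ((m:ℝ)+1) < u) (ε : ℝ) (hε : 0 < ε) :
    ∃ δ₀ : ℝ, 0 < δ₀ ∧ δ₀ ≤ 1 ∧ ∀ δ : ℝ, 0 < δ → δ < δ₀ →
      ∃ 𝒰 : Set (Set (EuclideanSpace ℝ (Fin (m+1)))), 𝒰.Countable ∧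
        concentricSeq (m+1) a ⊆ ⋃₀ 𝒰 ∧
        (∀ U ∈ 𝒰, δ ≤ diam U ∧ diam U ≤ δ ^ θ) ∧
        ∑' U : 𝒰, ENNReal.ofReal (diam (U : Set (EuclideanSpace ℝ (Fin (m+1)))) ^ u)
          ≤ ENNReal.ofReal ε := by
  set d : ℕ := m + 1 with hd
  have hd1 : 1 ≤ (d:ℝ) := by exact_mod_cast Nat.one_le_iff_ne_zero.mpr (by omega)
  set a0 : ℝ := |a 0| + 1 with ha0
  have ha0pos : 0 < a0 := by positivity
  set A : ℝ := 2*a0 + 5 with hA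
  have hApos : 0 < A := by positivity
  set B : ℝ := ((2*(d:ℝ))*A)^d with hB
  have hp : 0 < θ * (u - (d:ℝ)) := by
    apply mul_pos hθ
    have : ((d:ℕ):ℝ) = (m:ℝ)+1 := by push_cast [hd]; ring
    linarith [hu, this]
  obtain ⟨δ₀, hδ₀pos, hδ₀le, hδ₀⟩ :=
    myEventually (fun δ => B * δ ^ (θ*(u-(d:ℝ))))
      (by simpa using (myTendsto1 _ hp).const_mul B) ε hε
  refine ⟨δ₀, hδ₀pos, hδ₀le, fun δ hδpos hδlt => ?_⟩
  have hδ1 : δ < 1 := lt_of_lt_of_le hδlt hδ₀le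
  set Δ : ℝ := δ ^ θ with hΔ
  have hΔ0 : 0 < Δ := Real.rpow_pos_of_pos hδpos θ
  have hΔ1 : Δ ≤ 1 := Real.rpow_le_one hδpos.le hδ1.le hθ.le
  have hδΔ : δ ≤ Δ := by
    have := Real.rpow_le_rpow_of_exponent_ge hδpos hδ1.le hθ'
    rwa [Real.rpow_one] at this
  set h : ℝ := Δ / (2*(d:ℝ)) with hh
  have hh0 : 0 < h := by positivity
  have hh1 : h ≤ 1 := by
    rw [hh, div_le_one (by positivity)]
    nlinarith
  set M : ℕ := ⌈a0/h⌉₊ + 1 with hM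
  set ctr : (Fin d → ℤ) → EuclideanSpace ℝ (Fin d) := fun i => WithLp.toLp 2 (fun j => (i j : ℝ) * h) with hctr
  set V : (Fin d → ℤ) → Set (EuclideanSpace ℝ (Fin d)) := fun i => closedBall (ctr i) (Δ/2)
    with hV
  set F : Finset (Fin d → ℤ) := Fintype.piFinset (fun _ => Finset.Icc (-(M:ℤ)) (M:ℤ)) with hF
  have hdiam : ∀ i, diam (V i) = Δ := by
    intro i
    apply le_antisymm
    · have := diam_closedBall (x := ctr i) (show (0:ℝ) ≤ Δ/2 by positivity)
      linarith
    · set e : EuclideanSpace ℝ (Fin d) := EuclideanSpace.single (0 : Fin d) (Δ/2) with he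
      have hne : ‖e‖ = Δ/2 := by
        rw [he, EuclideanSpace.norm_single, Real.norm_eq_abs, abs_of_pos (by positivity)]
      have h1 : ctr i + e ∈ V i := by
        rw [hV, mem_closedBall]
        simp only [dist_self_add_left]
        rw [hne]
      have h2 : ctr i - e ∈ V i := by
        rw [hV, mem_closedBall]
        simp only [dist_self_sub_left]
        rw [hne]
      have h3 : dist (ctr i + e) (ctr i - e) = Δ := by
        rw [dist_eq_norm]
        have : (ctr i + e) - (ctr i - e) = e + e := by abel
        rw [this]
        calc ‖e + e‖ = ‖(2:ℝ) • e‖ := by rw [two_smul]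
          _ = 2 * ‖e‖ := by rw [norm_smul]; simp
          _ = Δ := by rw [hne]; ring
      calc Δ = dist (ctr i + e) (ctr i - e) := h3.symm
        _ ≤ diam (V i) := dist_le_diam_of_mem isBounded_closedBall h1 h2
  refine ⟨V '' (↑F), (F.countable_toSet).image _, ?_, ?_, ?_⟩
  · -- cover
    rintro x ⟨n, hn⟩
    have hx0 : ‖x‖ ≤ a0 := by
      rw [hn]
      have h1 : a n ≤ a 0 := ha.antitone (Nat.zero_le n)
      have h2 : a 0 ≤ |a 0| := le_abs_self _
      rw [ha0]; linarith
    have hxj : ∀ j, |x j| ≤ a0 := by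
      intro j
      have h1 : (x j)^2 ≤ ∑ k, ‖x k‖^2 := by
        have := Finset.single_le_sum (f := fun k => ‖x k‖^2)
          (fun k _ => sq_nonneg _) (Finset.mem_univ j)
        simpa [Real.norm_eq_abs, sq_abs] using this
      have h2 : |x j| ≤ ‖x‖ := by
        rw [EuclideanSpace.norm_eq]
        rw [← Real.sqrt_sq_eq_abs]
        exact Real.sqrt_le_sqrt h1
      linarith
    set i : Fin d → ℤ := fun j => ⌊x j / h⌋ with hi

    have hiF : i ∈ F := by
      rw [hF, Fintype.mem_piFinset]
      intro j
      rw [Finset.mem_Icc]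
      have h6 : ((⌊x j / h⌋ : ℤ) : ℝ) ≤ x j / h := Int.floor_le _
      have h1 : x j / h - 1 < ((⌊x j / h⌋ : ℤ) : ℝ) := Int.sub_one_lt_floor _
      have h7 : x j / h ≤ a0 / h := (div_le_div_iff_of_pos_right hh0).mpr (le_of_abs_le (hxj j))
      have h2 : -(a0/h) ≤ x j / h := by
        have := (div_le_div_iff_of_pos_right hh0).mpr (neg_le_of_abs_le (hxj j))
        rwa [neg_div] at this
      have h8 : a0/h ≤ (⌈a0/h⌉₊ : ℝ) := Nat.le_ceil _
      constructor
      · have h4 : (-(M:ℤ) : ℝ) ≤ ((⌊x j / h⌋ : ℤ) : ℝ) := by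
          push_cast [hM]
          push_cast at h8
          linarith
        exact_mod_cast h4
      · have h5 : ((⌊x j / h⌋ : ℤ) : ℝ) ≤ ((M:ℤ) : ℝ) := by
          push_cast [hM]
          linarith
        exact_mod_cast h5
    refine ⟨V i, mem_image_of_mem V (Finset.mem_coe.mpr hiF), ?_⟩
    rw [hV, mem_closedBall, EuclideanSpace.dist_eq]
    have hco : ∀ j, dist (x j) (ctr i j) ^ 2 ≤ h^2 := by
      intro j
      have hfl1 : ((i j : ℤ):ℝ) * h ≤ x j := by
        simp only [hi]
        have h6 := Int.floor_le (x j / h)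
        calc ((⌊x j/h⌋ : ℤ):ℝ) * h ≤ (x j / h) * h :=
              mul_le_mul_of_nonneg_right h6 hh0.le
          _ = x j := by field_simp
      have hfl2 : x j ≤ ((i j : ℤ):ℝ) * h + h := by
        simp only [hi]
        have h6 := (Int.lt_floor_add_one (x j / h)).le
        calc x j = (x j / h) * h := by field_simp
          _ ≤ (((⌊x j/h⌋ : ℤ):ℝ) + 1) * h := mul_le_mul_of_nonneg_right h6 hh0.le
          _ = ((⌊x j/h⌋ : ℤ):ℝ) * h + h := by ring
      have hdd : dist (x j) (ctr i j) ≤ h := by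
        rw [hctr, Real.dist_eq, abs_le]
        constructor
        · simp only [PiLp.toLp_apply]
          linarith
        · simp only [PiLp.toLp_apply]
          linarith
      have := pow_le_pow_left₀ dist_nonneg hdd 2
      exact this
    have hsum : ∑ j, dist (x j) (ctr i j)^2 ≤ (d:ℝ)*h^2 := by
      have h1 : ∑ j, dist (x j) (ctr i j)^2 ≤ ∑ _j : Fin d, h^2 :=
        Finset.sum_le_sum (fun j _ => hco j)
      have h2 : ∑ _j : Fin d, (h^2 : ℝ) = (d:ℝ)*h^2 := by
        rw [Finset.sum_const, Finset.card_univ, Fintype.card_fin, nsmul_eq_mul]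
      linarith
    have hd2 : (d:ℝ)*h^2 ≤ (Δ/2)^2 := by
      have e1 : (d:ℝ) * h^2 = Δ^2/(4*(d:ℝ)) := by
        rw [hh]
        field_simp
        ring
      have e2 : (Δ/2)^2 = Δ^2/4 := by ring
      rw [e1, e2]
      exact div_le_div_of_nonneg_left (sq_nonneg Δ) (by norm_num) (by nlinarith [hd1])
    have hlast : Real.sqrt (∑ j, dist (x j) (ctr i j)^2) ≤ Δ/2 := by
      have h3 := Real.sqrt_le_sqrt (hsum.trans hd2)
      rwa [Real.sqrt_sq (by positivity : (0:ℝ) ≤ Δ/2)] at h3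
    exact hlast
  · -- diam bounds
    rintro U ⟨i, _, rfl⟩
    rw [hdiam i]
    exact ⟨hδΔ, le_refl _⟩
  · -- cost
    have hcard : F.card = (2*M+1)^d := by
      rw [hF, Fintype.card_piFinset]
      have : (Finset.Icc (-(M:ℤ)) (M:ℤ)).card = 2*M+1 := by
        rw [Int.card_Icc]
        have : (M:ℤ) + 1 - (-(M:ℤ)) = ((2*M+1 : ℕ) : ℤ) := by push_cast; ring
        rw [this, Int.toNat_natCast]
      simp [this]
    calc ∑' U : ↑(V '' (↑F : Set (Fin d → ℤ))),
          ENNReal.ofReal (diam (U : Set (EuclideanSpace ℝ (Fin d))) ^ u)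
        ≤ ∑' i : (↑F : Set (Fin d → ℤ)),
            ENNReal.ofReal (diam (V (i : Fin d → ℤ)) ^ u) :=
          myTsum_image_le V (↑F) (fun W => ENNReal.ofReal (diam W ^ u))
      _ = ∑' i : (↑F : Set (Fin d → ℤ)), ENNReal.ofReal (Δ ^ u) :=
          tsum_congr (fun i => by rw [hdiam i.1])
      _ = ∑' i : (Fin d → ℤ),
            Set.indicator (↑F) (fun _ => ENNReal.ofReal (Δ ^ u)) i :=
          tsum_subtype (↑F : Set (Fin d → ℤ)) (fun _ => ENNReal.ofReal (Δ ^ u))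
      _ = ∑ i ∈ F, Set.indicator (↑F) (fun _ => ENNReal.ofReal (Δ ^ u)) i :=
          tsum_eq_sum (fun i hi => Set.indicator_of_notMem (by simpa using hi) _)
      _ ≤ F.card • ENNReal.ofReal (Δ ^ u) :=
          Finset.sum_le_card_nsmul _ _ _
            (fun i hi => by rw [Set.indicator_of_mem (by simpa using hi)])
      _ = ENNReal.ofReal ((F.card : ℝ) * Δ ^ u) := by
          rw [nsmul_eq_mul, ← ENNReal.ofReal_natCast F.card,
            ← ENNReal.ofReal_mul (Nat.cast_nonneg _)]
      _ ≤ ENNReal.ofReal ε := by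
          apply ENNReal.ofReal_le_ofReal
          have h2M : ((2*M+1 : ℕ):ℝ) ≤ A/h := by
            have h8 : ((⌈a0/h⌉₊:ℕ) : ℝ) < a0/h + 1 := Nat.ceil_lt_add_one (by positivity)
            have h9 : (5:ℝ) ≤ 5/h := by
              calc (5:ℝ) = 5/1 := by norm_num
                _ ≤ 5/h := div_le_div_of_nonneg_left (by norm_num) hh0 hh1
            have h10 : A/h = 2*a0/h + 5/h := by rw [hA]; ring
            push_cast [hM]
            rw [h10]
            have h11 : 2*(a0/h) = 2*a0/h := by ring
            linarith [h11]
          have hmono : ((F.card : ℝ)) ≤ (A/h)^d := by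
            rw [hcard]
            push_cast
            apply pow_le_pow_left₀ (by positivity)
            push_cast at h2M ⊢
            exact h2M
          have hident : (A/h)^d * Δ^u = B * δ^(θ*(u-(d:ℝ))) := by
            have key : Δ^u / (Δ:ℝ)^(d:ℕ) = δ^(θ*(u-(d:ℝ))) := by
              rw [← Real.rpow_natCast Δ d, ← Real.rpow_sub hΔ0]
              rw [hΔ, ← Real.rpow_mul hδpos.le]
            rw [hh, div_div_eq_mul_div, div_pow, div_mul_eq_mul_div, mul_div_assoc, key, hB]
            ring_nf
          have hfinal := hδ₀ δ hδpos hδlt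
          have hΔu : 0 ≤ Δ^u := (Real.rpow_pos_of_pos hΔ0 u).le
          calc (F.card : ℝ) * Δ^u ≤ (A/h)^d * Δ^u := by
                apply mul_le_mul_of_nonneg_right hmono hΔu
            _ = B * δ^(θ*(u-(d:ℝ))) := hident
            _ ≤ ε := hfinal


set_option maxHeartbeats 1000000 in
lemma myCore (m : ℕ) (hm : 1 ≤ m) (θ : ℝ) (hθ : 0 < θ) (hθ' : θ ≤ 1) (a : ℕ → ℝ)
    (hapos : ∀ n, 0 < a n)
    (s t c : ℝ) (hs : 0 ≤ s) (ht0 : 0 < t) (ht1 : t ≤ 1)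
    (hc0 : 0 < c) (hc1 : c ≤ 1)
    (hα₁ : 0 < t + c - 1) (hη : 0 ≤ t + (m:ℝ) - s) (hα₂ : 0 < (t + (m:ℝ) - s) - c * (m:ℝ)) :
    ∀ ε' : ℝ, 0 < ε' →
    ∃ δ₁ : ℝ, 0 < δ₁ ∧ δ₁ ≤ 1 ∧ ∀ δ : ℝ, 0 < δ → δ < δ₁ →
      ∀ 𝒰 : Set (Set (EuclideanSpace ℝ (Fin (m+1)))), 𝒰.Countable →
        concentricSeq (m+1) a ⊆ ⋃₀ 𝒰 →
        (∀ U ∈ 𝒰, δ ≤ diam U ∧ diam U ≤ δ ^ θ) →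
        (∑' U : 𝒰, ENNReal.ofReal (diam (U : Set (EuclideanSpace ℝ (Fin (m+1)))) ^ s)
          ≤ ENNReal.ofReal 1) →
        ∃ 𝒱 : Set (Set ℝ), 𝒱.Countable ∧ Set.range a ⊆ ⋃₀ 𝒱 ∧
          (∀ V ∈ 𝒱, δ ≤ diam V ∧ diam V ≤ δ ^ θ) ∧
          ∑' V : 𝒱, ENNReal.ofReal (diam (V : Set ℝ) ^ t) ≤ ENNReal.ofReal ε' := by
  classical
  intro ε' hε'
  set α₁ : ℝ := θ*(t+c-1) with hα₁def
  set α₂ : ℝ := θ*((t + (m:ℝ) - s) - c * (m:ℝ)) with hα₂def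
  have hα₁pos : 0 < α₁ := mul_pos hθ hα₁
  have hα₂pos : 0 < α₂ := mul_pos hθ hα₂
  set G : ℝ → ℝ := fun δ => 2*δ^α₁ + 16*((Real.logb 2 (1/δ) + 1) * δ^α₂) with hG
  have hGt : Tendsto G (nhdsWithin 0 (Ioi 0)) (nhds 0) := by
    have h1 := (myTendsto1 α₁ hα₁pos).const_mul (2:ℝ)
    have h2 := (myTendstoLog α₂ hα₂pos).const_mul (16:ℝ)
    have h3 := h1.add h2
    rw [show (2:ℝ)*0 + 16*0 = 0 by norm_num] at h3
    rw [hG]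
    exact h3
  obtain ⟨δ₁, hδ₁pos, hδ₁le, hδ₁⟩ := myEventually G hGt ε' hε'
  refine ⟨δ₁, hδ₁pos, hδ₁le, ?_⟩
  intro δ hδpos hδlt 𝒰 hcount hcover hdiams hsum
  haveI := hcount.to_subtype
  have hδ1 : δ < 1 := lt_of_lt_of_le hδlt hδ₁le
  set Δ : ℝ := δ ^ θ with hΔdef
  have hΔ0 : 0 < Δ := Real.rpow_pos_of_pos hδpos θ
  have hΔ1 : Δ ≤ 1 := Real.rpow_le_one hδpos.le hδ1.le hθ.le
  have hδΔ : δ ≤ Δ := by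
    have := Real.rpow_le_rpow_of_exponent_ge hδpos hδ1.le hθ'
    rwa [Real.rpow_one] at this
  -- basic facts about members of 𝒰
  have hbdd : ∀ U ∈ 𝒰, Bornology.IsBounded U := by
    intro U hU
    by_contra hb
    have h1 := diam_eq_zero_of_unbounded hb
    have h2 := (hdiams U hU).1
    linarith
  have hne : ∀ U ∈ 𝒰, (U : Set (EuclideanSpace ℝ (Fin (m+1)))).Nonempty := by
    intro U hU
    rcases Set.eq_empty_or_nonempty U with h | h
    · exfalso
      have h2 := (hdiams U hU).1
      rw [h, diam_empty] at h2
      linarith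
    · exact h
  have hptex := fun U : 𝒰 => hne U U.2
  choose pt hpt using hptex
  set r : ↑𝒰 → ℝ := fun U => diam (U : Set (EuclideanSpace ℝ (Fin (m+1)))) with hrdef
  have hr1 : ∀ U : ↑𝒰, δ ≤ r U := fun U => (hdiams U U.2).1
  have hr2 : ∀ U : ↑𝒰, r U ≤ Δ := fun U => (hdiams U U.2).2
  have hr0 : ∀ U : ↑𝒰, 0 < r U := fun U => lt_of_lt_of_le hδpos (hr1 U)
  set b : ↑𝒰 → ℝ := fun U => ‖pt U‖ with hbdef
  set R : ℝ := Δ ^ c with hRdef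
  have hR0 : 0 < R := Real.rpow_pos_of_pos hΔ0 c
  have hRΔ : Δ ≤ R := by
    have := Real.rpow_le_rpow_of_exponent_ge hΔ0 hΔ1 hc1
    rwa [Real.rpow_one] at this
  have hR1 : R ≤ 1 := Real.rpow_le_one hΔ0.le hΔ1 hc0.le
  set K : ℕ := ⌊Real.logb 2 (Δ/δ)⌋₊ + 1 with hKdef
  have hΔδ1 : 1 ≤ Δ/δ := (one_le_div hδpos).mpr hδΔ
  have hlogb0 : 0 ≤ Real.logb 2 (Δ/δ) := Real.logb_nonneg (by norm_num) hΔδ1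
  have hK1 : 1 ≤ K := Nat.le_add_left 1 _
  have hK2 : Δ/δ < 2^K := by
    have h1 : Real.logb 2 (Δ/δ) < (K:ℝ) := by
      rw [hKdef]
      push_cast
      exact Nat.lt_floor_add_one _
    have h2 : (2:ℝ) ^ Real.logb 2 (Δ/δ) < (2:ℝ)^(K:ℝ) :=
      (Real.rpow_lt_rpow_left_iff (by norm_num)).mpr h1
    rw [Real.rpow_logb (by norm_num) (by norm_num) (by positivity), Real.rpow_natCast] at h2
    exact h2
  have hK3 : (2:ℝ)^(K-1 : ℕ) ≤ Δ/δ := by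
    have he : (K - 1 : ℕ) = ⌊Real.logb 2 (Δ/δ)⌋₊ := by omega
    have h1 : ((⌊Real.logb 2 (Δ/δ)⌋₊ : ℕ):ℝ) ≤ Real.logb 2 (Δ/δ) := Nat.floor_le hlogb0
    have h2 : (2:ℝ) ^ ((⌊Real.logb 2 (Δ/δ)⌋₊ : ℕ):ℝ) ≤ (2:ℝ) ^ Real.logb 2 (Δ/δ) :=
      Real.rpow_le_rpow_of_exponent_le (by norm_num) h1
    rw [Real.rpow_logb (by norm_num) (by norm_num) (by positivity), Real.rpow_natCast] at h2
    rw [he]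
    exact h2
  set lam : ℕ → ℝ := fun ℓ => Δ / 2^ℓ with hlamdef
  have hlam0 : ∀ ℓ, 0 < lam ℓ := fun ℓ => by positivity
  have hlamD : ∀ ℓ, lam ℓ ≤ Δ := by
    intro ℓ
    apply div_le_self hΔ0.le
    exact one_le_pow₀ (by norm_num)
  have hlamd : ∀ ℓ, ℓ < K → δ ≤ lam ℓ := by
    intro ℓ hℓ
    have h1 : (2:ℝ)^ℓ ≤ (2:ℝ)^(K-1:ℕ) := by
      apply pow_le_pow_right₀ (by norm_num)
      omega
    have h2 : (2:ℝ)^ℓ ≤ Δ/δ := h1.trans hK3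
    show δ ≤ Δ / 2^ℓ
    rw [le_div_iff₀ (by positivity : (0:ℝ) < 2^ℓ)]
    rw [le_div_iff₀ hδpos] at h2
    rw [mul_comm]
    exact h2
  -- buckets
  have hbucket_ex : ∀ U : ↑𝒰, ∃ ℓ, ℓ < K ∧ (Δ/2^(ℓ+1) < r U ∧ r U ≤ Δ/2^ℓ) := by
    intro U
    set y : ℝ := Δ / r U with hy
    have hy0 : 0 < y := div_pos hΔ0 (hr0 U)
    have hy1 : 1 ≤ y := (one_le_div (hr0 U)).mpr (hr2 U)
    have hy2 : y ≤ Δ/δ := div_le_div_of_nonneg_left hΔ0.le hδpos (hr1 U)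
    have hx0 : 0 ≤ Real.logb 2 y := Real.logb_nonneg (by norm_num) hy1
    refine ⟨⌊Real.logb 2 y⌋₊, ?_, ?_, ?_⟩
    · -- ℓ < K
      have h1 : (2:ℝ)^(⌊Real.logb 2 y⌋₊:ℕ) ≤ y := by
        have h2 : ((⌊Real.logb 2 y⌋₊:ℕ):ℝ) ≤ Real.logb 2 y := Nat.floor_le hx0
        have h3 := Real.rpow_le_rpow_of_exponent_le (by norm_num : (1:ℝ) ≤ 2) h2
        rwa [Real.rpow_logb (by norm_num) (by norm_num) hy0, Real.rpow_natCast] at h3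
      have h4 : (2:ℝ)^(⌊Real.logb 2 y⌋₊:ℕ) < 2^K := lt_of_le_of_lt (h1.trans hy2) hK2
      exact pow_lt_pow_iff_right₀ (by norm_num : (1:ℝ) < 2) |>.mp h4
    · -- Δ/2^(ℓ+1) < r U
      have h5 : y < (2:ℝ)^(⌊Real.logb 2 y⌋₊ + 1 : ℕ) := by
        have h6 : Real.logb 2 y < ((⌊Real.logb 2 y⌋₊ + 1 : ℕ):ℝ) := by
          push_cast
          exact Nat.lt_floor_add_one _
        have h7 := Real.rpow_lt_rpow_of_exponent_lt (by norm_num : (1:ℝ) < 2) h6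
        rwa [Real.rpow_logb (by norm_num) (by norm_num) hy0, Real.rpow_natCast] at h7
      rw [div_lt_iff₀ (hr0 U)] at h5
      rw [div_lt_iff₀ (by positivity : (0:ℝ) < 2^(⌊Real.logb 2 y⌋₊+1))]
      nlinarith [hr0 U]
    · -- r U ≤ Δ/2^ℓ
      have h1 : (2:ℝ)^(⌊Real.logb 2 y⌋₊:ℕ) ≤ y := by
        have h2 : ((⌊Real.logb 2 y⌋₊:ℕ):ℝ) ≤ Real.logb 2 y := Nat.floor_le hx0
        have h3 := Real.rpow_le_rpow_of_exponent_le (by norm_num : (1:ℝ) ≤ 2) h2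
        rwa [Real.rpow_logb (by norm_num) (by norm_num) hy0, Real.rpow_natCast] at h3
      rw [le_div_iff₀ (hr0 U)] at h1
      rw [le_div_iff₀ (by positivity : (0:ℝ) < 2^(⌊Real.logb 2 y⌋₊:ℕ))]
      nlinarith [hr0 U]
  have hbucket_mono : ∀ (U : ↑𝒰) (ℓ ℓ' : ℕ), ℓ < ℓ' →
      (Δ/2^(ℓ+1) < r U ∧ r U ≤ Δ/2^ℓ) → (Δ/2^(ℓ'+1) < r U ∧ r U ≤ Δ/2^ℓ') → False := by
    intro U ℓ ℓ' hlt h1 h2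
    have h3 : (2:ℝ)^(ℓ+1) ≤ (2:ℝ)^ℓ' := by
      apply pow_le_pow_right₀ (by norm_num)
      omega
    have h4 : Δ/2^ℓ' ≤ Δ/2^(ℓ+1) :=
      div_le_div_of_nonneg_left hΔ0.le (by positivity) h3
    linarith [h1.1, h2.2]
  have hbucket_uniq : ∀ (U : ↑𝒰) (ℓ ℓ' : ℕ),
      (Δ/2^(ℓ+1) < r U ∧ r U ≤ Δ/2^ℓ) → (Δ/2^(ℓ'+1) < r U ∧ r U ≤ Δ/2^ℓ') → ℓ = ℓ' := by
    intro U ℓ ℓ' h1 h2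
    rcases lt_trichotomy ℓ ℓ' with h | h | h
    · exact absurd (hbucket_mono U ℓ ℓ' h h1 h2) (fun x => x)
    · exact h
    · exact absurd (hbucket_mono U ℓ' ℓ h h2 h1) (fun x => x)
  set bucket : ℕ → ↑𝒰 → Prop := fun ℓ U => Δ/2^(ℓ+1) < r U ∧ r U ≤ Δ/2^ℓ with hbucketdef
  set cond : ℕ → ℕ → ↑𝒰 → Prop := fun ℓ i U =>
    bucket ℓ U ∧ (i:ℝ) * lam ℓ ≤ b U + r U ∧ b U - r U ≤ (i:ℝ) * lam ℓ + lam ℓ with hconddef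
  set ind : ℕ → ℕ → ↑𝒰 → ENNReal := fun ℓ i U =>
    if cond ℓ i U then ENNReal.ofReal (r U ^ m) else 0 with hinddef
  set W : ℕ → ℕ → ENNReal := fun ℓ i => ∑' U : ↑𝒰, ind ℓ i U with hWdef
  set T : ENNReal := ENNReal.ofReal (R^m) / ((2*K : ℕ) : ENNReal) with hTdef
  have hRm0 : (0:ℝ) < R^m := pow_pos hR0 m
  have hT0 : T ≠ 0 := by
    rw [hTdef, ENNReal.div_eq_inv_mul]
    apply mul_ne_zero
    · exact ENNReal.inv_ne_zero.mpr (ENNReal.natCast_ne_top _)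
    · exact (ENNReal.ofReal_pos.mpr hRm0).ne'
  have hTtop : T ≠ ⊤ := by
    rw [hTdef]
    refine (ENNReal.div_lt_top ENNReal.ofReal_ne_top ?_).ne
    exact_mod_cast (by omega : ¬ (2*K = 0))
  -- window fact
  have hwin : ∀ (U : ↑𝒰) (x : EuclideanSpace ℝ (Fin (m+1))),
      x ∈ (U : Set (EuclideanSpace ℝ (Fin (m+1)))) → |b U - ‖x‖| ≤ r U := by
    intro U x hx
    have h1 : dist (pt U) x ≤ r U := dist_le_diam_of_mem (hbdd U U.2) (hpt U) hx
    rw [dist_eq_norm] at h1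
    exact le_trans (abs_norm_sub_norm_le _ _) h1
  -- cell membership
  have hmemcell : ∀ (A : ℝ), 0 < A → ∀ ℓ : ℕ,
      (⌊A / lam ℓ⌋₊ : ℝ) * lam ℓ ≤ A ∧ A ≤ (⌊A / lam ℓ⌋₊:ℝ) * lam ℓ + lam ℓ := by
    intro A hA ℓ
    have hl := hlam0 ℓ
    constructor
    · have h1 : (⌊A / lam ℓ⌋₊ : ℝ) ≤ A / lam ℓ := Nat.floor_le (by positivity)
      calc (⌊A / lam ℓ⌋₊ : ℝ) * lam ℓ ≤ (A / lam ℓ) * lam ℓ :=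
            mul_le_mul_of_nonneg_right h1 hl.le
        _ = A := by field_simp
    · have h2 : A / lam ℓ ≤ (⌊A / lam ℓ⌋₊ : ℝ) + 1 := (Nat.lt_floor_add_one _).le
      calc A = (A / lam ℓ) * lam ℓ := by field_simp
        _ ≤ ((⌊A / lam ℓ⌋₊:ℝ) + 1) * lam ℓ := mul_le_mul_of_nonneg_right h2 hl.le
        _ = (⌊A / lam ℓ⌋₊:ℝ) * lam ℓ + lam ℓ := by ring
  -- key selection
  have hkey : ∀ n : ℕ, R < a n → ∃ ℓ, ℓ < K ∧ T ≤ W ℓ (⌊a n / lam ℓ⌋₊) := by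
    intro n hRn
    have hA0 : 0 < a n := hapos n
    by_contra hcon
    push_neg at hcon
    have hW : ∀ ℓ, ℓ < K → W ℓ (⌊a n / lam ℓ⌋₊) < T := by
      intro ℓ hℓ
      exact hcon ℓ hℓ
    set 𝒰' : Set (Set (EuclideanSpace ℝ (Fin (m+1)))) :=
      {U | U ∈ 𝒰 ∧ ((U ∩ sphere (0:EuclideanSpace ℝ (Fin (m+1))) (a n)).Nonempty)} with h𝒰'def
    have h𝒰'c : 𝒰'.Countable := hcount.mono (fun U hU => hU.1)
    have h𝒰'cov : sphere (0:EuclideanSpace ℝ (Fin (m+1))) (a n) ⊆ ⋃₀ 𝒰' := by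
      intro x hx
      obtain ⟨U, hU, hxU⟩ := hcover ⟨n, mem_sphere_zero_iff_norm.mp hx⟩
      exact ⟨U, ⟨hU, ⟨x, hxU, hx⟩⟩, hxU⟩
    have h𝒰'bd : ∀ U ∈ 𝒰', Bornology.IsBounded U := fun U hU => hbdd U hU.1
    have hlow := mySphere m (a n) hA0 𝒰' h𝒰'c h𝒰'cov h𝒰'bd
    set g : ↑𝒰 → ENNReal := fun U =>
      if ((U : Set (EuclideanSpace ℝ (Fin (m+1)))) ∩
          sphere (0:EuclideanSpace ℝ (Fin (m+1))) (a n)).Nonempty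
      then ENNReal.ofReal (r U ^ m) else 0 with hgdef
    have hinj2 : ∑' U : ↑𝒰', ENNReal.ofReal (diam (U:Set (EuclideanSpace ℝ (Fin (m+1)))) ^ m)
        ≤ ∑' U : ↑𝒰, g U := by
      set j : ↑𝒰' → ↑𝒰 := fun U => ⟨U, U.2.1⟩ with hjdef
      have hjinj : Function.Injective j := by
        intro U1 U2 h
        have h2 := congrArg (Subtype.val : ↑𝒰 → Set (EuclideanSpace ℝ (Fin (m+1)))) h
        exact Subtype.ext h2
      have he : ∀ U : ↑𝒰', ENNReal.ofReal (diam (U:Set (EuclideanSpace ℝ (Fin (m+1))))^m)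
          = g (j U) := by
        intro U
        rw [hgdef]
        simp only [hjdef]
        rw [if_pos U.2.2]
      rw [tsum_congr he]
      exact ENNReal.tsum_comp_le_tsum_of_injective hjinj g
    have hsplit : ∀ U : ↑𝒰, g U ≤ ∑ ℓ ∈ Finset.range K, ind ℓ (⌊a n / lam ℓ⌋₊) U := by
      intro U
      by_cases hne2 : ((U : Set (EuclideanSpace ℝ (Fin (m+1)))) ∩
          sphere (0:EuclideanSpace ℝ (Fin (m+1))) (a n)).Nonempty
      · obtain ⟨ℓ₀, hℓ₀K, hbℓ₀⟩ := hbucket_ex U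
        have hcond : cond ℓ₀ (⌊a n / lam ℓ₀⌋₊) U := by
          obtain ⟨x, hxU, hxs⟩ := hne2
          have hxn : ‖x‖ = a n := mem_sphere_zero_iff_norm.mp hxs
          have h1 := hwin U x hxU
          rw [hxn, abs_le] at h1
          obtain ⟨h2a, h2b⟩ := hmemcell (a n) hA0 ℓ₀
          exact ⟨hbℓ₀, by linarith, by linarith⟩
        have he2 : g U = ind ℓ₀ (⌊a n/lam ℓ₀⌋₊) U := by
          rw [hgdef, hinddef]
          simp only []
          rw [if_pos hne2, if_pos hcond]
        rw [he2]
        exact Finset.single_le_sum (f := fun ℓ => ind ℓ (⌊a n/lam ℓ⌋₊) U)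
          (fun _ _ => zero_le) (Finset.mem_range.mpr hℓ₀K)
      · rw [hgdef]
        simp only []
        rw [if_neg hne2]
        exact zero_le
    have hlow2 : ENNReal.ofReal (R^m) ≤ ∑ ℓ ∈ Finset.range K, W ℓ (⌊a n / lam ℓ⌋₊) := by
      have hc1' : ENNReal.ofReal (R^m) ≤ ENNReal.ofReal ((a n)^m) :=
        ENNReal.ofReal_le_ofReal (pow_le_pow_left₀ hR0.le hRn.le m)
      have hc2' := hlow
      have hc3' := Summable.tsum_le_tsum hsplit ENNReal.summable ENNReal.summable
      have hc4' : ∑' U : ↑𝒰, ∑ ℓ ∈ Finset.range K, ind ℓ (⌊a n / lam ℓ⌋₊) U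
          = ∑ ℓ ∈ Finset.range K, W ℓ (⌊a n / lam ℓ⌋₊) := by
        rw [hWdef]
        exact Summable.tsum_finsetSum (fun ℓ _ => ENNReal.summable)
      calc ENNReal.ofReal (R^m) ≤ ENNReal.ofReal ((a n)^m) := hc1'
        _ ≤ ∑' U : ↑𝒰', ENNReal.ofReal (diam (U:Set (EuclideanSpace ℝ (Fin (m+1))))^m) := hc2'
        _ ≤ ∑' U : ↑𝒰, g U := hinj2
        _ ≤ ∑' U : ↑𝒰, ∑ ℓ ∈ Finset.range K, ind ℓ (⌊a n / lam ℓ⌋₊) U := hc3'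
        _ = _ := hc4'
    have hup : ∑ ℓ ∈ Finset.range K, W ℓ (⌊a n / lam ℓ⌋₊) ≤ (K : ENNReal) * T := by
      calc ∑ ℓ ∈ Finset.range K, W ℓ (⌊a n / lam ℓ⌋₊) ≤ ∑ _ℓ ∈ Finset.range K, T :=
            Finset.sum_le_sum (fun ℓ hℓ => (hW ℓ (Finset.mem_range.mp hℓ)).le)
        _ = (K : ENNReal) * T := by rw [Finset.sum_const, Finset.card_range, nsmul_eq_mul]
    have hKT : (K : ENNReal) * T = ENNReal.ofReal (R^m) / 2 := by
      rw [hTdef]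
      have hcast : ((2*K : ℕ) : ENNReal) = 2 * (K : ENNReal) := by push_cast; ring
      rw [hcast]
      rw [ENNReal.div_eq_inv_mul, ENNReal.mul_inv (Or.inl (by norm_num))
        (Or.inl (by norm_num)), ENNReal.div_eq_inv_mul]
      have hKne : (K : ENNReal) ≠ 0 := by exact_mod_cast (by omega : ¬ (K = 0))
      have hKtop : (K : ENNReal) ≠ ⊤ := ENNReal.natCast_ne_top _
      calc (K:ENNReal) * ((2:ENNReal)⁻¹ * (K:ENNReal)⁻¹ * ENNReal.ofReal (R^m))
          = ((K:ENNReal) * (K:ENNReal)⁻¹) * ((2:ENNReal)⁻¹ * ENNReal.ofReal (R^m)) := by ring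
        _ = (2:ENNReal)⁻¹ * ENNReal.ofReal (R^m) := by
            rw [ENNReal.mul_inv_cancel hKne hKtop, one_mul]
    have hhalf : ENNReal.ofReal (R^m) / 2 < ENNReal.ofReal (R^m) :=
      ENNReal.half_lt_self (ENNReal.ofReal_pos.mpr hRm0).ne' ENNReal.ofReal_ne_top
    have := (hlow2.trans hup).trans_lt (hKT ▸ hhalf)
    exact absurd this (lt_irrefl _)
  -- Bterm and width-4 multiplicity bound
  set Bterm : ℕ → ↑𝒰 → ENNReal := fun ℓ U =>
    if bucket ℓ U then ENNReal.ofReal (r U ^ m) else 0 with hBtermdef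
  have hWsum : ∀ ℓ : ℕ, ∑' i : ℕ, W ℓ i ≤ 4 * ∑' U : ↑𝒰, Bterm ℓ U := by
    intro ℓ
    have hswap : ∑' i : ℕ, W ℓ i = ∑' U : ↑𝒰, ∑' i : ℕ, ind ℓ i U := by
      rw [hWdef]
      exact ENNReal.tsum_comm
    rw [hswap, ← ENNReal.tsum_mul_left]
    refine Summable.tsum_le_tsum (fun U => ?_) ENNReal.summable ENNReal.summable
    by_cases hb : bucket ℓ U
    · have hl := hlam0 ℓ
      obtain ⟨lo, hlodef⟩ : ∃ lo : ℝ, lo = (b U - r U)/lam ℓ - 1 := ⟨_, rfl⟩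
      obtain ⟨i₁, hi₁def⟩ : ∃ i₁ : ℕ, i₁ = ⌈lo⌉₊ := ⟨_, rfl⟩
      have hrlam : r U ≤ lam ℓ := by
        have := hb.2
        exact this
      have hsupp : ∀ i : ℕ, i ∉ Finset.Icc i₁ (i₁+3) → ind ℓ i U = 0 := by
        intro i hi
        rw [hinddef]
        simp only []
        rw [if_neg]
        intro hcond
        apply hi
        rw [Finset.mem_Icc]
        obtain ⟨hcb, hc1', hc2'⟩ := hcond
        constructor
        · rw [hi₁def]
          apply Nat.ceil_le.mpr
          have h2 : (b U - r U)/lam ℓ ≤ (i:ℝ) + 1 := by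
            rw [div_le_iff₀ hl]
            nlinarith
          rw [hlodef]
          linarith
        · have h3 : (i:ℝ) ≤ (b U + r U)/lam ℓ := by
            rw [le_div_iff₀ hl]
            exact hc1'
          have h4 : (b U + r U)/lam ℓ ≤ lo + 3 := by
            rw [hlodef]
            have h5 : (b U + r U)/lam ℓ - (b U - r U)/lam ℓ = 2*(r U)/lam ℓ := by
              field_simp
              ring
            have h6 : 2*(r U)/lam ℓ ≤ 2 := by
              rw [div_le_iff₀ hl]
              linarith
            linarith
          by_cases hlo : 0 ≤ lo
          · have h7 : lo ≤ (i₁:ℝ) := by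
              rw [hi₁def]
              exact Nat.le_ceil lo
            have h8 : (i:ℝ) ≤ (i₁:ℝ)+3 := by linarith
            exact_mod_cast h8
          · have h8 : i₁ = 0 := by
              rw [hi₁def]
              exact Nat.ceil_eq_zero.mpr (le_of_lt (not_le.mp hlo))
            push_neg at hlo
            have h9 : (i:ℝ) ≤ 3 := by linarith
            have h10 : i ≤ 3 := by exact_mod_cast h9
            omega
      calc ∑' i : ℕ, ind ℓ i U = ∑ i ∈ Finset.Icc i₁ (i₁+3), ind ℓ i U := tsum_eq_sum hsupp
        _ ≤ (Finset.Icc i₁ (i₁+3)).card • ENNReal.ofReal (r U ^ m) := by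
            refine Finset.sum_le_card_nsmul _ _ _ (fun i _ => ?_)
            rw [hinddef]
            simp only []
            split
            · exact le_refl _
            · exact zero_le
        _ = 4 * ENNReal.ofReal (r U^m) := by
            rw [Nat.card_Icc]
            have : i₁ + 3 + 1 - i₁ = 4 := by omega
            rw [this, nsmul_eq_mul]
            norm_num
        _ = 4 * Bterm ℓ U := by
            rw [hBtermdef]
            simp only []
            rw [if_pos hb]
    · have hz : ∀ i : ℕ, ind ℓ i U = 0 := by
        intro i
        rw [hinddef]
        simp only []
        rw [if_neg (fun hcond => hb hcond.1)]
      calc ∑' i : ℕ, ind ℓ i U = 0 := by rw [tsum_congr hz, tsum_zero]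
        _ ≤ 4 * Bterm ℓ U := zero_le
  -- general cell lemma
  have hcell : ∀ (A L : ℝ), 0 < A → 0 < L →
      (⌊A/L⌋₊:ℝ)*L ≤ A ∧ A ≤ (⌊A/L⌋₊:ℝ)*L + L := by
    intro A L hA hL
    constructor
    · have h1 : (⌊A / L⌋₊ : ℝ) ≤ A / L := Nat.floor_le (by positivity)
      calc (⌊A / L⌋₊ : ℝ) * L ≤ (A / L) * L := mul_le_mul_of_nonneg_right h1 hL.le
        _ = A := by field_simp
    · have h2 : A / L ≤ (⌊A / L⌋₊ : ℝ) + 1 := (Nat.lt_floor_add_one _).le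
      calc A = (A / L) * L := by field_simp
        _ ≤ ((⌊A / L⌋₊:ℝ) + 1) * L := mul_le_mul_of_nonneg_right h2 hL.le
        _ = (⌊A / L⌋₊:ℝ) * L + L := by ring
  -- the cover 𝒱
  set V1 : ℕ → Set ℝ := fun i => Icc ((i:ℝ)*Δ) ((i:ℝ)*Δ + Δ) with hV1def
  set S1 : Set ℕ := {i : ℕ | (i:ℝ) ≤ R/Δ} with hS1def
  set V2 : ℕ×ℕ → Set ℝ := fun q => Icc ((q.2:ℝ)*lam q.1) ((q.2:ℝ)*lam q.1 + lam q.1) with hV2def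
  set S2 : Set (ℕ×ℕ) := {q : ℕ×ℕ | q.1 < K ∧ T ≤ W q.1 q.2} with hS2def
  have hdiamV1 : ∀ i : ℕ, diam (V1 i) = Δ := by
    intro i
    rw [hV1def]
    simp only []
    rw [Real.diam_Icc (by linarith)]
    ring
  have hdiamV2 : ∀ q : ℕ×ℕ, diam (V2 q) = lam q.1 := by
    intro q
    rw [hV2def]
    simp only []
    rw [Real.diam_Icc (by linarith [hlam0 q.1])]
    ring
  refine ⟨V1 '' S1 ∪ V2 '' S2, ?_, ?_, ?_, ?_⟩
  · exact ((Set.to_countable S1).image V1).union ((Set.to_countable S2).image V2)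
  · -- covers range a
    rintro x ⟨n, rfl⟩
    rcases le_or_gt (a n) R with hle | hlt
    · refine ⟨V1 ⌊a n / Δ⌋₊, Or.inl (mem_image_of_mem V1 ?_), ?_⟩
      · rw [hS1def]
        simp only [mem_setOf_eq]
        have h1 : (⌊a n/Δ⌋₊:ℝ) ≤ a n/Δ := Nat.floor_le (div_nonneg (hapos n).le hΔ0.le)
        have h2 : a n/Δ ≤ R/Δ := by gcongr
        linarith
      · obtain ⟨h1, h2⟩ := hcell (a n) Δ (hapos n) hΔ0
        rw [hV1def]
        simp only []
        rw [mem_Icc]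
        exact ⟨h1, h2⟩
    · obtain ⟨ℓ, hℓK, hHeavy⟩ := hkey n hlt
      refine ⟨V2 (ℓ, ⌊a n / lam ℓ⌋₊), Or.inr (mem_image_of_mem V2 ?_), ?_⟩
      · rw [hS2def]
        exact ⟨hℓK, hHeavy⟩
      · obtain ⟨h1, h2⟩ := hcell (a n) (lam ℓ) (hapos n) (hlam0 ℓ)
        rw [hV2def]
        simp only []
        rw [mem_Icc]
        exact ⟨h1, h2⟩
  · -- diam bounds
    rintro V hV
    rcases hV with ⟨i, _hi, rfl⟩ | ⟨q, hq, rfl⟩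
    · rw [hdiamV1 i]
      exact ⟨hδΔ, le_refl Δ⟩
    · rw [hdiamV2 q]
      have hqK : q.1 < K := by
        rw [hS2def] at hq
        exact hq.1
      exact ⟨hlamd q.1 hqK, hlamD q.1⟩
  · -- cost bound
    set p : ℝ := t + (m:ℝ) - s with hpdef
    have hδα₂ : (0:ℝ) ≤ δ^α₂ := (Real.rpow_pos_of_pos hδpos α₂).le
    have hlogb1δ : 0 ≤ Real.logb 2 (1/δ) := Real.logb_nonneg (by norm_num)
      (by rw [le_div_iff₀ hδpos]; linarith)
    -- Part 1 cost
    have hcost1 : ∑' (Vv : ↑(V1 '' S1)), ENNReal.ofReal (diam (Vv:Set ℝ) ^ t)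
        ≤ ENNReal.ofReal (2*δ^α₁) := by
      have c1 := myTsum_image_le V1 S1 (fun Wv => ENNReal.ofReal (diam Wv ^ t))
      have c2 : ∀ i : ↑S1, ENNReal.ofReal (diam (V1 (i:ℕ)) ^ t) = ENNReal.ofReal (Δ^t) :=
        fun i => by rw [hdiamV1]
      have c3 : ∑' i : ↑S1, ENNReal.ofReal (diam (V1 (i:ℕ))^t)
          = ∑' i : ℕ, S1.indicator (fun _ => ENNReal.ofReal (Δ^t)) i := by
        rw [tsum_congr c2]
        exact tsum_subtype S1 (fun _ : ℕ => ENNReal.ofReal (Δ^t))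
      have c4 : ∑' i : ℕ, S1.indicator (fun _ => ENNReal.ofReal (Δ^t)) i
          = ∑ i ∈ Finset.range (⌊R/Δ⌋₊ + 1), S1.indicator (fun _ => ENNReal.ofReal (Δ^t)) i := by
        apply tsum_eq_sum
        intro i hi
        apply Set.indicator_of_notMem
        rw [hS1def]
        simp only [mem_setOf_eq]
        push_neg
        have h6 : ⌊R/Δ⌋₊ < i := by
          rw [Finset.mem_range] at hi
          omega
        exact (Nat.floor_lt (by positivity)).mp h6
      have c5 : ∑ i ∈ Finset.range (⌊R/Δ⌋₊ + 1), S1.indicator (fun _ => ENNReal.ofReal (Δ^t)) i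
          ≤ (⌊R/Δ⌋₊ + 1) • ENNReal.ofReal (Δ^t) := by
        have := Finset.sum_le_card_nsmul (Finset.range (⌊R/Δ⌋₊ + 1))
          (fun i => S1.indicator (fun _ => ENNReal.ofReal (Δ^t)) i) (ENNReal.ofReal (Δ^t))
          (fun i _ => Set.indicator_apply_le (fun _ => le_rfl))
        rwa [Finset.card_range] at this
      have c6 : ((⌊R/Δ⌋₊ + 1 : ℕ):ℝ) * Δ^t ≤ 2*δ^α₁ := by
        have h7 : ((⌊R/Δ⌋₊ + 1 : ℕ):ℝ) ≤ 2*(R/Δ) := by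
          push_cast
          have h8 : (⌊R/Δ⌋₊:ℝ) ≤ R/Δ := Nat.floor_le (by positivity)
          have h9 : 1 ≤ R/Δ := (one_le_div hΔ0).mpr hRΔ
          linarith
        have h10 : (0:ℝ) ≤ Δ^t := (Real.rpow_pos_of_pos hΔ0 t).le
        have hident : (R/Δ)*Δ^t = δ^α₁ := by
          have e1 : R = δ^(θ*c) := by rw [hRdef, hΔdef, ← Real.rpow_mul hδpos.le]
          have e2 : Δ^t = δ^(θ*t) := by rw [hΔdef, ← Real.rpow_mul hδpos.le]
          rw [e1, e2, hΔdef]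
          rw [div_mul_eq_mul_div, ← Real.rpow_add hδpos, ← Real.rpow_sub hδpos]
          rw [hα₁def]
          congr 1
          ring
        calc ((⌊R/Δ⌋₊ + 1 : ℕ):ℝ)*Δ^t ≤ (2*(R/Δ))*Δ^t := mul_le_mul_of_nonneg_right h7 h10
          _ = 2*((R/Δ)*Δ^t) := by ring
          _ = 2*δ^α₁ := by rw [hident]
      calc ∑' (Vv : ↑(V1 '' S1)), ENNReal.ofReal (diam (Vv:Set ℝ) ^ t)
          ≤ ∑' i : ↑S1, ENNReal.ofReal (diam (V1 (i:ℕ))^t) := c1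
        _ = ∑' i : ℕ, S1.indicator (fun _ => ENNReal.ofReal (Δ^t)) i := c3
        _ = ∑ i ∈ Finset.range (⌊R/Δ⌋₊ + 1), S1.indicator (fun _ => ENNReal.ofReal (Δ^t)) i := c4
        _ ≤ (⌊R/Δ⌋₊ + 1) • ENNReal.ofReal (Δ^t) := c5
        _ = ENNReal.ofReal (((⌊R/Δ⌋₊ + 1 : ℕ):ℝ) * Δ^t) := by
            rw [nsmul_eq_mul, ← ENNReal.ofReal_natCast (⌊R/Δ⌋₊ + 1),
              ← ENNReal.ofReal_mul (Nat.cast_nonneg _)]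
        _ ≤ ENNReal.ofReal (2*δ^α₁) := ENNReal.ofReal_le_ofReal c6
    -- Part 2 cost
    have hcost2 : ∑' (Vv : ↑(V2 '' S2)), ENNReal.ofReal (diam (Vv:Set ℝ) ^ t)
        ≤ ENNReal.ofReal (16*((Real.logb 2 (1/δ)+1)*δ^α₂)) := by
      set gg : ℕ×ℕ → ENNReal := S2.indicator (fun q => ENNReal.ofReal (lam q.1 ^ t)) with hggdef
      have c1 := myTsum_image_le V2 S2 (fun Wv => ENNReal.ofReal (diam Wv ^ t))
      have c2 : ∑' q : ↑S2, ENNReal.ofReal (diam (V2 (q:ℕ×ℕ))^t) = ∑' q : ℕ×ℕ, gg q := by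
        have e : ∀ q : ↑S2, ENNReal.ofReal (diam (V2 (q:ℕ×ℕ))^t)
            = ENNReal.ofReal (lam (q:ℕ×ℕ).1 ^ t) := fun q => by rw [hdiamV2]
        rw [tsum_congr e, hggdef]
        exact tsum_subtype S2 (fun q : ℕ×ℕ => ENNReal.ofReal (lam q.1 ^ t))
      have c4 : ∑' q : ℕ×ℕ, gg q = ∑' ℓ : ℕ, ∑' i : ℕ, gg (ℓ, i) := by
        calc ∑' q : ℕ×ℕ, gg q = ∑' q : ℕ×ℕ, (fun ℓ i => gg (ℓ,i)) q.1 q.2 := by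
              apply tsum_congr
              rintro ⟨ℓ,i⟩
              rfl
          _ = ∑' ℓ : ℕ, ∑' i : ℕ, gg (ℓ,i) := ENNReal.tsum_prod (f := fun ℓ i => gg (ℓ,i))
      have c5 : ∑' ℓ:ℕ, ∑' i:ℕ, gg (ℓ,i) = ∑ ℓ ∈ Finset.range K, ∑' i:ℕ, gg (ℓ,i) := by
        apply tsum_eq_sum
        intro ℓ hℓ
        have hz : ∀ i:ℕ, gg (ℓ,i) = 0 := by
          intro i
          apply Set.indicator_of_notMem
          rw [hS2def]
          simp only [mem_setOf_eq]
          intro hmem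
          exact hℓ (Finset.mem_range.mpr hmem.1)
        rw [tsum_congr hz, tsum_zero]
      have c6 : ∀ ℓ : ℕ, ∑' i:ℕ, gg (ℓ,i)
          ≤ (4 * (∑' U:↑𝒰, Bterm ℓ U)) * (ENNReal.ofReal (lam ℓ^t) * T⁻¹) := by
        intro ℓ
        have step1 : ∀ i:ℕ, gg (ℓ,i) ≤ W ℓ i * (ENNReal.ofReal (lam ℓ^t) * T⁻¹) := by
          intro i
          by_cases hq : (ℓ,i) ∈ S2
          · rw [hggdef]
            rw [Set.indicator_of_mem hq]
            have hHeavy : T ≤ W ℓ i := by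
              rw [hS2def] at hq
              exact hq.2
            have e : T * (ENNReal.ofReal (lam ℓ^t) * T⁻¹) = ENNReal.ofReal (lam ℓ^t) := by
              rw [mul_comm (ENNReal.ofReal (lam ℓ^t)) T⁻¹, ← mul_assoc,
                ENNReal.mul_inv_cancel hT0 hTtop, one_mul]
            calc ENNReal.ofReal (lam ℓ^t) = T * (ENNReal.ofReal (lam ℓ^t) * T⁻¹) := e.symm
              _ ≤ W ℓ i * (ENNReal.ofReal (lam ℓ^t) * T⁻¹) := mul_le_mul_left hHeavy _
          · rw [hggdef, Set.indicator_of_notMem hq]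
            exact zero_le
        calc ∑' i:ℕ, gg (ℓ,i) ≤ ∑' i:ℕ, W ℓ i * (ENNReal.ofReal (lam ℓ^t) * T⁻¹) :=
              Summable.tsum_le_tsum step1 ENNReal.summable ENNReal.summable
          _ = (∑' i:ℕ, W ℓ i) * (ENNReal.ofReal (lam ℓ^t) * T⁻¹) := ENNReal.tsum_mul_right
          _ ≤ (4 * (∑' U:↑𝒰, Bterm ℓ U)) * (ENNReal.ofReal (lam ℓ^t) * T⁻¹) :=
              mul_le_mul_left (hWsum ℓ) _
      have c7 : ∀ ℓ : ℕ, (∑' U:↑𝒰, Bterm ℓ U) * ENNReal.ofReal (lam ℓ^t)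
          ≤ ENNReal.ofReal (2*Δ^p) *
            ∑' U:↑𝒰, (if bucket ℓ U then ENNReal.ofReal (r U^s) else 0) := by
        intro ℓ
        rw [← ENNReal.tsum_mul_right, ← ENNReal.tsum_mul_left]
        refine Summable.tsum_le_tsum (fun U => ?_) ENNReal.summable ENNReal.summable
        by_cases hb : bucket ℓ U
        · rw [hBtermdef]
          simp only []
          rw [if_pos hb, if_pos hb]
          rw [← ENNReal.ofReal_mul (pow_nonneg (hr0 U).le m)]
          rw [← ENNReal.ofReal_mul (by positivity : (0:ℝ) ≤ 2*Δ^p)]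
          apply ENNReal.ofReal_le_ofReal
          have hrpos := hr0 U
          have hlam2r : lam ℓ ≤ 2 * r U := by
            have hb1 := hb.1
            have e : lam ℓ = 2*(Δ/2^(ℓ+1)) := by
              show Δ/2^ℓ = 2*(Δ/2^(ℓ+1))
              rw [pow_succ]
              ring
            rw [e]
            linarith
          have h1 : lam ℓ^t ≤ (2*r U)^t :=
            Real.rpow_le_rpow (hlam0 ℓ).le hlam2r ht0.le
          have h2 : (2*r U)^t = 2^t * (r U)^t := Real.mul_rpow (by norm_num) hrpos.le
          have h3 : (2:ℝ)^t ≤ 2 := by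
            have := Real.rpow_le_rpow_of_exponent_le (by norm_num : (1:ℝ) ≤ 2) ht1
            rwa [Real.rpow_one] at this
          have h4 : lam ℓ^t ≤ 2*(r U)^t := by
            have h5 : (2:ℝ)^t*(r U)^t ≤ 2*(r U)^t :=
              mul_le_mul_of_nonneg_right h3 (Real.rpow_nonneg hrpos.le t)
            rw [h2] at h1
            linarith
          have h6 : (r U:ℝ)^(m:ℕ) * (r U)^t = (r U)^((m:ℝ)+t) := by
            rw [Real.rpow_add hrpos, Real.rpow_natCast]
          have h7 : (r U)^((m:ℝ)+t) = (r U)^s * (r U)^p := by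
            rw [← Real.rpow_add hrpos]
            congr 1
            rw [hpdef]
            ring
          have h8 : (r U)^p ≤ Δ^p := by
            apply Real.rpow_le_rpow hrpos.le (hr2 U)
            rw [hpdef]
            exact hη
          calc (r U)^(m:ℕ) * (lam ℓ^t) ≤ (r U)^(m:ℕ) * (2*(r U)^t) :=
                mul_le_mul_of_nonneg_left h4 (pow_nonneg hrpos.le m)
            _ = 2*((r U)^(m:ℕ) * (r U)^t) := by ring
            _ = 2*((r U)^s * (r U)^p) := by rw [h6, h7]
            _ ≤ 2*((r U)^s * Δ^p) := by
                apply mul_le_mul_of_nonneg_left _ (by norm_num)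
                exact mul_le_mul_of_nonneg_left h8 (Real.rpow_nonneg hrpos.le s)
            _ = (2*Δ^p) * (r U)^s := by ring
        · rw [hBtermdef]
          simp only []
          rw [if_neg hb, if_neg hb]
          rw [zero_mul, mul_zero]
      have c8 : ∑ ℓ ∈ Finset.range K,
          (∑' U:↑𝒰, (if bucket ℓ U then ENNReal.ofReal (r U^s) else 0))
          ≤ ∑' U:↑𝒰, ENNReal.ofReal (r U^s) := by
        rw [← Summable.tsum_finsetSum (fun ℓ _ => ENNReal.summable)]
        refine Summable.tsum_le_tsum (fun U => ?_) ENNReal.summable ENNReal.summable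
        by_cases hex : ∃ ℓ₀ ∈ Finset.range K, bucket ℓ₀ U
        · obtain ⟨ℓ₀, hℓ₀r, hb₀⟩ := hex
          rw [Finset.sum_eq_single ℓ₀]
          · rw [if_pos hb₀]
          · intro ℓ hℓr hne'
            rw [if_neg]
            intro hb'
            exact hne' (hbucket_uniq U ℓ ℓ₀ hb' hb₀)
          · intro hcon'
            exact absurd hℓ₀r hcon'
        · push_neg at hex
          rw [Finset.sum_eq_zero (fun ℓ hℓ => if_neg (hex ℓ hℓ))]
          exact zero_le
      have hsum' : ∑' U:↑𝒰, ENNReal.ofReal (r U^s) ≤ ENNReal.ofReal 1 := hsum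
      have hTinv : T⁻¹ = ((2*K:ℕ):ENNReal) / ENNReal.ofReal (R^m) := by
        rw [hTdef]
        rw [ENNReal.inv_div (Or.inl (ENNReal.natCast_ne_top _))
          (Or.inl (by exact_mod_cast (by omega : ¬ (2*K = 0))))]
      have hKb : (K:ℝ) ≤ Real.logb 2 (1/δ) + 1 := by
        rw [hKdef]
        push_cast
        have h1 : (⌊Real.logb 2 (Δ/δ)⌋₊:ℝ) ≤ Real.logb 2 (Δ/δ) := Nat.floor_le hlogb0
        have h2 : Real.logb 2 (Δ/δ) ≤ Real.logb 2 (1/δ) := by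
          apply (Real.logb_le_logb (by norm_num) (by positivity) (by positivity)).mpr
          exact (div_le_div_iff_of_pos_right hδpos).mpr hΔ1
        linarith
      have hident2 : Δ^p/R^m = δ^α₂ := by
        have e2 : R^m = δ^(θ*c*(m:ℝ)) := by
          rw [hRdef, hΔdef, ← Real.rpow_mul hδpos.le, ← Real.rpow_natCast (δ^(θ*c)) m,
            ← Real.rpow_mul hδpos.le]
        have e3 : Δ^p = δ^(θ*p) := by rw [hΔdef, ← Real.rpow_mul hδpos.le]
        rw [e2, e3, ← Real.rpow_sub hδpos, hα₂def, hpdef]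
        congr 1
        ring
      have c11 : (4:ENNReal)*T⁻¹*ENNReal.ofReal (2*Δ^p)
          ≤ ENNReal.ofReal (16*((Real.logb 2 (1/δ)+1)*δ^α₂)) := by
        rw [hTinv]
        have e7 : ENNReal.ofReal (((4*(2*K):ℕ)):ℝ) = (4:ENNReal)*((2*K:ℕ):ENNReal) := by
          rw [ENNReal.ofReal_natCast]
          push_cast
          ring
        have e4 : (4:ENNReal)*(((2*K:ℕ):ENNReal)/ENNReal.ofReal (R^m))*ENNReal.ofReal (2*Δ^p)
            = ENNReal.ofReal ((((4*(2*K):ℕ)):ℝ)*(2*Δ^p)) / ENNReal.ofReal (R^m) := by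
          rw [ENNReal.ofReal_mul (by positivity : (0:ℝ) ≤ (((4*(2*K):ℕ)):ℝ)), e7,
            div_eq_mul_inv, div_eq_mul_inv]
          ring
        rw [e4, ← ENNReal.ofReal_div_of_pos hRm0]
        apply ENNReal.ofReal_le_ofReal
        have e6 : (((4*(2*K):ℕ)):ℝ)*(2*Δ^p)/R^m = 16*(K:ℝ)*(Δ^p/R^m) := by
          push_cast
          ring
        rw [e6, hident2]
        have h12 : 16*(K:ℝ)*δ^α₂ ≤ 16*(Real.logb 2 (1/δ)+1)*δ^α₂ := by
          apply mul_le_mul_of_nonneg_right _ hδα₂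
          linarith
        calc 16*(K:ℝ)*δ^α₂ ≤ 16*(Real.logb 2 (1/δ)+1)*δ^α₂ := h12
          _ = 16*((Real.logb 2 (1/δ)+1)*δ^α₂) := by ring
      calc ∑' (Vv : ↑(V2 '' S2)), ENNReal.ofReal (diam (Vv:Set ℝ) ^ t)
          ≤ ∑' q : ↑S2, ENNReal.ofReal (diam (V2 (q:ℕ×ℕ))^t) := c1
        _ = ∑' q : ℕ×ℕ, gg q := c2
        _ = ∑' ℓ : ℕ, ∑' i : ℕ, gg (ℓ, i) := c4
        _ = ∑ ℓ ∈ Finset.range K, ∑' i:ℕ, gg (ℓ,i) := c5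
        _ ≤ ∑ ℓ ∈ Finset.range K,
            (4 * (∑' U:↑𝒰, Bterm ℓ U)) * (ENNReal.ofReal (lam ℓ^t) * T⁻¹) :=
            Finset.sum_le_sum (fun ℓ _ => c6 ℓ)
        _ = ∑ ℓ ∈ Finset.range K,
            ((4:ENNReal)*T⁻¹) * ((∑' U:↑𝒰, Bterm ℓ U) * ENNReal.ofReal (lam ℓ^t)) := by
            apply Finset.sum_congr rfl
            intro ℓ _
            ring
        _ ≤ ∑ ℓ ∈ Finset.range K,
            ((4:ENNReal)*T⁻¹) * (ENNReal.ofReal (2*Δ^p) *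
              (∑' U:↑𝒰, (if bucket ℓ U then ENNReal.ofReal (r U^s) else 0))) :=
            Finset.sum_le_sum (fun ℓ _ => mul_le_mul_right (c7 ℓ) _)
        _ = ((4:ENNReal)*T⁻¹*ENNReal.ofReal (2*Δ^p)) *
            ∑ ℓ ∈ Finset.range K,
              (∑' U:↑𝒰, (if bucket ℓ U then ENNReal.ofReal (r U^s) else 0)) := by
            rw [Finset.mul_sum]
            apply Finset.sum_congr rfl
            intro ℓ _
            ring
        _ ≤ ((4:ENNReal)*T⁻¹*ENNReal.ofReal (2*Δ^p)) * ENNReal.ofReal 1 :=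
            mul_le_mul_right (c8.trans hsum') _
        _ = (4:ENNReal)*T⁻¹*ENNReal.ofReal (2*Δ^p) := by
            rw [ENNReal.ofReal_one, mul_one]
        _ ≤ ENNReal.ofReal (16*((Real.logb 2 (1/δ)+1)*δ^α₂)) := c11
    -- combine
    calc ∑' (V : ↑(V1 '' S1 ∪ V2 '' S2)), ENNReal.ofReal (diam (V:Set ℝ) ^ t)
        ≤ ∑' (Vv : ↑(V1 '' S1)), ENNReal.ofReal (diam (Vv:Set ℝ) ^ t)
          + ∑' (Vv : ↑(V2 '' S2)), ENNReal.ofReal (diam (Vv:Set ℝ) ^ t) :=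
          myTsum_union_le (V1 '' S1) (V2 '' S2) (fun W => ENNReal.ofReal (diam W ^ t))
      _ ≤ ENNReal.ofReal (2*δ^α₁) + ENNReal.ofReal (16*((Real.logb 2 (1/δ)+1)*δ^α₂)) :=
          add_le_add hcost1 hcost2
      _ = ENNReal.ofReal (2*δ^α₁ + 16*((Real.logb 2 (1/δ)+1)*δ^α₂)) := by
          rw [← ENNReal.ofReal_add (by positivity) (by positivity)]
      _ ≤ ENNReal.ofReal ε' := by
          apply ENNReal.ofReal_le_ofReal
          have := hδ₁ δ hδpos hδlt
          rw [hG] at this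
          exact this


theorem stmt11 (d : ℕ) (hd : 2 ≤ d) (θ : ℝ) (hθ : 0 < θ) (hθ' : θ ≤ 1) (a : ℕ → ℝ)
    (ha : StrictAnti a) (hapos : ∀ n, 0 < a n) (halim : Tendsto a atTop (nhds 0)) :
    (updim θ (Set.range a) = 1 → updim θ (concentricSeq d a) = d) ∧
      (lodim θ (Set.range a) = 1 → lodim θ (concentricSeq d a) = d) := by
  obtain ⟨m, rfl⟩ : ∃ m, d = m + 1 := ⟨d - 1, by omega⟩
  have hm : 1 ≤ m := by omega
  set SCup : Set ℝ := {s : ℝ | 0 ≤ s ∧ ∀ ε : ℝ, 0 < ε → ∃ δ₀ : ℝ, 0 < δ₀ ∧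
    ∀ δ : ℝ, 0 < δ → δ < δ₀ →
    ∃ 𝒰 : Set (Set (EuclideanSpace ℝ (Fin (m+1)))), 𝒰.Countable ∧
      concentricSeq (m+1) a ⊆ ⋃₀ 𝒰 ∧
      (∀ U ∈ 𝒰, δ ≤ diam U ∧ diam U ≤ δ ^ θ) ∧
      ∑' U : 𝒰, ENNReal.ofReal (diam (U : Set (EuclideanSpace ℝ (Fin (m+1)))) ^ s)
        ≤ ENNReal.ofReal ε} with hSCup
  set SClo : Set ℝ := {s : ℝ | 0 ≤ s ∧ ∀ ε : ℝ, 0 < ε → ∀ δ₀ : ℝ, 0 < δ₀ →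
    ∃ δ : ℝ, 0 < δ ∧ δ < δ₀ ∧
    ∃ 𝒰 : Set (Set (EuclideanSpace ℝ (Fin (m+1)))), 𝒰.Countable ∧
      concentricSeq (m+1) a ⊆ ⋃₀ 𝒰 ∧
      (∀ U ∈ 𝒰, δ ≤ diam U ∧ diam U ≤ δ ^ θ) ∧
      ∑' U : 𝒰, ENNReal.ofReal (diam (U : Set (EuclideanSpace ℝ (Fin (m+1)))) ^ s)
        ≤ ENNReal.ofReal ε} with hSClo
  set SEup : Set ℝ := {s : ℝ | 0 ≤ s ∧ ∀ ε : ℝ, 0 < ε → ∃ δ₀ : ℝ, 0 < δ₀ ∧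
    ∀ δ : ℝ, 0 < δ → δ < δ₀ →
    ∃ 𝒱 : Set (Set ℝ), 𝒱.Countable ∧ Set.range a ⊆ ⋃₀ 𝒱 ∧
      (∀ V ∈ 𝒱, δ ≤ diam V ∧ diam V ≤ δ ^ θ) ∧
      ∑' V : 𝒱, ENNReal.ofReal (diam (V : Set ℝ) ^ s) ≤ ENNReal.ofReal ε} with hSEup
  set SElo : Set ℝ := {s : ℝ | 0 ≤ s ∧ ∀ ε : ℝ, 0 < ε → ∀ δ₀ : ℝ, 0 < δ₀ →
    ∃ δ : ℝ, 0 < δ ∧ δ < δ₀ ∧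
    ∃ 𝒱 : Set (Set ℝ), 𝒱.Countable ∧ Set.range a ⊆ ⋃₀ 𝒱 ∧
      (∀ V ∈ 𝒱, δ ≤ diam V ∧ diam V ≤ δ ^ θ) ∧
      ∑' V : 𝒱, ENNReal.ofReal (diam (V : Set ℝ) ^ s) ≤ ENNReal.ofReal ε} with hSElo
  have hupdimC : updim θ (concentricSeq (m+1) a) = sInf SCup := rfl
  have hlodimC : lodim θ (concentricSeq (m+1) a) = sInf SClo := rfl
  have hupdimE : updim θ (Set.range a) = sInf SEup := rfl
  have hlodimE : lodim θ (Set.range a) = sInf SElo := rfl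
  have hcast : ((m+1:ℕ):ℝ) = (m:ℝ)+1 := by push_cast; ring
  have hmemup : ∀ u : ℝ, ((m:ℝ)+1) < u → u ∈ SCup := by
    intro u hu
    have hu0 : (0:ℝ) ≤ u := by
      have : (0:ℝ) ≤ (m:ℝ)+1 := by positivity
      linarith
    refine ⟨hu0, ?_⟩
    intro ε hε
    obtain ⟨δ₀, h1, _h2, h3⟩ := myUpperCover m θ hθ hθ' a ha u hu ε hε
    exact ⟨δ₀, h1, h3⟩
  have hmemlo : ∀ u : ℝ, ((m:ℝ)+1) < u → u ∈ SClo := by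
    intro u hu
    have hu0 : (0:ℝ) ≤ u := by
      have : (0:ℝ) ≤ (m:ℝ)+1 := by positivity
      linarith
    refine ⟨hu0, ?_⟩
    intro ε hε δ₀ hδ₀
    obtain ⟨δᵤ, h1, _h2, h3⟩ := myUpperCover m θ hθ hθ' a ha u hu ε hε
    refine ⟨min δ₀ δᵤ / 2, by positivity, ?_, ?_⟩
    · calc min δ₀ δᵤ / 2 < min δ₀ δᵤ := by
            have := lt_min hδ₀ h1
            linarith [lt_min hδ₀ h1]
        _ ≤ δ₀ := min_le_left _ _
    · apply h3
      · positivity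
      · calc min δ₀ δᵤ / 2 < min δ₀ δᵤ := by linarith [lt_min hδ₀ h1]
          _ ≤ δᵤ := min_le_right _ _
  have hbddCup : BddBelow SCup := ⟨0, fun y hy => hy.1⟩
  have hbddClo : BddBelow SClo := ⟨0, fun y hy => hy.1⟩
  have hbddEup : BddBelow SEup := ⟨0, fun y hy => hy.1⟩
  have hbddElo : BddBelow SElo := ⟨0, fun y hy => hy.1⟩
  have hneCup : SCup.Nonempty := ⟨(m:ℝ)+2, hmemup _ (by linarith)⟩
  have hneClo : SClo.Nonempty := ⟨(m:ℝ)+2, hmemlo _ (by linarith)⟩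
  have hleup : sInf SCup ≤ (m:ℝ)+1 := by
    by_contra hcon
    push_neg at hcon
    set u : ℝ := (((m:ℝ)+1) + sInf SCup)/2 with hudef
    have hu1 : ((m:ℝ)+1) < u := by
      rw [hudef]
      linarith
    have hu2 : u < sInf SCup := by
      rw [hudef]
      linarith
    have := csInf_le hbddCup (hmemup u hu1)
    linarith
  have hlelo : sInf SClo ≤ (m:ℝ)+1 := by
    by_contra hcon
    push_neg at hcon
    set u : ℝ := (((m:ℝ)+1) + sInf SClo)/2 with hudef
    have hu1 : ((m:ℝ)+1) < u := by
      rw [hudef]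
      linarith
    have hu2 : u < sInf SClo := by
      rw [hudef]
      linarith
    have := csInf_le hbddClo (hmemlo u hu1)
    linarith
  -- parameter selection for the lower bound
  have hparam : ∀ x : ℝ, 0 ≤ x → x < (m:ℝ)+1 → ∃ t c : ℝ,
      0 < t ∧ t ≤ 1 ∧ t < 1 ∧ 0 < c ∧ c ≤ 1 ∧ 0 < t + c - 1 ∧
      0 ≤ t + (m:ℝ) - x ∧ 0 < (t + (m:ℝ) - x) - c * (m:ℝ) := by
    intro x hx0 hxlt
    have hmpos : (0:ℝ) < m := by exact_mod_cast hm
    set M₀ : ℝ := max (x/((m:ℝ)+1)) (max (x - (m:ℝ)) (1/2)) with hM₀def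
    have hM₀lt : M₀ < 1 := by
      apply max_lt
      · rw [div_lt_one (by positivity)]
        linarith
      · apply max_lt
        · linarith
        · norm_num
    have hM₀ge : (1:ℝ)/2 ≤ M₀ := le_max_of_le_right (le_max_right _ _)
    set t : ℝ := (M₀+1)/2 with htdef
    have htM : M₀ < t := by
      rw [htdef]
      linarith
    have ht0 : 0 < t := by
      rw [htdef]
      linarith
    have ht1 : t < 1 := by
      rw [htdef]
      linarith
    have htd : x/((m:ℝ)+1) < t := lt_of_le_of_lt (le_max_left _ _) htM
    have htm : x - (m:ℝ) < t :=
      lt_of_le_of_lt (le_trans (le_max_left _ _) (le_max_right _ _)) htM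
    have hη' : 0 < t + (m:ℝ) - x := by linarith
    set cmin : ℝ := min 1 ((t + (m:ℝ) - x)/(m:ℝ)) with hcmindef
    have h1t : 1 - t < cmin := by
      rw [hcmindef]
      apply lt_min
      · linarith
      · rw [lt_div_iff₀ hmpos]
        rw [div_lt_iff₀ (by positivity : (0:ℝ) < (m:ℝ)+1)] at htd
        nlinarith
    set c : ℝ := ((1-t) + cmin)/2 with hcdef
    have hc1t : 1 - t < c := by
      rw [hcdef]
      linarith
    have hc0 : 0 < c := by
      have h2 : (0:ℝ) ≤ 1 - t := by linarith
      linarith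
    have hc1 : c ≤ 1 := by
      have h3 : cmin ≤ 1 := min_le_left _ _
      rw [hcdef]
      linarith
    have hccmin : c < cmin := by
      rw [hcdef]
      linarith
    have hcmin2 : c < (t + (m:ℝ) - x)/(m:ℝ) :=
      lt_of_lt_of_le hccmin (min_le_right _ _)
    have hα₂x : 0 < (t + (m:ℝ) - x) - c*(m:ℝ) := by
      rw [lt_div_iff₀ hmpos] at hcmin2
      linarith
    exact ⟨t, c, ht0, ht1.le, ht1, hc0, hc1, by linarith, hη'.le, hα₂x⟩
  constructor
  · -- updim case
    intro hE
    rw [hupdimC, hcast]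
    apply le_antisymm hleup
    apply le_csInf hneCup
    intro x hx
    by_contra hcon
    push_neg at hcon
    obtain ⟨hx0, hxcov⟩ := hx
    obtain ⟨t, c, ht0, ht1, ht1', hc0, hc1, hα₁x, hηx, hα₂x⟩ := hparam x hx0 hcon
    have core := myCore m hm θ hθ hθ' a hapos x t c hx0 ht0 ht1 hc0 hc1 hα₁x hηx hα₂x
    have htmem : t ∈ SEup := by
      refine ⟨ht0.le, ?_⟩
      intro ε' hε'
      obtain ⟨δ₁, hδ₁pos, _hδ₁le, hδ₁⟩ := core ε' hε'
      obtain ⟨δ₀, hδ₀pos, hδ₀⟩ := hxcov 1 one_pos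
      refine ⟨min δ₀ δ₁, lt_min hδ₀pos hδ₁pos, ?_⟩
      intro δ hδp hδlt
      obtain ⟨𝒰, h1, h2, h3, h4⟩ := hδ₀ δ hδp (hδlt.trans_le (min_le_left _ _))
      exact hδ₁ δ hδp (hδlt.trans_le (min_le_right _ _)) 𝒰 h1 h2 h3 h4
    have hEle : updim θ (Set.range a) ≤ t := by
      rw [hupdimE]
      exact csInf_le hbddEup htmem
    rw [hE] at hEle
    linarith
  · -- lodim case
    intro hE
    rw [hlodimC, hcast]
    apply le_antisymm hlelo
    apply le_csInf hneClo
    intro x hx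
    by_contra hcon
    push_neg at hcon
    obtain ⟨hx0, hxcov⟩ := hx
    obtain ⟨t, c, ht0, ht1, ht1', hc0, hc1, hα₁x, hηx, hα₂x⟩ := hparam x hx0 hcon
    have core := myCore m hm θ hθ hθ' a hapos x t c hx0 ht0 ht1 hc0 hc1 hα₁x hηx hα₂x
    have htmem : t ∈ SElo := by
      refine ⟨ht0.le, ?_⟩
      intro ε' hε' δ₀' hδ₀'
      obtain ⟨δ₁, hδ₁pos, _hδ₁le, hδ₁⟩ := core ε' hε'
      obtain ⟨δ, hδp, hδlt, 𝒰, h1, h2, h3, h4⟩ :=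
        hxcov 1 one_pos (min δ₀' δ₁) (lt_min hδ₀' hδ₁pos)
      refine ⟨δ, hδp, hδlt.trans_le (min_le_left _ _), ?_⟩
      exact hδ₁ δ hδp (hδlt.trans_le (min_le_right _ _)) 𝒰 h1 h2 h3 h4
    have hEle : lodim θ (Set.range a) ≤ t := by
      rw [hlodimE]
      exact csInf_le hbddElo htmem
    rw [hE] at hEle
    linarith
end
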